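/- arXiv:1910.13244 — 6 statements merged into one kernel-verified Lean document; each statement's English description precedes it below -/
import Mathlib

section
/- The poset of m-divisible non-crossing t-partitions of [mn] under refinement is graded of rank n−t, with the rank of a partition π equal to n minus the number of blocks of π; in particular the minimum possible number of blocks of such a partition is t. -/
/-- `π` is an `m`-divisible non-crossing `t`-partition of `[m*n] = {1,…,m*n}`:
every block has size divisible by `m`, no block meets `{1,…,t}` in more than one
element, and the `t`-non-crossing condition holds. -/
def IsNCPart (m n t : ℕ) (π : Finpartition (Finset.Icc 1 (m * n))) : Prop :=
  (∀ B ∈ π.parts, m ∣ B.card) ∧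
  (∀ B ∈ π.parts, (B ∩ Finset.Icc 1 t).card ≤ 1) ∧
  ¬ ∃ i j k l : ℕ, 1 ≤ i ∧ i < j ∧ j < k ∧ k < l ∧ l ≤ m * n ∧
    ((j ≤ t ∧ ∃ B ∈ π.parts, ∃ B' ∈ π.parts, B ≠ B' ∧
        i ∈ B ∧ l ∈ B ∧ j ∈ B' ∧ k ∈ B') ∨
     (t < j ∧ ∃ B ∈ π.parts, ∃ B' ∈ π.parts, B ≠ B' ∧
        i ∈ B ∧ k ∈ B ∧ j ∈ B' ∧ l ∈ B'))

/-- The poset of `m`-divisible non-crossing `t`-partitions of `[m*n]`,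
with the refinement order inherited from `Finpartition`. -/
abbrev NCP (m n t : ℕ) := {π : Finpartition (Finset.Icc 1 (m * n)) // IsNCPart m n t π}
open Finset

/-- Build a `Finpartition` of `Icc 1 N` from an indexed family of disjoint nonempty
subsets whose cardinalities sum to `N`. -/
lemma exists_finpartition_of_family (N : ℕ) (s : Finset ℕ) (f : ℕ → Finset ℕ)
    (hdisj : ∀ i ∈ s, ∀ j ∈ s, i ≠ j → Disjoint (f i) (f j))
    (hne : ∀ i ∈ s, (f i).Nonempty)
    (hsub : ∀ i ∈ s, f i ⊆ Finset.Icc 1 N)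
    (hsum : ∑ i ∈ s, (f i).card = N) :
    ∃ π : Finpartition (Finset.Icc 1 N), π.parts = s.image f ∧ π.parts.card = s.card := by
  have hinj : Set.InjOn f s := by
    intro i hi j hj hij
    by_contra hne'
    have := hdisj i hi j hj hne'
    rw [hij] at this
    exact (hne j hj).ne_empty (_root_.disjoint_self.mp this)
  have hbi : s.biUnion f = Finset.Icc 1 N := by
    apply Finset.eq_of_subset_of_card_le
    · intro x hx
      obtain ⟨i, hi, hxi⟩ := Finset.mem_biUnion.mp hx
      exact hsub i hi hxi
    · rw [Finset.card_biUnion (fun i hi j hj h => hdisj i hi j hj h), hsum,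
        Nat.card_Icc]
      omega
  refine ⟨⟨s.image f, ?_, ?_, ?_⟩, rfl, Finset.card_image_of_injOn hinj⟩
  · rw [Finset.supIndep_iff_pairwiseDisjoint]
    intro B hB C hC hBC
    simp only [coe_image, Set.mem_image] at hB hC
    obtain ⟨i, hi, rfl⟩ := hB
    obtain ⟨j, hj, rfl⟩ := hC
    exact hdisj i hi j hj (fun h => hBC (by rw [h]))
  · rw [Finset.sup_image]
    rw [show (id ∘ f) = f from rfl, ← hbi, Finset.sup_eq_biUnion]
  · intro h
    simp only [Finset.mem_image] at h
    obtain ⟨i, hi, hfi⟩ := h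
    exact (hne i hi).ne_empty hfi

/-- Merge a nonempty set `S` of parts of a finpartition into a single part. -/
def mergeFP {G : Finset ℕ} (π : Finpartition G) (S : Finset (Finset ℕ))
    (hS : S ⊆ π.parts) (hne : S.Nonempty) : Finpartition G where
  parts := (π.parts \ S) ∪ {S.sup id}
  supIndep := by
    rw [Finset.supIndep_iff_pairwiseDisjoint]
    have key : ∀ C ∈ π.parts \ S, Disjoint C (S.sup id) := by
      intro C hC
      rw [Finset.sup_eq_biUnion, Finset.disjoint_biUnion_right]
      intro B hB
      refine π.disjoint (Finset.mem_sdiff.mp hC).1 (hS hB) ?_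
      rintro rfl
      exact (Finset.mem_sdiff.mp hC).2 hB
    intro B hB C hC hBC
    simp only [coe_union, coe_sdiff, coe_singleton, Set.mem_union, Set.mem_diff,
      Set.mem_singleton_iff, mem_coe] at hB hC
    rcases hB with hB | rfl <;> rcases hC with hC | rfl
    · exact π.disjoint hB.1 hC.1 hBC
    · exact key B (Finset.mem_sdiff.mpr hB)
    · exact (key C (Finset.mem_sdiff.mpr hC)).symm
    · exact absurd rfl hBC
  sup_parts := by
    simp only [Finset.sup_union, Finset.sup_singleton, id_eq]
    rw [← Finset.sup_union, Finset.sdiff_union_of_subset hS, π.sup_parts]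
  bot_notMem := by
    intro h
    rcases Finset.mem_union.mp h with h | h
    · exact π.bot_notMem (Finset.mem_sdiff.mp h).1
    · obtain ⟨B, hB⟩ := hne
      obtain ⟨x, hx⟩ := π.nonempty_of_mem_parts (hS hB)
      have : x ∈ S.sup id := by
        exact Finset.mem_of_subset (Finset.le_sup (f := id) hB) hx
      rw [← Finset.mem_singleton.mp h] at this
      exact absurd this (Finset.notMem_empty x)

lemma mergeFP_parts {G : Finset ℕ} (π : Finpartition G) (S : Finset (Finset ℕ))
    (hS : S ⊆ π.parts) (hne : S.Nonempty) :
    (mergeFP π S hS hne).parts = (π.parts \ S) ∪ {S.sup id} := rfl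
lemma isNC_of_comb (m n t : ℕ) (π : Finpartition (Finset.Icc 1 (m * n)))
    (hdvd : ∀ B ∈ π.parts, m ∣ B.card)
    (hComb : ∀ B ∈ π.parts, ∀ x ∈ B, x ≤ t → ∃ a b : ℕ, t < a ∧ B = insert x (Finset.Icc a b))
    (hInt : ∀ B ∈ π.parts, (∀ x ∈ B, t < x) → ∃ a b : ℕ, B = Finset.Icc a b)
    (hOrd : ∀ B ∈ π.parts, ∀ B' ∈ π.parts, ∀ x ∈ B, ∀ x' ∈ B', x < x' → x' ≤ t →
      ∀ u ∈ B, t < u → ∀ v ∈ B', t < v → u < v) :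
    IsNCPart m n t π := by
  have hdp : ∀ {A B : Finset ℕ}, A ∈ π.parts → B ∈ π.parts → A ≠ B →
      ∀ {x}, x ∈ A → x ∉ B := by
    intro A B hA hB hAB x hxA hxB
    exact hAB (π.eq_of_mem_parts hA hB hxA hxB)
  refine ⟨hdvd, ?_, ?_⟩
  · intro B hB
    by_cases hx : ∃ x ∈ B, x ≤ t
    · obtain ⟨x, hxB, hxt⟩ := hx
      obtain ⟨a, b, hta, hBe⟩ := hComb B hB x hxB hxt
      have : B ∩ Finset.Icc 1 t ⊆ {x} := by
        intro y hy
        rw [Finset.mem_inter, Finset.mem_Icc] at hy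
        rw [Finset.mem_singleton]
        rcases Finset.mem_insert.mp (hBe ▸ hy.1) with h | h
        · exact h
        · rw [Finset.mem_Icc] at h; omega
      calc (B ∩ Finset.Icc 1 t).card ≤ ({x} : Finset ℕ).card := Finset.card_le_card this
        _ = 1 := Finset.card_singleton x
    · push_neg at hx
      have : B ∩ Finset.Icc 1 t = ∅ := by
        rw [Finset.eq_empty_iff_forall_notMem]
        intro y hy
        rw [Finset.mem_inter, Finset.mem_Icc] at hy
        exact absurd hy.2.2 (not_le.mpr (hx y hy.1))
      simp [this]
  · rintro ⟨i, j, k, l, h1, h2, h3, h4, h5,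
      (⟨hjt, B, hB, B', hB', hBB', hi, hl, hj, hk⟩ | ⟨htj, B, hB, B', hB', hBB', hi, hk, hj, hl⟩)⟩
    · -- pattern one: j ≤ t, i,l ∈ B, j,k ∈ B'
      obtain ⟨a', b', hta', hB'e⟩ := hComb B' hB' j hj hjt
      obtain ⟨a, b, hta, hBe⟩ := hComb B hB i hi (by omega)
      -- k ∈ Icc a' b', so t < k
      have hk' : t < k := by
        rcases Finset.mem_insert.mp (hB'e ▸ hk) with h | h
        · omega
        · rw [Finset.mem_Icc] at h; omega
      have hl' : t < l := by omega
      exact absurd (hOrd B hB B' hB' i hi j hj h2 hjt l hl hl' k hk hk') (by omega)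
    · -- pattern two: t < j, i,k ∈ B, j,l ∈ B'
      by_cases hxB' : ∃ x ∈ B', x ≤ t
      · obtain ⟨x', hx'B', hx't⟩ := hxB'
        by_cases hxB : ∃ x ∈ B, x ≤ t
        · obtain ⟨x, hxB, hxt⟩ := hxB
          have hxx' : x ≠ x' := fun h => hdp hB hB' hBB' hxB (h ▸ hx'B')
          rcases lt_or_gt_of_ne hxx' with hlt | hgt
          · exact absurd (hOrd B hB B' hB' x hxB x' hx'B' hlt hx't k hk (by omega) j hj htj)
              (by omega)
          · exact absurd (hOrd B' hB' B hB x' hx'B' x hxB hgt hxt l hl (by omega) k hk (by omega))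
              (by omega)
        · push_neg at hxB
          obtain ⟨a, b, hBe⟩ := hInt B hB (fun x hx => hxB x hx)
          have : j ∈ B := by
            rw [hBe, Finset.mem_Icc]
            rw [hBe, Finset.mem_Icc] at hi hk
            omega
          exact hdp hB hB' hBB' this hj
      · push_neg at hxB'
        obtain ⟨a', b', hB'e⟩ := hInt B' hB' (fun x hx => hxB' x hx)
        have : k ∈ B' := by
          rw [hB'e, Finset.mem_Icc]
          rw [hB'e, Finset.mem_Icc] at hj hl
          omega
        exact hdp hB' hB (Ne.symm hBB') this hk


section
variable (p n t : ℕ)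

/-- blocks of the minimal (t-block) partition -/
def fmin (p n t : ℕ) (i : ℕ) : Finset ℕ :=
  insert (i+1) (Finset.Icc (t + i*p + 1) (if i+1 < t then t + (i+1)*p else (p+1)*n))

lemma fmin_card_lt (i : ℕ) (hi : i + 1 < t) : (fmin p n t i).card = p + 1 := by
  rw [fmin, if_pos hi, Finset.card_insert_of_notMem, Nat.card_Icc]
  · have h1 : t + (i+1)*p = t + i*p + p := by ring_nf
    generalize i*p = X at *
    omega
  · rw [Finset.mem_Icc]
    omega

lemma fmin_card_last (t' u : ℕ) (hn : n = t' + 1 + u) (htt : t = t' + 1) :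
    (fmin p n t t').card = (p+1) * (u+1) := by
  subst hn htt
  rw [fmin, if_neg (by omega), Finset.card_insert_of_notMem, Nat.card_Icc]
  · have h1 : (p+1)*(t'+1+u) = t' + 1 + u + t'*p + p + u*p := by ring
    have h2 : (p+1)*(u+1) = u + 1 + u*p + p := by ring
    generalize t'*p = X at *
    generalize u*p = Y at *
    omega
  · rw [Finset.mem_Icc]
    omega

lemma fmin_mem (i x : ℕ) : x ∈ fmin p n t i ↔
    x = i + 1 ∨ (t + i*p + 1 ≤ x ∧ x ≤ (if i+1 < t then t + (i+1)*p else (p+1)*n)) := by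
  rw [fmin, Finset.mem_insert, Finset.mem_Icc]

lemma exists_ncp_min (m n t : ℕ) (hm : 1 ≤ m) (hn : 1 ≤ n) (ht : 1 ≤ t) (htn : t ≤ n) :
    ∃ π : Finpartition (Finset.Icc 1 (m*n)), IsNCPart m n t π ∧ π.parts.card = t := by
  obtain ⟨p, rfl⟩ : ∃ p, m = p + 1 := ⟨m-1, by omega⟩
  obtain ⟨t', htt⟩ : ∃ t', t = t' + 1 := ⟨t-1, by omega⟩
  obtain ⟨u, hnu⟩ : ∃ u, n = t' + 1 + u := ⟨n - (t'+1), by omega⟩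
  set f := fmin p n t with hf
  -- generic facts
  have hub : ∀ i, i + 1 ≤ t → (if i+1 < t then t + (i+1)*p else (p+1)*n) ≤ (p+1)*n := by
    intro i hi
    split
    · have h1 : (i+1)*p ≤ n*p := Nat.mul_le_mul_right p (by omega)
      have h2 : (p+1)*n = n + n*p := by ring
      generalize (i+1)*p = X at *
      generalize n*p = Y at *
      omega
    · omega
  have hlb : ∀ i, t + 1 ≤ t + i*p + 1 := by intro i; omega
  have hord : ∀ i j, i < j → j + 1 ≤ t →
      (if i+1 < t then t + (i+1)*p else (p+1)*n) < t + j*p + 1 := by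
    intro i j hij hj
    rw [if_pos (by omega)]
    have : (i+1)*p ≤ j*p := Nat.mul_le_mul_right p (by omega)
    generalize (i+1)*p = X at *
    generalize j*p = Y at *
    omega
  have hdisj : ∀ i ∈ Finset.range t, ∀ j ∈ Finset.range t, i ≠ j → Disjoint (f i) (f j) := by
    have key : ∀ i j, i < j → j < t → Disjoint (f i) (f j) := by
      intro i j hij hj
      rw [Finset.disjoint_left]
      intro x hxi hxj
      rw [hf, fmin_mem] at hxi hxj
      have h1 := hord i j hij (by omega)
      rcases hxi with rfl | ⟨hx1, hx2⟩ <;> rcases hxj with h | ⟨hy1, hy2⟩ <;> omega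
    intro i hi j hj hij
    rw [Finset.mem_range] at hi hj
    rcases lt_or_gt_of_ne hij with h | h
    · exact key i j h hj
    · exact (key j i h hi).symm
  have hne : ∀ i ∈ Finset.range t, (f i).Nonempty :=
    fun i _ => ⟨i+1, by rw [hf, fmin_mem]; left; rfl⟩
  have hsub : ∀ i ∈ Finset.range t, f i ⊆ Finset.Icc 1 ((p+1)*n) := by
    intro i hi
    rw [Finset.mem_range] at hi
    intro x hx
    rw [hf, fmin_mem] at hx
    have h1 := hub i (by omega)
    have h2 : n ≤ (p+1)*n := by nlinarith
    rw [Finset.mem_Icc]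
    rcases hx with rfl | ⟨hx1, hx2⟩ <;> omega
  have hsum : ∑ i ∈ Finset.range t, (f i).card = (p+1)*n := by
    subst htt
    rw [Finset.sum_range_succ]
    have h1 : ∀ i ∈ Finset.range t', (f i).card = p + 1 := by
      intro i hi
      rw [Finset.mem_range] at hi
      exact fmin_card_lt p n (t'+1) i (by omega)
    rw [Finset.sum_congr rfl h1, Finset.sum_const, Finset.card_range,
      hf, fmin_card_last p n (t'+1) t' u hnu rfl, smul_eq_mul]
    have e1 : (p+1)*n = (p+1)*(t'+1+u) := by rw [hnu]
    have e2 : (p+1)*(t'+1+u) = t'*(p+1) + (p+1)*(u+1) := by ring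
    omega
  obtain ⟨π, hparts, hcard⟩ := exists_finpartition_of_family ((p+1)*n) (Finset.range t) f
    hdisj hne hsub hsum
  have hmem : ∀ B ∈ π.parts, ∃ i < t, B = f i := by
    intro B hB
    rw [hparts, Finset.mem_image] at hB
    obtain ⟨i, hi, rfl⟩ := hB
    exact ⟨i, Finset.mem_range.mp hi, rfl⟩
  refine ⟨π, isNC_of_comb (p+1) n t π ?_ ?_ ?_ ?_, by rw [hcard, Finset.card_range]⟩
  · -- divisibility
    intro B hB
    obtain ⟨i, hi, rfl⟩ := hmem B hB
    by_cases h : i + 1 < t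
    · rw [hf, fmin_card_lt p n t i h]
    · have hit : i = t' := by omega
      rw [hf, hit, fmin_card_last p n t t' u hnu htt]
      exact Dvd.intro _ rfl
  · -- hComb
    intro B hB x hx hxt
    obtain ⟨i, hi, rfl⟩ := hmem B hB
    have hx' := hx
    rw [hf, fmin_mem] at hx'
    have hx'' : x = i + 1 := by
      rcases hx' with h | h
      · exact h
      · omega
    subst hx''
    exact ⟨t + i*p + 1, _, by omega, rfl⟩
  · -- hInt
    intro B hB hall
    obtain ⟨i, hi, rfl⟩ := hmem B hB
    exact absurd (hall (i+1) (by rw [hf, fmin_mem]; left; rfl)) (by omega)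
  · -- hOrd
    intro B hB B' hB' x hx x' hx' hxx' hx't u hu hut v hv htv
    obtain ⟨i, hi, rfl⟩ := hmem B hB
    obtain ⟨j, hj, rfl⟩ := hmem B' hB'
    rw [hf, fmin_mem] at hx hx' hu hv
    have hxe : x = i + 1 := by rcases hx with h | h; exact h; omega
    have hx'e : x' = j + 1 := by rcases hx' with h | h; exact h; omega
    have hij : i < j := by omega
    have h1 := hord i j hij (by omega)
    rcases hu with h | ⟨hu1, hu2⟩
    · omega
    · rcases hv with h | ⟨hv1, hv2⟩ <;> omega

end

def fmax (p n t : ℕ) (i : ℕ) : Finset ℕ :=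
  if i < t then insert (i+1) (Finset.Icc (t + i*p + 1) (t + (i+1)*p))
  else Finset.Icc (t + t*p + (i-t)*(p+1) + 1) (t + t*p + (i-t+1)*(p+1))

lemma fmax_mem_lt (p n t i x : ℕ) (hi : i < t) : x ∈ fmax p n t i ↔
    x = i + 1 ∨ (t + i*p + 1 ≤ x ∧ x ≤ t + (i+1)*p) := by
  rw [fmax, if_pos hi, Finset.mem_insert, Finset.mem_Icc]

lemma fmax_mem_ge (p n t i x : ℕ) (hi : ¬ i < t) : x ∈ fmax p n t i ↔
    (t + t*p + (i-t)*(p+1) + 1 ≤ x ∧ x ≤ t + t*p + (i-t+1)*(p+1)) := by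
  rw [fmax, if_neg hi, Finset.mem_Icc]

lemma exists_ncp_max (m n t : ℕ) (hm : 1 ≤ m) (hn : 1 ≤ n) (ht : 1 ≤ t) (htn : t ≤ n) :
    ∃ π : Finpartition (Finset.Icc 1 (m*n)), IsNCPart m n t π ∧ π.parts.card = n := by
  obtain ⟨p, rfl⟩ : ∃ p, m = p + 1 := ⟨m-1, by omega⟩
  set f := fmax p n t with hf
  -- upper bound of comb blocks
  have hcomb_ub : ∀ i, i < t → t + (i+1)*p ≤ t + t*p := by
    intro i hi
    have : (i+1)*p ≤ t*p := Nat.mul_le_mul_right p (by omega)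
    omega
  have htp_ub : ∀ j, j + 1 ≤ n - t → t + t*p + (j+1)*(p+1) ≤ (p+1)*n := by
    intro j hj
    have h1 : (j+1)*(p+1) ≤ (n-t)*(p+1) := Nat.mul_le_mul_right (p+1) (by omega)
    have h2 : t*(p+1) + (n-t)*(p+1) = (p+1)*n := by
      have : t + (n - t) = n := by omega
      calc t*(p+1) + (n-t)*(p+1) = (t + (n-t))*(p+1) := by ring
        _ = n*(p+1) := by rw [this]
        _ = (p+1)*n := Nat.mul_comm n (p+1)
    have h3 : t*(p+1) = t + t*p := by ring
    generalize (j+1)*(p+1) = A at *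
    generalize (n-t)*(p+1) = B at *
    generalize t*(p+1) = C at *
    generalize t*p = D at *
    generalize (p+1)*n = E at *
    omega
  have hcard : ∀ i, i < n → (f i).card = p + 1 := by
    intro i hi
    by_cases h : i < t
    · rw [hf, fmax, if_pos h, Finset.card_insert_of_notMem, Nat.card_Icc]
      · have : t + (i+1)*p = t + i*p + p := by ring_nf
        generalize i*p = X at *
        omega
      · rw [Finset.mem_Icc]; omega
    · rw [hf, fmax, if_neg h, Nat.card_Icc]
      have : (i-t+1)*(p+1) = (i-t)*(p+1) + (p+1) := by ring
      generalize (i-t)*(p+1) = X at *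
      omega
  have hlb_ge : ∀ i, ¬ i < t → t + 1 ≤ t + t*p + (i-t)*(p+1) + 1 := by intro i _; omega
  have hdisj : ∀ i ∈ Finset.range n, ∀ j ∈ Finset.range n, i ≠ j → Disjoint (f i) (f j) := by
    have key : ∀ i j, i < j → j < n → Disjoint (f i) (f j) := by
      intro i j hij hj
      rw [Finset.disjoint_left]
      intro x hxi hxj
      by_cases hi : i < t <;> by_cases hjt : j < t
      · rw [hf, fmax_mem_lt p n t i x hi] at hxi
        rw [hf, fmax_mem_lt p n t j x hjt] at hxj
        have : (i+1)*p ≤ j*p := Nat.mul_le_mul_right p (by omega)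
        generalize (i+1)*p = A at *
        generalize j*p = B at *
        generalize i*p = C at *
        omega
      · rw [hf, fmax_mem_lt p n t i x hi] at hxi
        rw [hf, fmax_mem_ge p n t j x hjt] at hxj
        have h1 := hcomb_ub i hi
        generalize (j-t)*(p+1) = A at *
        generalize (i+1)*p = B at *
        generalize i*p = C at *
        generalize t*p = D at *
        omega
      · omega
      · rw [hf, fmax_mem_ge p n t i x hi] at hxi
        rw [hf, fmax_mem_ge p n t j x hjt] at hxj
        have : (i-t+1)*(p+1) ≤ (j-t)*(p+1) := Nat.mul_le_mul_right (p+1) (by omega)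
        generalize (i-t+1)*(p+1) = A at *
        generalize (j-t)*(p+1) = B at *
        generalize (i-t)*(p+1) = C at *
        generalize (j-t+1)*(p+1) = E at *
        omega
    intro i hi j hj hij
    rw [Finset.mem_range] at hi hj
    rcases lt_or_gt_of_ne hij with h | h
    · exact key i j h hj
    · exact (key j i h hi).symm
  have hne : ∀ i ∈ Finset.range n, (f i).Nonempty := by
    intro i hi
    by_cases h : i < t
    · exact ⟨i+1, by rw [hf, fmax_mem_lt p n t i _ h]; left; rfl⟩
    · refine ⟨t + t*p + (i-t)*(p+1) + 1, by
        rw [hf, fmax_mem_ge p n t i _ h]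
        have : (i-t+1)*(p+1) = (i-t)*(p+1) + (p+1) := by ring
        generalize (i-t)*(p+1) = X at *
        omega⟩
  have hsub : ∀ i ∈ Finset.range n, f i ⊆ Finset.Icc 1 ((p+1)*n) := by
    intro i hi
    rw [Finset.mem_range] at hi
    intro x hx
    rw [Finset.mem_Icc]
    have hbig : t + t*p + (n-t)*(p+1) = (p+1)*n := by
      have h2 : t*(p+1) + (n-t)*(p+1) = (p+1)*n := by
        have h4 : t + (n - t) = n := by omega
        calc t*(p+1) + (n-t)*(p+1) = (t + (n-t))*(p+1) := by ring
          _ = n*(p+1) := by rw [h4]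
          _ = (p+1)*n := Nat.mul_comm n (p+1)
      have h3 : t*(p+1) = t + t*p := by ring
      omega
    by_cases h : i < t
    · rw [hf, fmax_mem_lt p n t i _ h] at hx
      have h1 := hcomb_ub i h
      have h5 : t ≤ (p+1)*n := by nlinarith
      generalize (i+1)*p = A at *
      generalize i*p = B at *
      generalize t*p = C at *
      generalize (n-t)*(p+1) = D at *
      omega
    · rw [hf, fmax_mem_ge p n t i _ h] at hx
      have h1 : (i-t+1)*(p+1) ≤ (n-t)*(p+1) := Nat.mul_le_mul_right (p+1) (by omega)
      generalize (i-t+1)*(p+1) = A at *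
      generalize (i-t)*(p+1) = B at *
      generalize (n-t)*(p+1) = D at *
      omega
  have hsum : ∑ i ∈ Finset.range n, (f i).card = (p+1)*n := by
    rw [Finset.sum_congr rfl (fun i hi => hcard i (Finset.mem_range.mp hi)),
      Finset.sum_const, Finset.card_range, smul_eq_mul, Nat.mul_comm]
  obtain ⟨π, hparts, hcardp⟩ := exists_finpartition_of_family ((p+1)*n) (Finset.range n) f
    hdisj hne hsub hsum
  have hmem : ∀ B ∈ π.parts, ∃ i < n, B = f i := by
    intro B hB
    rw [hparts, Finset.mem_image] at hB
    obtain ⟨i, hi, rfl⟩ := hB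
    exact ⟨i, Finset.mem_range.mp hi, rfl⟩
  refine ⟨π, isNC_of_comb (p+1) n t π ?_ ?_ ?_ ?_, by rw [hcardp, Finset.card_range]⟩
  · intro B hB
    obtain ⟨i, hi, rfl⟩ := hmem B hB
    rw [hcard i hi]
  · -- hComb
    intro B hB x hx hxt
    obtain ⟨i, hi, rfl⟩ := hmem B hB
    by_cases h : i < t
    · have hx' := hx
      rw [hf, fmax_mem_lt p n t i _ h] at hx'
      have hxe : x = i + 1 := by rcases hx' with h' | h'; exact h'; omega
      subst hxe
      exact ⟨t + i*p + 1, t + (i+1)*p, by omega, by rw [hf, fmax, if_pos h]⟩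
    · rw [hf, fmax_mem_ge p n t i _ h] at hx
      omega
  · -- hInt
    intro B hB hall
    obtain ⟨i, hi, rfl⟩ := hmem B hB
    by_cases h : i < t
    · exact absurd (hall (i+1) (by rw [hf, fmax_mem_lt p n t i _ h]; left; rfl)) (by omega)
    · exact ⟨_, _, by rw [hf, fmax, if_neg h]⟩
  · -- hOrd
    intro B hB B' hB' x hx x' hx' hxx' hx't u hu hut v hv htv
    obtain ⟨i, hi, rfl⟩ := hmem B hB
    obtain ⟨j, hj, rfl⟩ := hmem B' hB'
    by_cases h1 : i < t
    · by_cases h2 : j < t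
      · rw [hf, fmax_mem_lt p n t i _ h1] at hx hu
        rw [hf, fmax_mem_lt p n t j _ h2] at hx' hv
        have hxe : x = i + 1 := by rcases hx with h' | h'; exact h'; omega
        have hx'e : x' = j + 1 := by rcases hx' with h' | h'; exact h'; omega
        have hij : i < j := by omega
        have hmono : (i+1)*p ≤ j*p := Nat.mul_le_mul_right p (by omega)
        generalize (i+1)*p = A at *
        generalize j*p = B at *
        generalize i*p = C at *
        generalize (j+1)*p = D at *
        omega
      · rw [hf, fmax_mem_ge p n t j _ h2] at hx'
        omega
    · rw [hf, fmax_mem_ge p n t i _ h1] at hx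
      omega
open Finset

lemma ncp_card_bounds (m n t : ℕ) (hm : 1 ≤ m) (hn : 1 ≤ n) (ht : 1 ≤ t) (htn : t ≤ n)
    (π : Finpartition (Finset.Icc 1 (m*n))) (h : IsNCPart m n t π) :
    t ≤ π.parts.card ∧ π.parts.card ≤ n := by
  constructor
  · have hsub : Finset.Icc 1 t ⊆ Finset.Icc 1 (m*n) := by
      apply Finset.Icc_subset_Icc le_rfl
      calc t ≤ n := htn
        _ ≤ m*n := Nat.le_mul_of_pos_left n hm
    have : (Finset.Icc 1 t).card ≤ π.parts.card := by
      apply Finset.card_le_card_of_injOn (fun x => π.part x)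
      · intro x hx
        exact π.part_mem.mpr (hsub hx)
      · intro x hx y hy hxy
        simp only [Finset.coe_Icc, Set.mem_Icc] at hx hy
        have hxg : x ∈ Finset.Icc 1 (m*n) := hsub (Finset.mem_Icc.mpr hx)
        have hyg : y ∈ Finset.Icc 1 (m*n) := hsub (Finset.mem_Icc.mpr hy)
        have h1 : x ∈ π.part x ∩ Finset.Icc 1 t :=
          Finset.mem_inter.mpr ⟨π.mem_part hxg, Finset.mem_Icc.mpr hx⟩
        have hxy' : π.part x = π.part y := hxy
        have h2 : y ∈ π.part x ∩ Finset.Icc 1 t := by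
          rw [hxy']
          exact Finset.mem_inter.mpr ⟨π.mem_part hyg, Finset.mem_Icc.mpr hy⟩
        exact Finset.card_le_one.mp (h.2.1 (π.part x) (π.part_mem.mpr hxg)) x h1 y h2
    rwa [Nat.card_Icc, Nat.add_sub_cancel] at this
  · have hsum : ∑ B ∈ π.parts, B.card = m*n := by
      rw [π.sum_card_parts, Nat.card_Icc, Nat.add_sub_cancel]
    have hle : π.parts.card • m ≤ ∑ B ∈ π.parts, B.card := by
      apply Finset.card_nsmul_le_sum
      intro B hB
      exact Nat.le_of_dvd (Finset.card_pos.mpr (π.nonempty_of_mem_parts hB)) (h.1 B hB)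
    rw [smul_eq_mul, hsum] at hle
    have : π.parts.card * m ≤ n * m := by rw [Nat.mul_comm n m]; exact hle
    exact Nat.le_of_mul_le_mul_right this hm

lemma ncp_cover (m n t : ℕ) (π π' : Finpartition (Finset.Icc 1 (m*n)))
    (hπ : IsNCPart m n t π) (hπ' : IsNCPart m n t π') (hlt : π < π')
    (hcov : ∀ σ : Finpartition (Finset.Icc 1 (m*n)), IsNCPart m n t σ →
      π < σ → σ < π' → False) :
    π.parts.card = π'.parts.card + 1 := by
  obtain ⟨hle, hnePQ⟩ := lt_iff_le_and_ne.mp hlt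
  have hdp : ∀ {A B : Finset ℕ}, A ∈ π.parts → B ∈ π.parts → A ≠ B →
      ∀ {x}, x ∈ A → x ∉ B := by
    intro A B hA hB hAB x hxA hxB
    exact hAB (π.eq_of_mem_parts hA hB hxA hxB)
  have hg : ∀ {B : Finset ℕ} {x : ℕ}, B ∈ π.parts → x ∈ B → 1 ≤ x ∧ x ≤ m*n := by
    intro B x hB hx
    exact Finset.mem_Icc.mp (π.le hB hx)
  classical
  -- the parts of π inside a given set
  set S : Finset ℕ → Finset (Finset ℕ) := fun D => π.parts.filter (fun C => C ⊆ D) with hSdef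
  have hSsub : ∀ D, S D ⊆ π.parts := fun D => Finset.filter_subset _ _
  have hmemS : ∀ {C D : Finset ℕ}, C ∈ S D ↔ C ∈ π.parts ∧ C ⊆ D := by
    intro C D; rw [hSdef]; exact Finset.mem_filter
  have hpartsub : ∀ {C : Finset ℕ}, C ∈ π.parts → ∀ {D}, D ∈ π'.parts →
      ∀ {x}, x ∈ C → x ∈ D → C ⊆ D := by
    intro C hC D hD x hxC hxD
    obtain ⟨D2, hD2, hCD2⟩ := hle hC
    rwa [π'.eq_of_mem_parts hD2 hD (hCD2 hxC) hxD] at hCD2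
  have hsupS : ∀ D ∈ π'.parts, (S D).sup id = D := by
    intro D hD
    apply le_antisymm
    · exact Finset.sup_le (fun C hC => (hmemS.mp hC).2)
    · intro x hxD
      have hxg : x ∈ Finset.Icc 1 (m*n) := π'.le hD hxD
      obtain ⟨C, hC, hxC⟩ := π.exists_mem hxg
      have hCD : C ⊆ D := hpartsub hC hD hxC hxD
      exact Finset.mem_of_subset (Finset.le_sup (f := id) (hmemS.mpr ⟨hC, hCD⟩)) hxC
  have hSne : ∀ D ∈ π'.parts, (S D).Nonempty := by
    intro D hD
    obtain ⟨x, hxD⟩ := π'.nonempty_of_mem_parts hD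
    obtain ⟨C, hC, hxC⟩ := π.exists_mem (π'.le hD hxD)
    exact ⟨C, hmemS.mpr ⟨hC, hpartsub hC hD hxC hxD⟩⟩
  -- existence of a properly merged part
  have hex : ∃ D ∈ π'.parts, 2 ≤ (S D).card := by
    by_contra hno
    push_neg at hno
    have hge : π' ≤ π := by
      intro D hD
      have h1 : (S D).card = 1 := le_antisymm (by have := hno D hD; omega)
        (Finset.card_pos.mpr (hSne D hD))
      obtain ⟨C, hCeq⟩ := Finset.card_eq_one.mp h1
      have hCD : C ∈ S D := hCeq ▸ Finset.mem_singleton_self C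
      have : D = C := by
        rw [← hsupS D hD, hCeq, Finset.sup_singleton]
        rfl
      exact ⟨D, this ▸ (hmemS.mp hCD).1, le_rfl⟩
    exact hnePQ (le_antisymm hle hge)
  obtain ⟨B0, hB0, hS2⟩ := hex
  have hB0ne : B0.Nonempty := π'.nonempty_of_mem_parts hB0
  -- minimum of B0 and its part
  set x1 := B0.min' hB0ne with hx1def
  have hx1B0 : x1 ∈ B0 := Finset.min'_mem _ _
  have hx1min : ∀ z ∈ B0, x1 ≤ z := fun z hz => Finset.min'_le _ _ hz
  have hx1g : x1 ∈ Finset.Icc 1 (m*n) := π'.le hB0 hx1B0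
  set B1 := π.part x1 with hB1def
  have hB1 : B1 ∈ π.parts := π.part_mem.mpr hx1g
  have hx1B1 : x1 ∈ B1 := π.mem_part hx1g
  have hB1B0 : B1 ⊆ B0 := hpartsub hB1 hB0 hx1B1 hx1B0
  -- second minimum
  have hRne : (B0 \ B1).Nonempty := by
    have hS1 : 1 < (S B0).card := by omega
    obtain ⟨C, hCS, hCne⟩ := Finset.exists_mem_ne hS1 B1
    obtain ⟨z, hz⟩ := π.nonempty_of_mem_parts (hSsub B0 hCS)
    refine ⟨z, Finset.mem_sdiff.mpr ⟨(hmemS.mp hCS).2 hz, ?_⟩⟩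
    exact hdp (hSsub B0 hCS) hB1 hCne hz
  set y := (B0 \ B1).min' hRne with hydef
  have hyR : y ∈ B0 \ B1 := Finset.min'_mem _ _
  have hyB0 : y ∈ B0 := (Finset.mem_sdiff.mp hyR).1
  have hynB1 : y ∉ B1 := (Finset.mem_sdiff.mp hyR).2
  have hymin : ∀ z ∈ B0, z ∉ B1 → y ≤ z := fun z hz hz' =>
    Finset.min'_le _ _ (Finset.mem_sdiff.mpr ⟨hz, hz'⟩)
  have hyg : y ∈ Finset.Icc 1 (m*n) := π'.le hB0 hyB0
  set B2 := π.part y with hB2def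
  have hB2 : B2 ∈ π.parts := π.part_mem.mpr hyg
  have hyB2 : y ∈ B2 := π.mem_part hyg
  have hB2B0 : B2 ⊆ B0 := hpartsub hB2 hB0 hyB2 hyB0
  have hB12 : B1 ≠ B2 := fun h => hynB1 (h ▸ hyB2)
  have hB1S : B1 ∈ S B0 := hmemS.mpr ⟨hB1, hB1B0⟩
  have hB2S : B2 ∈ S B0 := hmemS.mpr ⟨hB2, hB2B0⟩
  have hB0not : B0 ∉ π.parts := by
    intro hB0p
    have : B1 = B0 := π.eq_of_mem_parts hB1 hB0p hx1B1 hx1B0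
    exact hynB1 (this ▸ hyB0)
  -- strict minimum facts
  have hx1lt : ∀ z ∈ B0, z ∉ B1 → x1 < z := by
    intro z hz hz'
    exact lt_of_le_of_ne (hx1min z hz) (fun h => hz' (h ▸ hx1B1))
  have hylt : ∀ z ∈ B0, z ∉ B1 → z ∉ B2 → y < z := by
    intro z hz hz1 hz2
    exact lt_of_le_of_ne (hymin z hz hz1) (fun h => hz2 (h ▸ hyB2))
  have htwo : ∀ {a b : ℕ}, a ∈ B0 → b ∈ B0 → a ≠ b → 1 ≤ a → a ≤ t → 1 ≤ b → b ≤ t →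
      False := by
    intro a b ha hb hab ha1 hat hb1 hbt
    have h1 : a ∈ B0 ∩ Finset.Icc 1 t := Finset.mem_inter.mpr ⟨ha, Finset.mem_Icc.mpr ⟨ha1, hat⟩⟩
    have h2 : b ∈ B0 ∩ Finset.Icc 1 t := Finset.mem_inter.mpr ⟨hb, Finset.mem_Icc.mpr ⟨hb1, hbt⟩⟩
    exact hab (Finset.card_le_one.mp (hπ'.2.1 B0 hB0) a h1 b h2)
  -- the full merge σ'
  have hSneB0 : (S B0).Nonempty := ⟨B1, hB1S⟩
  set σ' := mergeFP π (S B0) (hSsub B0) hSneB0 with hσ'def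
  have hσ'parts : σ'.parts = (π.parts \ S B0) ∪ {B0} := by
    rw [hσ'def, mergeFP_parts, hsupS B0 hB0]
  have hclass' : ∀ B ∈ σ'.parts, (B ∈ π.parts ∧ ¬ B ⊆ B0) ∨ B = B0 := by
    intro B hB
    rw [hσ'parts, Finset.mem_union, Finset.mem_sdiff, Finset.mem_singleton] at hB
    rcases hB with ⟨h1, h2⟩ | h
    · exact Or.inl ⟨h1, fun hsub => h2 (hmemS.mpr ⟨h1, hsub⟩)⟩
    · exact Or.inr h
  have hσ'NC : IsNCPart m n t σ' := by
    refine ⟨?_, ?_, ?_⟩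
    · intro B hB
      rcases hclass' B hB with ⟨h1, _⟩ | rfl
      · exact hπ.1 B h1
      · exact hπ'.1 B hB0
    · intro B hB
      rcases hclass' B hB with ⟨h1, _⟩ | rfl
      · exact hπ.2.1 B h1
      · exact hπ'.2.1 B hB0
    · rintro ⟨i, j, k, l, h1, h2, h3, h4, h5, hbr⟩
      have lift : ∀ {C : Finset ℕ}, C ∈ π.parts → ¬ C ⊆ B0 →
          ∃ D ∈ π'.parts, C ⊆ D ∧ D ≠ B0 := by
        intro C hC hnsub
        obtain ⟨D, hD, hCD⟩ := hle hC
        exact ⟨D, hD, hCD, fun h => hnsub (h ▸ hCD)⟩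
      rcases hbr with ⟨hjt, B, hB, B', hB', hBB', hi, hl, hj, hk⟩ |
        ⟨htj, B, hB, B', hB', hBB', hi, hk, hj, hl⟩
      · rcases hclass' B hB with ⟨hBp, hBn⟩ | hBe <;>
          rcases hclass' B' hB' with ⟨hB'p, hB'n⟩ | hB'e
        · exact hπ.2.2 ⟨i, j, k, l, h1, h2, h3, h4, h5,
            Or.inl ⟨hjt, B, hBp, B', hB'p, hBB', hi, hl, hj, hk⟩⟩
        · rw [hB'e] at hj hk
          obtain ⟨D, hD, hCD, hDne⟩ := lift hBp hBn
          exact hπ'.2.2 ⟨i, j, k, l, h1, h2, h3, h4, h5,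
            Or.inl ⟨hjt, D, hD, B0, hB0, hDne, hCD hi, hCD hl, hj, hk⟩⟩
        · rw [hBe] at hi hl
          obtain ⟨D, hD, hCD, hDne⟩ := lift hB'p hB'n
          exact hπ'.2.2 ⟨i, j, k, l, h1, h2, h3, h4, h5,
            Or.inl ⟨hjt, B0, hB0, D, hD, fun h => hDne h.symm, hi, hl, hCD hj, hCD hk⟩⟩
        · exact hBB' (hBe.trans hB'e.symm)
      · rcases hclass' B hB with ⟨hBp, hBn⟩ | hBe <;>
          rcases hclass' B' hB' with ⟨hB'p, hB'n⟩ | hB'e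
        · exact hπ.2.2 ⟨i, j, k, l, h1, h2, h3, h4, h5,
            Or.inr ⟨htj, B, hBp, B', hB'p, hBB', hi, hk, hj, hl⟩⟩
        · rw [hB'e] at hj hl
          obtain ⟨D, hD, hCD, hDne⟩ := lift hBp hBn
          exact hπ'.2.2 ⟨i, j, k, l, h1, h2, h3, h4, h5,
            Or.inr ⟨htj, D, hD, B0, hB0, hDne, hCD hi, hCD hk, hj, hl⟩⟩
        · rw [hBe] at hi hk
          obtain ⟨D, hD, hCD, hDne⟩ := lift hB'p hB'n
          exact hπ'.2.2 ⟨i, j, k, l, h1, h2, h3, h4, h5,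
            Or.inr ⟨htj, B0, hB0, D, hD, fun h => hDne h.symm, hi, hk, hCD hj, hCD hl⟩⟩
        · exact hBB' (hBe.trans hB'e.symm)
  have hB0σ' : B0 ∈ σ'.parts := by
    rw [hσ'parts]
    exact Finset.mem_union_right _ (Finset.mem_singleton_self B0)
  have hπσ' : π < σ' := by
    rw [lt_iff_le_and_ne]
    constructor
    · intro C hC
      by_cases h : C ∈ S B0
      · exact ⟨B0, hB0σ', (hmemS.mp h).2⟩
      · refine ⟨C, ?_, le_rfl⟩
        rw [hσ'parts]
        exact Finset.mem_union_left _ (Finset.mem_sdiff.mpr ⟨hC, h⟩)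
    · intro h
      exact hB0not (by rw [h]; exact hB0σ')
  have hσ'le : σ' ≤ π' := by
    intro C hC
    rcases hclass' C hC with ⟨h1, _⟩ | hCe
    · exact hle h1
    · exact ⟨B0, hB0, by rw [hCe]⟩
  have hσ'eq : σ' = π' := by
    by_contra h
    exact hcov σ' hσ'NC hπσ' (lt_iff_le_and_ne.mpr ⟨hσ'le, h⟩)
  have hparts' : π'.parts = (π.parts \ S B0) ∪ {B0} := by rw [← hσ'eq, hσ'parts]
  -- the cardinality of S B0 is exactly 2
  have hScard : (S B0).card = 2 := by
    by_contra hne2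
    have h3 : ¬ S B0 ⊆ {B1, B2} := by
      intro hsub
      have := Finset.card_le_card hsub
      have h4 : ({B1, B2} : Finset (Finset ℕ)).card ≤ 2 := by
        apply le_trans (Finset.card_insert_le _ _)
        rw [Finset.card_singleton]
      omega
    obtain ⟨B3, hB3S, hB3n⟩ := Finset.not_subset.mp h3
    rw [Finset.mem_insert, Finset.mem_singleton] at hB3n
    push_neg at hB3n
    obtain ⟨hB3n1, hB3n2⟩ := hB3n
    have hB3 : B3 ∈ π.parts := hSsub B0 hB3S
    have hB3B0 : B3 ⊆ B0 := (hmemS.mp hB3S).2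
    -- merge just B1 and B2
    have h12sub : ({B1, B2} : Finset (Finset ℕ)) ⊆ π.parts := by
      intro C hC
      rw [Finset.mem_insert, Finset.mem_singleton] at hC
      rcases hC with rfl | rfl
      exacts [hB1, hB2]
    set σ := mergeFP π {B1, B2} h12sub ⟨B1, Finset.mem_insert_self _ _⟩ with hσdef
    have hMsup : ({B1, B2} : Finset (Finset ℕ)).sup id = B1 ∪ B2 := by
      rw [Finset.sup_insert, Finset.sup_singleton]
      rfl
    have hσparts : σ.parts = (π.parts \ {B1, B2}) ∪ {B1 ∪ B2} := by
      rw [hσdef]; exact (mergeFP_parts _ _ _ _).trans (by rw [hMsup])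
    have hMB0 : B1 ∪ B2 ⊆ B0 := Finset.union_subset hB1B0 hB2B0
    have hMnot : B1 ∪ B2 ∉ π.parts := by
      intro hM
      have : B1 = B1 ∪ B2 := π.eq_of_mem_parts hB1 hM hx1B1
        (Finset.mem_union_left _ hx1B1)
      exact hynB1 (this ▸ (Finset.mem_union_right _ hyB2 : y ∈ B1 ∪ B2))
    have hclass : ∀ B ∈ σ.parts, (B ∈ π.parts ∧ B ≠ B1 ∧ B ≠ B2) ∨ B = B1 ∪ B2 := by
      intro B hB
      rw [hσparts, Finset.mem_union, Finset.mem_sdiff, Finset.mem_singleton] at hB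
      rcases hB with ⟨h1, h2⟩ | h
      · rw [Finset.mem_insert, Finset.mem_singleton] at h2
        push_neg at h2
        exact Or.inl ⟨h1, h2⟩
      · exact Or.inr h
    -- σ is an NCP
    have hσNC : IsNCPart m n t σ := by
      refine ⟨?_, ?_, ?_⟩
      · intro B hB
        rcases hclass B hB with ⟨h1, _⟩ | rfl
        · exact hπ.1 B h1
        · have hd12 : Disjoint B1 B2 := π.disjoint hB1 hB2 hB12
          rw [Finset.card_union_of_disjoint hd12]
          exact Nat.dvd_add (hπ.1 B1 hB1) (hπ.1 B2 hB2)
      · intro B hB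
        rcases hclass B hB with ⟨h1, _⟩ | rfl
        · exact hπ.2.1 B h1
        · calc ((B1 ∪ B2) ∩ Finset.Icc 1 t).card ≤ (B0 ∩ Finset.Icc 1 t).card :=
            Finset.card_le_card (Finset.inter_subset_inter hMB0 le_rfl)
          _ ≤ 1 := hπ'.2.1 B0 hB0
      · rintro ⟨i, j, k, l, h1, h2, h3, h4, h5, hbr⟩
        -- facts about elements of parts distinct from B1 B2
        have hnotin : ∀ {C : Finset ℕ}, C ∈ π.parts → C ≠ B1 → C ≠ B2 →
            ∀ {z : ℕ}, z ∈ C → z ∉ B1 ∧ z ∉ B2 := by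
          intro C hC hn1 hn2 z hz
          exact ⟨hdp hC hB1 hn1 hz, hdp hC hB2 hn2 hz⟩
        have lift : ∀ {C : Finset ℕ}, C ∈ π.parts → ¬ C ⊆ B0 →
            ∃ D ∈ π'.parts, C ⊆ D ∧ D ≠ B0 := by
          intro C hC hnsub
          obtain ⟨D, hD, hCD⟩ := hle hC
          exact ⟨D, hD, hCD, fun h => hnsub (h ▸ hCD)⟩
        rcases hbr with ⟨hjt, B, hB, B', hB', hBB', hi, hl, hj, hk⟩ |
          ⟨htj, B, hB, B', hB', hBB', hi, hk, hj, hl⟩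
        · -- pattern one
          rcases hclass B hB with ⟨hBp, hBn1, hBn2⟩ | hBe <;>
            rcases hclass B' hB' with ⟨hB'p, hB'n1, hB'n2⟩ | hB'e
          · exact hπ.2.2 ⟨i, j, k, l, h1, h2, h3, h4, h5,
              Or.inl ⟨hjt, B, hBp, B', hB'p, hBB', hi, hl, hj, hk⟩⟩
          · -- i,l ∈ B (old part), j,k ∈ B1 ∪ B2
            rw [hB'e] at hj hk
            by_cases hsub : B ⊆ B0
            · have hjm := Finset.mem_union.mp hj
              have hkm := Finset.mem_union.mp hk
              have hit : t < i := by
                by_contra hit'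
                push_neg at hit'
                refine htwo (hsub hi) (hMB0 hj) (by omega) h1 hit' (by omega) hjt
              rcases hjm with hj1 | hj2
              · rcases hkm with hk1 | hk2
                · exact hπ.2.2 ⟨i, j, k, l, h1, h2, h3, h4, h5,
                    Or.inl ⟨hjt, B, hBp, B1, hB1, hBn1, hi, hl, hj1, hk1⟩⟩
                · -- j ∈ B1, k ∈ B2 : pattern two (x1, i, j, l)
                  have hx1i : x1 < i := hx1lt i (hsub hi) (hnotin hBp hBn1 hBn2 hi).1
                  exact hπ.2.2 ⟨x1, i, j, l, (hg hB1 hx1B1).1, hx1i, h2, by omega,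
                    (hg hBp hl).2, Or.inr ⟨hit, B1, hB1, B, hBp,
                      fun h => hBn1 h.symm, hx1B1, hj1, hi, hl⟩⟩
              · rcases hkm with hk1 | hk2
                · -- j ∈ B2, k ∈ B1 : pattern two (y, i, j, l)
                  have hyi : y < i := by
                    have hni := hnotin hBp hBn1 hBn2 hi
                    exact hylt i (hsub hi) hni.1 hni.2
                  exact hπ.2.2 ⟨y, i, j, l, (hg hB2 hyB2).1, hyi, h2, by omega,
                    (hg hBp hl).2, Or.inr ⟨hit, B2, hB2, B, hBp,
                      fun h => hBn2 h.symm, hyB2, hj2, hi, hl⟩⟩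
                · exact hπ.2.2 ⟨i, j, k, l, h1, h2, h3, h4, h5,
                    Or.inl ⟨hjt, B, hBp, B2, hB2, hBn2, hi, hl, hj2, hk2⟩⟩
            · obtain ⟨D, hD, hCD, hDne⟩ := lift hBp hsub
              exact hπ'.2.2 ⟨i, j, k, l, h1, h2, h3, h4, h5,
                Or.inl ⟨hjt, D, hD, B0, hB0, hDne, hCD hi, hCD hl, hMB0 hj, hMB0 hk⟩⟩
          · -- i,l ∈ B1 ∪ B2, j,k ∈ B' (old part)
            rw [hBe] at hi hl
            by_cases hsub : B' ⊆ B0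
            · have him := Finset.mem_union.mp hi
              have hlm := Finset.mem_union.mp hl
              rcases him with hi1 | hi2
              · rcases hlm with hl1 | hl2
                · exact hπ.2.2 ⟨i, j, k, l, h1, h2, h3, h4, h5,
                    Or.inl ⟨hjt, B1, hB1, B', hB'p, fun h => hB'n1 h.symm, hi1, hl1, hj, hk⟩⟩
                · -- i ∈ B1, l ∈ B2 : pattern one (y, j, k, l)
                  have hyj : y < j := by
                    have hnj := hnotin hB'p hB'n1 hB'n2 hj
                    exact hylt j (hsub hj) hnj.1 hnj.2
                  exact hπ.2.2 ⟨y, j, k, l, (hg hB2 hyB2).1, hyj, h3, h4, h5,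
                    Or.inl ⟨hjt, B2, hB2, B', hB'p, fun h => hB'n2 h.symm, hyB2, hl2, hj, hk⟩⟩
              · rcases hlm with hl1 | hl2
                · -- i ∈ B2, l ∈ B1 : pattern one (x1, j, k, l)
                  have hx1j : x1 < j := by
                    have := hx1min i (hB2B0 hi2)
                    omega
                  exact hπ.2.2 ⟨x1, j, k, l, (hg hB1 hx1B1).1, hx1j, h3, h4, h5,
                    Or.inl ⟨hjt, B1, hB1, B', hB'p, fun h => hB'n1 h.symm, hx1B1, hl1, hj, hk⟩⟩
                · exact hπ.2.2 ⟨i, j, k, l, h1, h2, h3, h4, h5,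
                    Or.inl ⟨hjt, B2, hB2, B', hB'p, fun h => hB'n2 h.symm, hi2, hl2, hj, hk⟩⟩
            · obtain ⟨D, hD, hCD, hDne⟩ := lift hB'p hsub
              exact hπ'.2.2 ⟨i, j, k, l, h1, h2, h3, h4, h5,
                Or.inl ⟨hjt, B0, hB0, D, hD, fun h => hDne h.symm, hMB0 hi, hMB0 hl,
                  hCD hj, hCD hk⟩⟩
          · exact hBB' (hBe.trans hB'e.symm)
        · -- pattern two
          rcases hclass B hB with ⟨hBp, hBn1, hBn2⟩ | hBe <;>
            rcases hclass B' hB' with ⟨hB'p, hB'n1, hB'n2⟩ | hB'e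
          · exact hπ.2.2 ⟨i, j, k, l, h1, h2, h3, h4, h5,
              Or.inr ⟨htj, B, hBp, B', hB'p, hBB', hi, hk, hj, hl⟩⟩
          · -- i,k ∈ B (old part), j,l ∈ B1 ∪ B2
            rw [hB'e] at hj hl
            by_cases hsub : B ⊆ B0
            · have hjm := Finset.mem_union.mp hj
              have hlm := Finset.mem_union.mp hl
              rcases hjm with hj1 | hj2
              · rcases hlm with hl1 | hl2
                · exact hπ.2.2 ⟨i, j, k, l, h1, h2, h3, h4, h5,
                    Or.inr ⟨htj, B, hBp, B1, hB1, hBn1, hi, hk, hj1, hl1⟩⟩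
                · -- j ∈ B1, l ∈ B2
                  by_cases hit : t < i
                  · -- pattern two (x1, i, j, k) with B1, B
                    have hx1i : x1 < i := hx1lt i (hsub hi) (hnotin hBp hBn1 hBn2 hi).1
                    exact hπ.2.2 ⟨x1, i, j, k, (hg hB1 hx1B1).1, hx1i, h2, h3,
                      (hg hBp hk).2, Or.inr ⟨hit, B1, hB1, B, hBp,
                        fun h => hBn1 h.symm, hx1B1, hj1, hi, hk⟩⟩
                  · -- pattern one (y, i, k, l) with B2, B
                    push_neg at hit
                    have hni := hnotin hBp hBn1 hBn2 hi
                    have hyi : y < i := hylt i (hsub hi) hni.1 hni.2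
                    exact hπ.2.2 ⟨y, i, k, l, (hg hB2 hyB2).1, hyi, by omega, h4, h5,
                      Or.inl ⟨hit, B2, hB2, B, hBp, fun h => hBn2 h.symm,
                        hyB2, hl2, hi, hk⟩⟩
              · rcases hlm with hl1 | hl2
                · -- j ∈ B2, l ∈ B1
                  by_cases hit : t < i
                  · -- pattern two (y, i, j, k) with B2, B
                    have hni := hnotin hBp hBn1 hBn2 hi
                    have hyi : y < i := hylt i (hsub hi) hni.1 hni.2
                    exact hπ.2.2 ⟨y, i, j, k, (hg hB2 hyB2).1, hyi, h2, h3,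
                      (hg hBp hk).2, Or.inr ⟨hit, B2, hB2, B, hBp,
                        fun h => hBn2 h.symm, hyB2, hj2, hi, hk⟩⟩
                  · -- pattern one (x1, i, k, l) with B1, B
                    push_neg at hit
                    have hx1i : x1 < i := hx1lt i (hsub hi) (hnotin hBp hBn1 hBn2 hi).1
                    exact hπ.2.2 ⟨x1, i, k, l, (hg hB1 hx1B1).1, hx1i, by omega, h4, h5,
                      Or.inl ⟨hit, B1, hB1, B, hBp, fun h => hBn1 h.symm,
                        hx1B1, hl1, hi, hk⟩⟩
                · exact hπ.2.2 ⟨i, j, k, l, h1, h2, h3, h4, h5,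
                    Or.inr ⟨htj, B, hBp, B2, hB2, hBn2, hi, hk, hj2, hl2⟩⟩
            · obtain ⟨D, hD, hCD, hDne⟩ := lift hBp hsub
              exact hπ'.2.2 ⟨i, j, k, l, h1, h2, h3, h4, h5,
                Or.inr ⟨htj, D, hD, B0, hB0, hDne, hCD hi, hCD hk, hMB0 hj, hMB0 hl⟩⟩
          · -- i,k ∈ B1 ∪ B2, j,l ∈ B' (old part)
            rw [hBe] at hi hk
            by_cases hsub : B' ⊆ B0
            · have him := Finset.mem_union.mp hi
              have hkm := Finset.mem_union.mp hk
              rcases him with hi1 | hi2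
              · rcases hkm with hk1 | hk2
                · exact hπ.2.2 ⟨i, j, k, l, h1, h2, h3, h4, h5,
                    Or.inr ⟨htj, B1, hB1, B', hB'p, fun h => hB'n1 h.symm, hi1, hk1, hj, hl⟩⟩
                · -- i ∈ B1, k ∈ B2 : pattern two (y, j, k, l) with B2, B'
                  have hyj : y < j := by
                    have hnj := hnotin hB'p hB'n1 hB'n2 hj
                    exact hylt j (hsub hj) hnj.1 hnj.2
                  exact hπ.2.2 ⟨y, j, k, l, (hg hB2 hyB2).1, hyj, h3, h4, h5,
                    Or.inr ⟨htj, B2, hB2, B', hB'p, fun h => hB'n2 h.symm, hyB2, hk2, hj, hl⟩⟩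
              · rcases hkm with hk1 | hk2
                · -- i ∈ B2, k ∈ B1 : pattern two (x1, j, k, l) with B1, B'
                  have hx1j : x1 < j := by
                    have := hx1min i (hB2B0 hi2)
                    omega
                  exact hπ.2.2 ⟨x1, j, k, l, (hg hB1 hx1B1).1, hx1j, h3, h4, h5,
                    Or.inr ⟨htj, B1, hB1, B', hB'p, fun h => hB'n1 h.symm, hx1B1, hk1, hj, hl⟩⟩
                · exact hπ.2.2 ⟨i, j, k, l, h1, h2, h3, h4, h5,
                    Or.inr ⟨htj, B2, hB2, B', hB'p, fun h => hB'n2 h.symm, hi2, hk2, hj, hl⟩⟩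
            · obtain ⟨D, hD, hCD, hDne⟩ := lift hB'p hsub
              exact hπ'.2.2 ⟨i, j, k, l, h1, h2, h3, h4, h5,
                Or.inr ⟨htj, B0, hB0, D, hD, fun h => hDne h.symm, hMB0 hi, hMB0 hk,
                  hCD hj, hCD hl⟩⟩
          · exact hBB' (hBe.trans hB'e.symm)
    -- σ is strictly between π and π' : contradiction
    have hMσ : B1 ∪ B2 ∈ σ.parts := by
      rw [hσparts]
      exact Finset.mem_union_right _ (Finset.mem_singleton_self _)
    have hπσ : π < σ := by
      rw [lt_iff_le_and_ne]
      constructor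
      · intro C hC
        by_cases h : C ∈ ({B1, B2} : Finset (Finset ℕ))
        · rw [Finset.mem_insert, Finset.mem_singleton] at h
          rcases h with rfl | rfl
          · exact ⟨B1 ∪ B2, hMσ, Finset.subset_union_left⟩
          · exact ⟨B1 ∪ B2, hMσ, Finset.subset_union_right⟩
        · refine ⟨C, ?_, le_rfl⟩
          rw [hσparts]
          exact Finset.mem_union_left _ (Finset.mem_sdiff.mpr ⟨hC, h⟩)
      · intro h
        exact hMnot (by rw [h]; exact hMσ)
    have hσπ' : σ < π' := by
      rw [lt_iff_le_and_ne]
      constructor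
      · intro C hC
        rcases hclass C hC with ⟨h1, _⟩ | rfl
        · exact hle h1
        · exact ⟨B0, hB0, hMB0⟩
      · intro h
        have hB0σ : B0 ∈ σ.parts := h ▸ hB0
        rw [hσparts, Finset.mem_union, Finset.mem_sdiff, Finset.mem_singleton] at hB0σ
        rcases hB0σ with ⟨h1, _⟩ | h1
        · exact hB0not h1
        · obtain ⟨z, hz⟩ := π.nonempty_of_mem_parts hB3
          have hzB0 : z ∈ B0 := hB3B0 hz
          rw [h1, Finset.mem_union] at hzB0
          rcases hzB0 with hz1 | hz2
          · exact hdp hB3 hB1 hB3n1 hz hz1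
          · exact hdp hB3 hB2 hB3n2 hz hz2
    exact hcov σ hσNC hπσ hσπ'
  -- final count
  have hc1 : (π.parts \ S B0).card = π.parts.card - 2 := by
    rw [Finset.card_sdiff_of_subset (hSsub B0), hScard]
  have hc2 : 2 ≤ π.parts.card := le_trans hS2 (Finset.card_le_card (hSsub B0))
  have hc3 : π'.parts.card = (π.parts \ S B0).card + 1 := by
    rw [hparts', Finset.card_union_of_disjoint, Finset.card_singleton]
    rw [Finset.disjoint_singleton_right, Finset.mem_sdiff]
    intro h
    exact hB0not h.1
  omega

/-- The poset of `m`-divisible non-crossing `t`-partitions of `[mn]` under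
refinement is graded of rank `n − t`, the rank of `π` being `n` minus the
number of blocks of `π`: every element has between `t` and `n` blocks (so the
rank lies between `0` and `n − t`), both extremes are attained (in particular
the minimum possible number of blocks is `t`), and along every cover relation
the number of blocks drops by exactly one (so the rank increases by one). -/
theorem ncp_graded (m n t : ℕ) (hm : 1 ≤ m) (hn : 1 ≤ n) (ht : 1 ≤ t) (htn : t ≤ n) :
    (∀ π : NCP m n t, t ≤ (π.1).parts.card ∧ (π.1).parts.card ≤ n) ∧
    (∃ π : NCP m n t, (π.1).parts.card = t) ∧
    (∃ π : NCP m n t, (π.1).parts.card = n) ∧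
    (∀ π π' : NCP m n t, π ⋖ π' → (π.1).parts.card = (π'.1).parts.card + 1) := by
  refine ⟨?_, ?_, ?_, ?_⟩
  · intro π
    exact ncp_card_bounds m n t hm hn ht htn π.1 π.2
  · obtain ⟨π, h1, h2⟩ := exists_ncp_min m n t hm hn ht htn
    exact ⟨⟨π, h1⟩, h2⟩
  · obtain ⟨π, h1, h2⟩ := exists_ncp_max m n t hm hn ht htn
    exact ⟨⟨π, h1⟩, h2⟩
  · intro π π' h
    have hlt : π.1 < π'.1 := h.1
    apply ncp_cover m n t π.1 π'.1 π.2 π'.2 hlt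
    intro σ hσ h1 h2
    exact h.2 (show π < (⟨σ, hσ⟩ : NCP m n t) from h1) h2
end

section
/- For positive integers n,t with t ≤ n, and for 0 ≤ a, 0 ≤ b with a+b ≤ n−t, the following binomial identity holds: C(mn+a−1,a)·C(n−1,n−t−a−b) − m·C(mn+a−1,a−1)·C(n,n−t−a−b) = C(mn+a−1,a)·C(n,t+a+b)·(t+b)/n. In particular, this quantity is a nonnegative integer. -/
/-- The coefficient identity for the `F`-triangle of `m`-divisible non-crossing
`t`-partitions: for `m,n,t ≥ 1`, `t ≤ n`, `a,b ≥ 0` with `a+b ≤ n−t`,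
`C(mn+a−1,a)·C(n−1,n−t−a−b) − m·C(mn+a−1,a−1)·C(n,n−t−a−b)
  = C(mn+a−1,a)·C(n,t+a+b)·(t+b)/n`,
where `C(x,−1) = 0`; in particular this quantity is a nonnegative integer. -/
theorem f_triangle_coefficient (m n t a b : ℕ) (hm : 1 ≤ m) (hn : 1 ≤ n) (ht : 1 ≤ t)
    (htn : t ≤ n) (hab : t + a + b ≤ n) :
    (((m * n + a - 1).choose a : ℚ) * ((n - 1).choose (n - t - a - b)) -
        (m : ℚ) * (if a = 0 then 0 else ((m * n + a - 1).choose (a - 1) : ℚ)) *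
          (n.choose (n - t - a - b)) =
      ((m * n + a - 1).choose a : ℚ) * (n.choose (t + a + b)) * (((t : ℚ) + b) / n)) ∧
    ∃ c : ℕ, (c : ℚ) =
      ((m * n + a - 1).choose a : ℚ) * ((n - 1).choose (n - t - a - b)) -
        (m : ℚ) * (if a = 0 then 0 else ((m * n + a - 1).choose (a - 1) : ℚ)) *
          (n.choose (n - t - a - b)) := by
  set k := t + a + b with hk
  have hk1 : 1 ≤ k := by omega
  have hsub : n - t - a - b = n - k := by omega
  have hsym1 : (n-1).choose (n - k) = (n-1).choose (k-1) := by
    have h1 : n - k ≤ n - 1 := by omega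
    rw [← Nat.choose_symm h1]
    congr 1
    omega
  have hsym2 : n.choose (n - k) = n.choose k := Nat.choose_symm (by omega)
  -- identity A : n * C(n-1,k-1) = C(n,k) * k
  have hA : n * ((n-1).choose (k-1)) = n.choose k * k := by
    have := Nat.add_one_mul_choose_eq (n-1) (k-1)
    rw [Nat.sub_add_cancel hn,
      Nat.sub_add_cancel hk1] at this
    exact this
  have hAQ : (n : ℚ) * ((n-1).choose (k-1)) = (n.choose k) * k := by exact_mod_cast hA
  have hnQ : (n : ℚ) ≠ 0 := by positivity
  have key : (((m * n + a - 1).choose a : ℚ) * ((n - 1).choose (n - t - a - b)) -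
        (m : ℚ) * (if a = 0 then 0 else ((m * n + a - 1).choose (a - 1) : ℚ)) *
          (n.choose (n - t - a - b)) =
      ((m * n + a - 1).choose a : ℚ) * (n.choose k) * (((t : ℚ) + b) / n)) := by
    rw [hsub, hsym1, hsym2]
    rcases Nat.eq_zero_or_pos a with ha | ha
    · subst ha
      simp only [if_pos rfl, if_true, mul_zero, zero_mul, sub_zero, Nat.choose_zero_right, Nat.cast_one, one_mul]
      have hkb : (t : ℚ) + b = (k : ℚ) := by push_cast [hk]; ring
      rw [hkb]
      field_simp
      linear_combination hAQ
    · rw [if_neg (by omega)]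
      -- identity B : C(N,a) * a = C(N,a-1) * (m*n)
      have hB : (m*n+a-1).choose a * a = (m*n+a-1).choose (a-1) * (m*n) := by
        have := Nat.choose_succ_right_eq (m*n+a-1) (a-1)
        rw [Nat.sub_add_cancel ha] at this
        have h2 : m*n+a-1 - (a-1) = m*n := by
          have : 1 ≤ m*n := Nat.one_le_iff_ne_zero.mpr (by positivity)
          omega
        rw [h2] at this
        exact this
      have hBQ : ((m*n+a-1).choose a : ℚ) * a = ((m*n+a-1).choose (a-1)) * (m*n) := by
        exact_mod_cast hB
      have hkb : (t : ℚ) + b = (k : ℚ) - a := by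
        have : (k : ℚ) = t + a + b := by exact_mod_cast hk
        rw [this]; ring
      rw [hkb]
      field_simp
      linear_combination ((m*n+a-1).choose a : ℚ) * hAQ + ((n.choose k : ℚ)) * hBQ
  refine ⟨key, ?_⟩
  set X : ℕ := (m * n + a - 1).choose a * ((n - 1).choose (n - t - a - b)) with hX
  set Y : ℕ := m * (if a = 0 then 0 else (m * n + a - 1).choose (a - 1)) * (n.choose (n - t - a - b)) with hY
  have hXY : (((m * n + a - 1).choose a : ℚ) * ((n - 1).choose (n - t - a - b)) -
        (m : ℚ) * (if a = 0 then 0 else ((m * n + a - 1).choose (a - 1) : ℚ)) *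
          (n.choose (n - t - a - b))) = (X : ℚ) - (Y : ℚ) := by
    rw [hX, hY]
    push_cast
    split_ifs <;> push_cast <;> ring
  have hpos : (0 : ℚ) ≤ (X : ℚ) - (Y : ℚ) := by
    rw [← hXY, key]
    positivity
  have hle : Y ≤ X := by exact_mod_cast sub_nonneg.mp hpos
  exact ⟨X - Y, by rw [hXY, Nat.cast_sub hle]⟩
end

section
/- The number of Dyck paths of length 2n that start with at least t up-steps equals (t+1)/(n+1) · C(2n−t, n−t). -/
/-- A Dyck path, encoded as a list of steps (`true` = up-step `(1,1)`,
`false` = down-step `(1,−1)`): it ends on the x-axis and never goes below it. -/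
def IsDyckPath (p : List Bool) : Prop :=
  p.count true = p.count false ∧
  ∀ q : List Bool, q <+: p → q.count false ≤ q.count true

namespace TDyckAux

open List

def dyckSet (n t : ℕ) : Set (List Bool) :=
  {p | IsDyckPath p ∧ p.length = 2 * n ∧ List.replicate t true <+: p}

lemma dyckSet_finite (n t : ℕ) : (dyckSet n t).Finite :=
  (List.finite_length_eq Bool (2 * n)).subset fun _ hp => hp.2.1

noncomputable def N (n t : ℕ) : ℕ := (dyckSet n t).ncard

lemma count_add_count (p : List Bool) : p.count true + p.count false = p.length := by
  induction p with
  | nil => simp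
  | cons a l ih => cases a <;> simp [List.count_cons] <;> omega

lemma isDyckPath_iff (p : List Bool) :
    IsDyckPath p ↔ p.count true = p.count false ∧
      ∀ i, (p.take i).count false ≤ (p.take i).count true := by
  constructor
  · exact fun h => ⟨h.1, fun i => h.2 _ (List.take_prefix i p)⟩
  · refine fun h => ⟨h.1, fun q hq => ?_⟩
    rw [List.prefix_iff_eq_take.1 hq]
    exact h.2 _

lemma take_of_prefix {t : ℕ} {p : List Bool} (h : List.replicate t true <+: p) :
    p.take t = List.replicate t true := by
  have := List.prefix_iff_eq_take.1 h
  rw [List.length_replicate] at this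
  exact this.symm

lemma take_count_iff (t : ℕ) (s : List Bool) :
    (∀ i, ((List.replicate t true ++ s).take i).count false ≤
        ((List.replicate t true ++ s).take i).count true) ↔
      (∀ j, (s.take j).count false ≤ t + (s.take j).count true) := by
  constructor
  · intro h j
    have := h (t + j)
    rw [List.take_append, List.take_replicate, List.length_replicate] at this
    have hm : (t + j) ⊓ t = t := by omega
    have hs : t + j - t = j := by omega
    rw [hm, hs] at this
    simpa [List.count_append, List.count_replicate] using this
  · intro h i
    rw [List.take_append, List.take_replicate, List.length_replicate]
    rcases le_or_gt t i with hti | hti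
    · have hm : i ⊓ t = t := by omega
      rw [hm]
      have := h (i - t)
      simpa [List.count_append, List.count_replicate] using this
    · have hm : i ⊓ t = i := by omega
      have hs : i - t = 0 := by omega
      rw [hm, hs]
      simp [List.count_append, List.count_replicate]

/-- Core equivalence: `U^t D r` is a balanced-length Dyck path of length `2n`
iff `U^(t-1) r` is one of length `2(n-1)`. -/
lemma core {n t : ℕ} (ht : 1 ≤ t) (htn : t ≤ n) (r : List Bool) :
    (IsDyckPath (List.replicate t true ++ false :: r) ∧
        (List.replicate t true ++ false :: r).length = 2 * n) ↔
      (IsDyckPath (List.replicate (t - 1) true ++ r) ∧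
        (List.replicate (t - 1) true ++ r).length = 2 * (n - 1)) := by
  have hn : 1 ≤ n := le_trans ht htn
  rw [isDyckPath_iff, isDyckPath_iff]
  rw [take_count_iff, take_count_iff]
  simp only [List.count_append, List.count_replicate, List.count_cons, List.length_append,
    List.length_replicate, List.length_cons]
  constructor
  · rintro ⟨⟨hbal, hpre⟩, hlen⟩
    refine ⟨⟨by simp at hbal ⊢; omega, fun j => ?_⟩, by omega⟩
    have := hpre (j + 1)
    simp [List.count_cons] at this ⊢
    omega
  · rintro ⟨⟨hbal, hpre⟩, hlen⟩
    refine ⟨⟨by simp at hbal ⊢; omega, fun j => ?_⟩, by omega⟩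
    cases j with
    | zero => simp
    | succ j =>
      have := hpre j
      simp [List.count_cons] at this ⊢
      omega

lemma dyckSet_zero : dyckSet 0 0 = {([] : List Bool)} := by
  ext p
  simp only [dyckSet, Set.mem_setOf_eq, Set.mem_singleton_iff]
  constructor
  · rintro ⟨_, hlen, _⟩
    exact List.length_eq_zero_iff.1 (by simpa using hlen)
  · rintro rfl
    refine ⟨⟨by simp, ?_⟩, by simp, by simp⟩
    intro q hq
    simp [List.prefix_nil.1 hq]

lemma dyckSet_self (n : ℕ) :
    dyckSet n n = {List.replicate n true ++ List.replicate n false} := by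
  ext p
  simp only [dyckSet, Set.mem_setOf_eq, Set.mem_singleton_iff]
  constructor
  · rintro ⟨⟨hbal, _⟩, hlen, hpre⟩
    have hsum := count_add_count p
    have hct : p.count true = n := by omega
    have htake := take_of_prefix hpre
    have hsplit := List.take_append_drop n p
    have hcd : (p.drop n).count true = 0 := by
      have : (p.take n).count true + (p.drop n).count true = p.count true := by
        conv_rhs => rw [← hsplit]
        rw [List.count_append]
      rw [htake] at this
      simp [List.count_replicate] at this
      omega
    have hdl : (p.drop n).length = n := by
      rw [List.length_drop]; omega
    have : p.drop n = List.replicate n false := by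
      rw [List.eq_replicate_iff]
      refine ⟨hdl, fun b hb => ?_⟩
      cases b
      · rfl
      · exact absurd (List.count_eq_zero.1 hcd hb) (fun h => h)
    rw [← hsplit, htake, this]
  · rintro rfl
    refine ⟨?_, by simp [two_mul], List.prefix_append _ _⟩
    rw [isDyckPath_iff]
    constructor
    · simp [List.count_append, List.count_replicate]
    · rw [take_count_iff]
      intro j
      rw [List.take_replicate]
      simp [List.count_replicate]

lemma dyckSet_zero_one {n : ℕ} (hn : 1 ≤ n) : dyckSet n 0 = dyckSet n 1 := by
  ext p
  simp only [dyckSet, Set.mem_setOf_eq]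
  constructor
  · rintro ⟨hd, hlen, -⟩
    refine ⟨hd, hlen, ?_⟩
    cases p with
    | nil => simp at hlen; omega
    | cons b l =>
      cases b
      · have := hd.2 [false] ⟨l, rfl⟩
        simp at this
      · exact ⟨l, by simp⟩
  · rintro ⟨hd, hlen, -⟩
    exact ⟨hd, hlen, List.nil_prefix⟩

lemma dyckSet_split {n t : ℕ} (ht : t < 2 * n) :
    dyckSet n t = dyckSet n (t + 1) ∪ {p | p ∈ dyckSet n t ∧ p[t]? = some false} := by
  ext p
  constructor
  · intro hp
    have hlt : t < p.length := by rw [hp.2.1]; exact ht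
    obtain ⟨b, hb⟩ : ∃ b, p[t]? = some b := ⟨p[t], (List.getElem?_eq_some_iff).2 ⟨hlt, rfl⟩⟩
    cases b
    · exact Or.inr ⟨hp, hb⟩
    · refine Or.inl ⟨hp.1, hp.2.1, ?_⟩
      rw [List.prefix_iff_eq_take, List.length_replicate, List.take_succ,
        take_of_prefix hp.2.2, hb]
      simp [List.replicate_succ']
  · rintro (hp | hp)
    · refine ⟨hp.1, hp.2.1, ?_⟩
      refine List.IsPrefix.trans ?_ hp.2.2
      rw [List.prefix_iff_eq_take, List.take_replicate, List.length_replicate]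
      congr 1
      omega
    · exact hp.1

lemma split_disjoint (n t : ℕ) :
    Disjoint (dyckSet n (t + 1)) {p | p ∈ dyckSet n t ∧ p[t]? = some false} := by
  rw [Set.disjoint_left]
  rintro p hp1 ⟨-, hp2⟩
  obtain ⟨r, hr⟩ := hp1.2.2
  have : p[t]? = some true := by
    rw [← hr, List.getElem?_append_left (by simp)]
    simp
  rw [this] at hp2
  simp at hp2

lemma B_eq_image {n t : ℕ} (ht : 1 ≤ t) (htn : t ≤ n) :
    {p | p ∈ dyckSet n t ∧ p[t]? = some false} =
      (fun r => List.replicate t true ++ false :: r) ''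
        {r | List.replicate (t - 1) true ++ r ∈ dyckSet (n - 1) (t - 1)} := by
  ext p
  constructor
  · rintro ⟨hp, hget⟩
    obtain ⟨hlt, hgv⟩ := (List.getElem?_eq_some_iff).1 hget
    refine ⟨p.drop (t + 1), ?_, ?_⟩
    · have hdyck : IsDyckPath (List.replicate t true ++ false :: p.drop (t + 1)) ∧
          (List.replicate t true ++ false :: p.drop (t + 1)).length = 2 * n := by
        have hform : p = List.replicate t true ++ false :: p.drop (t + 1) := by
          conv_lhs => rw [← List.take_append_drop t p]
          rw [take_of_prefix hp.2.2, List.drop_eq_getElem_cons hlt, hgv]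
        rw [← hform]
        exact ⟨hp.1, hp.2.1⟩
      have := (core ht htn _).1 hdyck
      exact ⟨this.1, this.2, List.prefix_append _ _⟩
    · conv_rhs => rw [← List.take_append_drop t p]
      rw [take_of_prefix hp.2.2, List.drop_eq_getElem_cons hlt, hgv]
  · rintro ⟨r, hr, rfl⟩
    have := (core ht htn r).2 ⟨hr.1, hr.2.1⟩
    refine ⟨⟨this.1, this.2, List.prefix_append _ _⟩, ?_⟩
    rw [List.getElem?_append_right (by simp)]
    simp

lemma dyckSet_eq_image {m s : ℕ} :
    dyckSet m s = (fun r => List.replicate s true ++ r) ''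
      {r | List.replicate s true ++ r ∈ dyckSet m s} := by
  ext p
  constructor
  · intro hp
    refine ⟨p.drop s, ?_, ?_⟩
    · show List.replicate s true ++ p.drop s ∈ dyckSet m s
      rw [← take_of_prefix hp.2.2, List.take_append_drop]
      exact hp
    · show List.replicate s true ++ p.drop s = p
      rw [← take_of_prefix hp.2.2, List.take_append_drop]
  · rintro ⟨r, hr, rfl⟩
    exact hr

lemma N_rec {n t : ℕ} (h1 : 1 ≤ t) (h2 : t < n) :
    N n t = N n (t + 1) + N (n - 1) (t - 1) := by
  have htn : t ≤ n := le_of_lt h2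
  have ht2n : t < 2 * n := by omega
  have hBfin : ({p | p ∈ dyckSet n t ∧ p[t]? = some false}).Finite :=
    (dyckSet_finite n t).subset fun p hp => hp.1
  have hcard : N n t = N n (t + 1) +
      ({p | p ∈ dyckSet n t ∧ p[t]? = some false}).ncard := by
    unfold N
    conv_lhs => rw [dyckSet_split ht2n]
    rw [Set.ncard_union_eq (split_disjoint n t) (dyckSet_finite n (t + 1)) hBfin]
  rw [hcard]
  congr 1
  rw [B_eq_image h1 htn, Set.ncard_image_of_injOn (fun a _ b _ hab => by simpa using hab)]
  unfold N
  conv_rhs => rw [dyckSet_eq_image (m := n - 1) (s := t - 1)]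
  rw [Set.ncard_image_of_injOn (fun a _ b _ hab => by simpa using hab)]

lemma N_self (n : ℕ) : N n n = 1 := by
  unfold N
  rw [dyckSet_self]
  exact Set.ncard_singleton _

lemma N_zero_one {n : ℕ} (hn : 1 ≤ n) : N n 0 = N n 1 := by
  unfold N; rw [dyckSet_zero_one hn]

lemma N_zero : N 0 0 = 1 := by
  unfold N; rw [dyckSet_zero]; exact Set.ncard_singleton _

lemma main : ∀ n, ∀ t ≤ n, ((N n t : ℚ)) =
    ((t : ℚ) + 1) / ((n : ℚ) + 1) * ((2 * n - t).choose (n - t)) := by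
  intro n
  induction n with
  | zero =>
    intro t ht
    have : t = 0 := by omega
    subst this
    rw [N_zero]
    norm_num
  | succ n ih =>
    have key : ∀ k, ∀ t, t + k = n + 1 → ((N (n + 1) t : ℚ)) =
        ((t : ℚ) + 1) / (((n + 1 : ℕ) : ℚ) + 1) * ((2 * (n + 1) - t).choose (n + 1 - t)) := by
      intro k
      induction k with
      | zero =>
        intro t ht
        have : t = n + 1 := by omega
        subst this
        rw [N_self]
        rw [Nat.sub_self, show 2 * (n + 1) - (n + 1) = n + 1 by omega]
        simp
        rw [div_self (by positivity)]
      | succ k ihk =>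
        intro t ht
        by_cases h0 : t = 0
        · subst h0
          rw [N_zero_one (by omega), ihk 1 (by omega), Nat.sub_zero, Nat.sub_zero,
            show 2 * (n + 1) - 1 = 2 * n + 1 by omega, show n + 1 - 1 = n by omega]
          have hch : ((2 * (n + 1)).choose (n + 1) : ℚ) = 2 * ((2 * n + 1).choose n) := by
            have h : (2 * (n + 1)).choose (n + 1) = 2 * ((2 * n + 1).choose n) := by
              rw [show 2 * (n + 1) = (2 * n + 1) + 1 by omega, Nat.choose_succ_succ,
                Nat.choose_symm_half]
              omega
            exact_mod_cast h
          rw [hch]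
          push_cast
          ring
        · obtain ⟨s, rfl⟩ : ∃ s, t = s + 1 := ⟨t - 1, by omega⟩
          have hs : s + 1 < n + 1 := by omega
          rw [N_rec (by omega) hs]
          obtain ⟨u, rfl⟩ : ∃ u, n = s + 1 + u := ⟨n - s - 1, by omega⟩
          rw [Nat.cast_add, ihk (s + 2) (by omega),
            show s + 1 + u + 1 - 1 = s + 1 + u by omega, show s + 1 - 1 = s by omega,
            ih s (by omega)]
          rw [show 2 * (s + 1 + u + 1) - (s + 1) = (s + 2 * u + 2) + 1 by omega,
            show s + 1 + u + 1 - (s + 1) = u + 1 by omega,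
            show 2 * (s + 1 + u + 1) - (s + 2) = s + 2 * u + 2 by omega,
            show s + 1 + u + 1 - (s + 2) = u by omega,
            show 2 * (s + 1 + u) - s = s + 2 * u + 2 by omega,
            show s + 1 + u - s = u + 1 by omega,
            show (s + 2 * u + 2 + 1).choose (u + 1) =
              (s + 2 * u + 2).choose u + (s + 2 * u + 2).choose (u + 1) from
                Nat.choose_succ_succ _ _]
          have hkey : ((s + 2 * u + 2).choose (u + 1) : ℚ) * (u + 1) =
              ((s + 2 * u + 2).choose u : ℚ) * (s + u + 2) := by
            have := Nat.choose_succ_right_eq (s + 2 * u + 2) u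
            rw [show s + 2 * u + 2 - u = s + u + 2 by omega] at this
            exact_mod_cast this
          push_cast
          have h1 : ((s : ℚ) + 1 + u + 1 + 1) ≠ 0 := by positivity
          have h2 : ((s : ℚ) + 1 + u + 1) ≠ 0 := by positivity
          field_simp
          linear_combination (-1 : ℚ) * hkey
    intro t ht
    exact key (n + 1 - t) t (by omega)

end TDyckAux

/-- The number of Dyck paths of length `2n` that start with (at least) `t`
up-steps equals `(t+1)/(n+1) · C(2n−t, n−t)`. -/
theorem tDyck_count (n t : ℕ) (htn : t ≤ n) :
    (Nat.card {p : List Bool //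
        IsDyckPath p ∧ p.length = 2 * n ∧ List.replicate t true <+: p} : ℚ) =
      ((t : ℚ) + 1) / ((n : ℚ) + 1) * ((2 * n - t).choose (n - t)) := by
  have : Nat.card {p : List Bool //
      IsDyckPath p ∧ p.length = 2 * n ∧ List.replicate t true <+: p} = TDyckAux.N n t :=
    Nat.card_coe_set_eq (TDyckAux.dyckSet n t)
  rw [this, TDyckAux.main n t htn]
end

section
/- The set of t-Dyck paths of length 2n is in bijection with the set of filters of the poset T_{n,t} = {(i,j) : 1 ≤ i < j ≤ n, j > t} ordered by (i,j) ⪯ (k,l) iff i ≥ k and j ≤ l; in particular these two sets have the same cardinality. -/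
/-- Membership in the poset `T_{n,t} = {(i,j) : 1 ≤ i < j ≤ n, j > t}`. -/
def MemTnt (n t : ℕ) (x : ℕ × ℕ) : Prop :=
  1 ≤ x.1 ∧ x.1 < x.2 ∧ x.2 ≤ n ∧ t < x.2

/-- `F` is a filter of the poset `T_{n,t}`, ordered by
`(i,j) ⪯ (k,l) ↔ i ≥ k ∧ j ≤ l`: an upward-closed subset of `T_{n,t}`. -/
def IsTntFilter (n t : ℕ) (F : Set (ℕ × ℕ)) : Prop :=
  (∀ x ∈ F, MemTnt n t x) ∧
  ∀ x ∈ F, ∀ y : ℕ × ℕ, MemTnt n t y → y.1 ≤ x.1 → x.2 ≤ y.2 → y ∈ F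


namespace TD

/-- `fb p j` = number of `false`s occurring before the `(j+1)`-th `true` in `p`
(all `false`s if there are at most `j` `true`s). -/
def fb : List Bool → ℕ → ℕ
  | [], _ => 0
  | true :: _, 0 => 0
  | true :: p, j+1 => fb p j
  | false :: p, j => fb p j + 1

lemma fb_mono (p : List Bool) : Monotone (fb p) := by
  have key : ∀ p j, fb p j ≤ fb p (j+1) := by
    intro p
    induction p with
    | nil => intro j; simp [fb]
    | cons b p ih =>
      intro j
      cases b with
      | true => cases j with
        | zero => simp [fb]
        | succ j => simpa [fb] using ih j
      | false => simpa [fb] using ih j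
  exact monotone_nat_of_le_succ (key p)

lemma fb_replicate_false (k : ℕ) (p : List Bool) (j : ℕ) :
    fb (List.replicate k false ++ p) j = k + fb p j := by
  induction k with
  | zero => simp
  | succ k ih => simpa [List.replicate_succ, fb, ih] using by omega

lemma fb_replicate_true (k : ℕ) (p : List Bool) (j : ℕ) (h : j < k) :
    fb (List.replicate k true ++ p) j = 0 := by
  induction k generalizing j with
  | zero => omega
  | succ k ih =>
    cases j with
    | zero => simp [List.replicate_succ, fb]
    | succ j => simpa [List.replicate_succ, fb] using ih j (by omega)

lemma fb_ge_count (p : List Bool) (j : ℕ) (h : p.count true ≤ j) :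
    fb p j = p.count false := by
  induction p generalizing j with
  | nil => simp [fb]
  | cons b p ih =>
    cases b with
    | true =>
      cases j with
      | zero => simp at h
      | succ j =>
        have hj : p.count true ≤ j := by
          simp [List.count_cons] at h; omega
        simpa [fb] using ih j hj
    | false =>
      simp only [fb]
      rw [ih j (by simpa using h)]
      simp

lemma count_false_prefix (p q : List Bool) (h : q <+: p) :
    q.count false ≤ fb p (q.count true) := by
  induction p generalizing q with
  | nil => simp [List.prefix_nil.mp h]
  | cons b p ih =>
    rcases q with _ | ⟨c, q⟩
    · simp
    · obtain ⟨hcb, hq⟩ : c = b ∧ q <+: p := by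
        simpa [List.cons_prefix_cons] using h
      subst hcb
      cases c with
      | true => simpa [fb] using ih q hq
      | false => simpa [fb] using ih q hq

lemma fb_le (p : List Bool) (c : ℕ)
    (h : ∀ q, q <+: p → q.count false ≤ q.count true + c)
    (j : ℕ) (hj : j < p.count true) : fb p j ≤ j + c := by
  induction p generalizing c j with
  | nil => simp at hj
  | cons b p ih =>
    cases b with
    | true =>
      cases j with
      | zero => simp [fb]
      | succ j =>
        have h' : ∀ q, q <+: p → q.count false ≤ q.count true + (c + 1) := by
          intro q hq
          have hh := h (true :: q) (by simpa [List.cons_prefix_cons] using hq)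
          simp [List.count_cons] at hh
          omega
        have hj' : j < p.count true := by
          simp [List.count_cons] at hj; omega
        have := ih (c+1) h' j hj'
        simp only [fb]; omega
    | false =>
      have hc : 1 ≤ c := by
        have := h [false] (by simp [List.cons_prefix_cons])
        simpa using this
      obtain ⟨c', rfl⟩ : ∃ c', c = c' + 1 := ⟨c - 1, by omega⟩
      have h' : ∀ q, q <+: p → q.count false ≤ q.count true + c' := by
        intro q hq
        have := h (false :: q) (by simpa [List.cons_prefix_cons] using hq)
        simp at this; omega
      have := ih c' h' j (by simpa using hj)
      simp only [fb]; omega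

lemma count_true_add_count_false (p : List Bool) :
    p.count true + p.count false = p.length := by
  induction p with
  | nil => simp
  | cons b p ih => cases b <;> simp [List.count_cons] <;> omega

lemma eq_of_fb (p q : List Bool) (htr : p.count true = q.count true)
    (hf : p.count false = q.count false) (h : ∀ j, fb p j = fb q j) : p = q := by
  induction p generalizing q with
  | nil =>
    have hq := count_true_add_count_false q
    simp only [List.count_nil] at htr hf
    have : q.length = 0 := by omega
    simpa using (List.length_eq_zero_iff.mp this).symm
  | cons b p ih =>
    rcases q with _ | ⟨c, q⟩
    · exfalso
      have h1 := count_true_add_count_false (b :: p)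
      simp only [List.count_nil] at htr hf
      rw [List.length_cons] at h1; omega
    · have hbc : b = c := by
        by_contra hne
        cases b <;> cases c <;> simp_all
        · have h0 := h 0
          simp [fb] at h0
        · have h0 := h 0
          simp [fb] at h0
      subst hbc
      cases b with
      | true =>
        have : p = q := by
          apply ih q (by simpa using htr) (by simpa using hf)
          intro j
          have := h (j+1); simpa [fb] using this
        rw [this]
      | false =>
        have : p = q := by
          apply ih q (by simpa using htr) (by simpa using hf)
          intro j
          have := h j; simp [fb] at this; omega
        rw [this]

def delta (a : ℕ → ℕ) : ℕ → ℕ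
  | 0 => a 0
  | j+1 => a (j+1) - a j

def prev (a : ℕ → ℕ) (n : ℕ) : ℕ :=
  match n with
  | 0 => 0
  | n+1 => a n

@[simp] lemma prev_zero (a : ℕ → ℕ) : prev a 0 = 0 := rfl
@[simp] lemma prev_succ (a : ℕ → ℕ) (n : ℕ) : prev a (n+1) = a n := rfl

def blocks (a : ℕ → ℕ) : ℕ → List Bool
  | 0 => []
  | n+1 => blocks a n ++ (List.replicate (delta a n) false ++ [true])

lemma count_true_blocks (a : ℕ → ℕ) (n : ℕ) : (blocks a n).count true = n := by
  induction n with
  | zero => simp [blocks]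
  | succ n ih => simp [blocks, ih, List.count_append, List.count_replicate]

lemma count_false_blocks (a : ℕ → ℕ) (n : ℕ)
    (mono : ∀ j, j + 1 < n → a j ≤ a (j+1)) :
    (blocks a n).count false = prev a n := by
  induction n with
  | zero => simp [blocks, prev]
  | succ n ih =>
    have ih' := ih (fun j hj => mono j (by omega))
    cases n with
    | zero => simp [blocks, delta, prev, ih', List.count_append]
    | succ m =>
      have hm : a m ≤ a (m+1) := mono m (by omega)
      simp [blocks, delta, prev, List.count_append] at *
      omega

lemma fb_blocks_append (a : ℕ → ℕ) (n : ℕ) (s : List Bool)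
    (mono : ∀ j, j + 1 < n → a j ≤ a (j+1)) (j : ℕ) :
    fb (blocks a n ++ s) j =
      if j < n then a j else prev a n + fb s (j - n) := by
  induction n generalizing s j with
  | zero => simp [blocks, prev]
  | succ n ih =>
    have ih' : ∀ (s' : List Bool) (j' : ℕ), fb (blocks a n ++ s') j'
        = if j' < n then a j' else prev a n + fb s' (j' - n) :=
      fun s' j' => ih s' (fun j hj => mono j (by omega)) j'
    have heq : blocks a (n+1) ++ s
        = blocks a n ++ (List.replicate (delta a n) false ++ (true :: s)) := by
      simp [blocks]
    rw [heq, ih' _ j]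
    by_cases hj : j < n
    · simp [hj, show j < n + 1 by omega]
    · have hd : delta a n + prev a n = a n := by
        cases n with
        | zero => simp [delta, prev]
        | succ m =>
          have := mono m (by omega)
          simp [delta, prev]; omega
      by_cases hj' : j = n
      · rw [if_neg (by omega : ¬ j < n), if_pos (by omega : j < n + 1),
            show j - n = 0 by omega, fb_replicate_false, hj']
        simp only [fb, prev_succ]
        omega
      · have h1 : ¬ j < n + 1 := by omega
        rw [if_neg hj, if_neg h1, fb_replicate_false]
        obtain ⟨k, rfl⟩ : ∃ k, j = n + (k + 1) := ⟨j - n - 1, by omega⟩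
        rw [show n + (k + 1) - n = k + 1 by omega,
            show n + (k + 1) - (n + 1) = k by omega]
        simp only [fb, prev_succ]
        omega

lemma blocks_prefix (a : ℕ → ℕ) {t n : ℕ} (h : t ≤ n) :
    blocks a t <+: blocks a n := by
  induction n with
  | zero => simp [Nat.le_zero.mp h]
  | succ n ih =>
    rcases Nat.lt_or_ge t (n+1) with h' | h'
    · exact (ih (by omega)).trans ⟨_, rfl⟩
    · have : t = n + 1 := by omega
      subst this; exact List.prefix_refl _

lemma blocks_replicate (a : ℕ → ℕ) (t : ℕ) (h : ∀ j, j < t → a j = 0) :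
    blocks a t = List.replicate t true := by
  induction t with
  | zero => simp [blocks]
  | succ t ih =>
    have ht : delta a t = 0 := by
      cases t with
      | zero => simpa [delta] using h 0 (by omega)
      | succ m => simp [delta, h (m+1) (by omega)]
    rw [blocks, ih (fun j hj => h j (by omega)), ht]
    simp [List.replicate_succ']

def pathOf (a : ℕ → ℕ) (n : ℕ) : List Bool :=
  blocks a n ++ List.replicate (n - prev a n) false

lemma fb_pathOf (a : ℕ → ℕ) (n : ℕ)
    (mono : ∀ j, j + 1 < n → a j ≤ a (j+1)) (hb : prev a n ≤ n) (j : ℕ) :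
    fb (pathOf a n) j = if j < n then a j else n := by
  rw [pathOf, fb_blocks_append a n _ mono j]
  by_cases hj : j < n
  · simp [hj]
  · have h2 : fb (List.replicate (n - prev a n) false) (j - n)
        = n - prev a n := by
      simpa [fb] using fb_replicate_false (n - prev a n) [] (j - n)
    rw [if_neg hj, if_neg hj, h2]
    omega

lemma count_true_pathOf (a : ℕ → ℕ) (n : ℕ) : (pathOf a n).count true = n := by
  simp [pathOf, List.count_append, count_true_blocks, List.count_replicate]

lemma count_false_pathOf (a : ℕ → ℕ) (n : ℕ)
    (mono : ∀ j, j + 1 < n → a j ≤ a (j+1)) (hb : prev a n ≤ n) :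
    (pathOf a n).count false = n := by
  rw [pathOf, List.count_append, count_false_blocks a n mono]
  simp [List.count_replicate]
  omega

end TD

/-- The filter associated to a Dyck path. -/
def TD.toFilter (n t : ℕ) (p : List Bool) : Set (ℕ × ℕ) :=
  {x | MemTnt n t x ∧ x.1 ≤ TD.fb p (x.2 - 1)}

namespace TD

lemma toFilter_isFilter (n t : ℕ) (p : List Bool) :
    IsTntFilter n t (toFilter n t p) := by
  constructor
  · exact fun x hx => hx.1
  · rintro x ⟨hx, hfb⟩ y hy h1 h2
    refine ⟨hy, ?_⟩
    calc y.1 ≤ x.1 := h1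
      _ ≤ fb p (x.2 - 1) := hfb
      _ ≤ fb p (y.2 - 1) := fb_mono p (by omega)

lemma path_facts (n t : ℕ) (ht : 1 ≤ t) (p : List Bool)
    (hp : IsDyckPath p ∧ p.length = 2 * n ∧ List.replicate t true <+: p) :
    p.count true = n ∧ p.count false = n ∧
    (∀ j, j < n → fb p j ≤ j) ∧ (∀ j, n ≤ j → fb p j = n) ∧
    (∀ j, j < t → fb p j = 0) := by
  obtain ⟨⟨hcnt, hpre⟩, hlen, hrep⟩ := hp
  have hsum := count_true_add_count_false p
  have hct : p.count true = n := by omega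
  have hcf : p.count false = n := by omega
  refine ⟨hct, hcf, ?_, ?_, ?_⟩
  · intro j hj
    have := fb_le p 0 (fun q hq => by simpa using hpre q hq) j (by omega)
    omega
  · intro j hj
    rw [fb_ge_count p j (by omega), hcf]
  · intro j hj
    obtain ⟨s, rfl⟩ := hrep
    exact fb_replicate_true t s j hj

end TD

/-- The set of `t`-Dyck paths of length `2n` is in bijection with the set of
filters of the poset `T_{n,t}`; in particular, these sets are equinumerous. -/
theorem tDyck_equiv_filters (n t : ℕ) (ht : 1 ≤ t) (htn : t ≤ n) :
    Nonempty
      ({p : List Bool //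
          IsDyckPath p ∧ p.length = 2 * n ∧ List.replicate t true <+: p} ≃
        {F : Set (ℕ × ℕ) // IsTntFilter n t F}) ∧
    Nat.card {p : List Bool //
        IsDyckPath p ∧ p.length = 2 * n ∧ List.replicate t true <+: p} =
      Nat.card {F : Set (ℕ × ℕ) // IsTntFilter n t F} := by
  classical
  set Φ : {p : List Bool //
      IsDyckPath p ∧ p.length = 2 * n ∧ List.replicate t true <+: p} →
      {F : Set (ℕ × ℕ) // IsTntFilter n t F} :=
    fun p => ⟨TD.toFilter n t p.1, TD.toFilter_isFilter n t p.1⟩ with hΦ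
  have hinj : Function.Injective Φ := by
    rintro ⟨p, hp⟩ ⟨p', hp'⟩ h
    have hF : TD.toFilter n t p = TD.toFilter n t p' := by
      simpa [hΦ] using congrArg Subtype.val h
    obtain ⟨hct, hcf, hle, hge, hz⟩ := TD.path_facts n t ht p hp
    obtain ⟨hct', hcf', hle', hge', hz'⟩ := TD.path_facts n t ht p' hp'
    have hfb : ∀ j, TD.fb p j = TD.fb p' j := by
      have main : ∀ q q' : List Bool, TD.toFilter n t q = TD.toFilter n t q' →
          (∀ j, j < n → TD.fb q j ≤ j) → ∀ j, t ≤ j → j < n →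
          TD.fb q j ≤ TD.fb q' j := by
        intro q q' hqq hb j hjt hjn
        rcases Nat.eq_zero_or_pos (TD.fb q j) with h0 | h0
        · omega
        · have hx : ((TD.fb q j, j + 1) : ℕ × ℕ) ∈ TD.toFilter n t q := by
            refine ⟨⟨h0, ?_, ?_, ?_⟩, ?_⟩ <;> simp only []
            · have := hb j hjn; omega
            · omega
            · omega
            · simp
          rw [hqq] at hx
          simpa using hx.2
      intro j
      rcases Nat.lt_or_ge j n with hjn | hjn
      · rcases Nat.lt_or_ge j t with hjt | hjt
        · rw [hz j hjt, hz' j hjt]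
        · exact le_antisymm (main p p' hF hle j hjt hjn)
            (main p' p hF.symm hle' j hjt hjn)
      · rw [hge j hjn, hge' j hjn]
    exact Subtype.ext (TD.eq_of_fb p p' (by omega) (by omega) hfb)
  have hsurj : Function.Surjective Φ := by
    rintro ⟨F, hF1, hF2⟩
    set a : ℕ → ℕ := fun j => sSup {i | (i, j + 1) ∈ F} with ha
    have hbdd : ∀ j, BddAbove {i | (i, j + 1) ∈ F} := by
      intro j
      refine ⟨n, fun i hi => ?_⟩
      have := hF1 _ hi
      exact le_trans (le_of_lt this.2.1) this.2.2.1
    have hmem : ∀ j, ({i | (i, j + 1) ∈ F}).Nonempty →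
        (a j, j + 1) ∈ F := by
      intro j hne
      exact Nat.sSup_mem hne (hbdd j)
    have hempty : ∀ j, ¬ ({i | (i, j + 1) ∈ F}).Nonempty → a j = 0 := by
      intro j hne
      rw [ha]
      simp only []
      rw [Set.not_nonempty_iff_eq_empty.mp hne]
      exact csSup_empty
    have hbound : ∀ j, a j ≤ j := by
      intro j
      by_cases hne : ({i | (i, j + 1) ∈ F}).Nonempty
      · have := hF1 _ (hmem j hne)
        have h2 := this.2.1
        omega
      · rw [hempty j hne]; omega
    have hmono : ∀ j, j + 1 < n → a j ≤ a (j + 1) := by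
      intro j hj
      by_cases hne : ({i | (i, j + 1) ∈ F}).Nonempty
      · have hm := hmem j hne
        have hmt := hF1 _ hm
        have h2 : (a j, j + 2) ∈ F := by
          refine hF2 _ hm (a j, j + 2) ⟨hmt.1, ?_, ?_, ?_⟩ le_rfl (by omega)
          · simp only []; have := hmt.2.1; omega
          · simp only []; omega
          · simp only []; have := hmt.2.2.2; omega
        exact le_csSup (hbdd (j + 1)) h2
      · rw [hempty j hne]; omega
    have hzero : ∀ j, j < t → a j = 0 := by
      intro j hj
      apply hempty
      rintro ⟨i, hi⟩
      have := hF1 _ hi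
      have := this.2.2.2
      omega
    have hprev : TD.prev a n ≤ n := by
      obtain ⟨m, rfl⟩ : ∃ m, n = m + 1 := ⟨n - 1, by omega⟩
      rw [TD.prev_succ]
      have := hbound m; omega
    set p := TD.pathOf a n with hp
    have hfbp : ∀ j, TD.fb p j = if j < n then a j else n :=
      TD.fb_pathOf a n hmono hprev
    have hct := TD.count_true_pathOf a n
    have hcf := TD.count_false_pathOf a n hmono hprev
    rw [← hp] at hct hcf
    have hdyck : IsDyckPath p := by
      constructor
      · rw [hct, hcf]
      · intro q hq
        have h1 := TD.count_false_prefix p q hq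
        have h2 : TD.fb p (q.count true) ≤ q.count true := by
          rw [hfbp]
          split
          · exact hbound _
          · omega
        omega
    have hlen : p.length = 2 * n := by
      have := TD.count_true_add_count_false p
      omega
    have hrep : List.replicate t true <+: p := by
      have h1 : TD.blocks a t = List.replicate t true :=
        TD.blocks_replicate a t hzero
      have h2 : TD.blocks a t <+: TD.blocks a n := TD.blocks_prefix a htn
      rw [← h1]
      exact h2.trans ⟨_, rfl⟩
    refine ⟨⟨p, hdyck, hlen, hrep⟩, ?_⟩
    apply Subtype.ext
    simp only [hΦ]
    ext x
    constructor
    · rintro ⟨hx, hfb⟩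
      have hx2 : x.2 - 1 < n := by have := hx.2.2.1; have := hx.2.1; omega
      rw [hfbp, if_pos hx2] at hfb
      have hx2' : x.2 - 1 + 1 = x.2 := by have := hx.2.1; omega
      have hne : ({i | (i, x.2 - 1 + 1) ∈ F}).Nonempty := by
        by_contra hne
        have := hempty _ hne
        rw [this] at hfb
        have := hx.1
        omega
      have hm := hmem _ hne
      rw [hx2'] at hm
      refine hF2 _ hm x hx ?_ le_rfl
      exact hfb
    · intro hxF
      have hx := hF1 _ hxF
      have hx2 : x.2 - 1 < n := by have := hx.2.2.1; have := hx.2.1; omega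
      have hx2' : x.2 - 1 + 1 = x.2 := by have := hx.2.1; omega
      refine ⟨hx, ?_⟩
      rw [hfbp, if_pos hx2]
      apply le_csSup (hbdd (x.2 - 1))
      show (x.1, x.2 - 1 + 1) ∈ F
      rw [hx2']
      exact hxF
  have e : Nonempty _ := ⟨Equiv.ofBijective Φ ⟨hinj, hsurj⟩⟩
  exact ⟨e, Nat.card_congr (Classical.choice e)⟩
end

section
/- For positive integers n,t with t ≤ n, the double sum ∑_{P ∈ D_{n,t}} x^{v(P)} y^{r(P)}, where D_{n,t} is the set of t-Dyck paths of length 2n, v(P) is the number of valleys of P, and r(P) is the number of valleys of P at height 0, equals ∑_{k=0}^{n−t} ∑_{h=0}^{n−t−k} [C(n−t+1,k)·C(t+k+h−2,h) − C(n−t,k−1)·C(t+k+h−1,h)] x^{n−t−k} y^{n−t−k−h}. -/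
/-- The step sequence of a path encoded as `f : Fin N → Bool`
(`true` = up-step, `false` = down-step), extended by `false` beyond `N`. -/
def stepAt {N : ℕ} (f : Fin N → Bool) : ℕ → Bool :=
  fun k => if h : k < N then f ⟨k, h⟩ else false

/-- The number of up-steps among the first `k` steps. -/
def upsBefore (g : ℕ → Bool) (k : ℕ) : ℕ :=
  ((Finset.range k).filter fun i => g i = true).card

/-- `f` encodes a Dyck path of length `N`: every prefix has at least as many
up-steps as down-steps, and up- and down-steps are equinumerous in total. -/
def IsDyckFun {N : ℕ} (f : Fin N → Bool) : Prop :=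
  (∀ k ≤ N, k ≤ 2 * upsBefore (stepAt f) k) ∧ 2 * upsBefore (stepAt f) N = N

instance {N : ℕ} (f : Fin N → Bool) : Decidable (IsDyckFun f) := by
  unfold IsDyckFun; infer_instance

/-- The number of valleys of the path `f` (points preceded by a down-step and
followed by an up-step). -/
def valleys {N : ℕ} (f : Fin N → Bool) : ℕ :=
  ((Finset.Ioo 0 N).filter fun k =>
    stepAt f (k - 1) = false ∧ stepAt f k = true).card

/-- The number of valleys of the path `f` at height `0`. -/
def zeroValleys {N : ℕ} (f : Fin N → Bool) : ℕ :=
  ((Finset.Ioo 0 N).filter fun k =>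
    stepAt f (k - 1) = false ∧ stepAt f k = true ∧
      2 * upsBefore (stepAt f) k = k).card

namespace HTri

def ifc (m k : ℕ) : ℚ := if k = 0 then 0 else (m.choose (k-1) : ℚ)

def coefA (m t k h : ℕ) : ℚ :=
  ((m+1).choose k : ℚ) * ((t+k+h-2).choose h) - ifc m k * ((t+k+h-1).choose h)

lemma pascalQ (a b : ℕ) : (((a+1).choose (b+1) : ℕ) : ℚ) = (a.choose b : ℚ) + (a.choose (b+1) : ℚ) := by
  rw [Nat.choose_succ_succ]; push_cast; ring

lemma choose_pred (a b : ℕ) : ((a+1).choose b : ℚ) = (a.choose b : ℚ) + ifc a b := by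
  cases b with
  | zero => simp [ifc]
  | succ b => rw [pascalQ, ifc]; simp [Nat.add_comm]; ring

lemma ifc_succ (m k : ℕ) : ifc m (k+1) = (m.choose k : ℚ) := by simp [ifc]

lemma coef_rec2 (m t k h : ℕ) (ht : 2 ≤ t) (hm : 1 ≤ m) (hk : k ≤ m) (hh : h ≤ m - k) :
    coefA m t k h =
      (if k = 0 then 0 else coefA (m-1) (t+1) (k-1) h) + coefA m (t-1) k h
        + (if h = 0 then 0 else coefA (m-1) t k (h-1))
        - (if k = 0 then 0 else coefA (m-1) t (k-1) h) := by
  obtain ⟨s, rfl⟩ : ∃ s, t = s + 2 := ⟨t - 2, by omega⟩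
  obtain ⟨m', rfl⟩ : ∃ m', m = m' + 1 := ⟨m - 1, by omega⟩
  rcases k with _ | k'
  · rcases h with _ | h'
    · simp only [coefA, ifc]; norm_num
    · simp only [coefA, ifc]
      norm_num
      rw [show s + 2 + (h' + 1) - 2 = s + h' + 1 from by omega,
          show s + 1 + (h' + 1) - 2 = s + h' from by omega,
          show s + 2 + h' - 2 = s + h' from by omega,
          pascalQ (s + h') h']
      ring
  · rcases h with _ | h'
    · simp only [coefA, ifc]; norm_num
    · simp only [coefA, ifc_succ, Nat.add_sub_cancel, Nat.succ_ne_zero, if_false]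
      rw [show s + 2 + (k' + 1) + (h' + 1) - 2 = s + k' + h' + 1 + 1 from by omega,
          show s + 2 + 1 + k' + (h' + 1) - 2 = s + k' + h' + 1 + 1 from by omega,
          show s + 2 - 1 + (k' + 1) + (h' + 1) - 1 = s + k' + h' + 1 + 1 from by omega,
          show s + 2 + k' + (h' + 1) - 1 = s + k' + h' + 1 + 1 from by omega,
          show s + 2 + (k' + 1) + (h' + 1) - 1 = s + k' + h' + 1 + 1 + 1 from by omega,
          show s + 2 + 1 + k' + (h' + 1) - 1 = s + k' + h' + 1 + 1 + 1 from by omega,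
          show s + 2 - 1 + (k' + 1) + (h' + 1) - 2 = s + k' + h' + 1 from by omega,
          show s + 2 + k' + (h' + 1) - 2 = s + k' + h' + 1 from by omega,
          show s + 2 + (k' + 1) + h' - 2 = s + k' + h' + 1 from by omega,
          show s + 2 + (k' + 1) + h' - 1 = s + k' + h' + 1 + 1 from by omega,
          pascalQ (s + k' + h' + 1 + 1) h',
          pascalQ (s + k' + h' + 1) h',
          pascalQ (m' + 1) k',
          choose_pred m' k']
      ring


lemma coef_one_vanish (M k h : ℕ) (hk : 1 ≤ k) (hkM : k ≤ M + 1) (hh : h = M + 1 - k) :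
    coefA M 1 k h = 0 := by
  obtain ⟨k'', rfl⟩ : ∃ k'', k = k'' + 1 := ⟨k - 1, by omega⟩
  subst hh
  simp only [coefA, ifc_succ]
  rw [show 1 + (k'' + 1) + (M + 1 - (k'' + 1)) - 2 = M from by omega,
      show 1 + (k'' + 1) + (M + 1 - (k'' + 1)) - 1 = M + 1 from by omega,
      show M + 1 - (k'' + 1) = M - k'' from by omega,
      show (M.choose (M - k'') : ℚ) = (M.choose k'' : ℚ) from by
        rw [Nat.choose_symm (by omega)],
      show ((M+1).choose (M - k'') : ℚ) = ((M+1).choose (k''+1) : ℚ) from by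
        rw [show M - k'' = M + 1 - (k''+1) from by omega, Nat.choose_symm (by omega)]]
  ring

lemma coef_rec1 (m k h : ℕ) (hm : 1 ≤ m) (hk : k ≤ m) (hh : h ≤ m - k) :
    coefA m 1 k h =
      (if k = 0 then 0 else coefA (m-1) 2 (k-1) h)
        + (if h + 1 ≤ m - k then coefA (m-1) 1 k h else 0) := by
  rcases k with _ | k'
  · rcases h with _ | h'
    · simp only [coefA, ifc]
      norm_num
      omega
    · have h1 : coefA m 1 0 (h'+1) = 0 := by
        simp only [coefA, ifc]
        norm_num
        rw [show 1 + 0 + (h' + 1) - 2 = h' from by omega]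
        simp [Nat.choose_eq_zero_of_lt]
      have h2 : coefA (m-1) 1 0 (h'+1) = 0 := by
        simp only [coefA, ifc]
        norm_num
        rw [show 1 + 0 + (h' + 1) - 2 = h' from by omega]
        simp [Nat.choose_eq_zero_of_lt]
      rw [h1, h2]
      simp
  · obtain ⟨m', rfl⟩ : ∃ m', m = m' + 1 := ⟨m - 1, by omega⟩
    have ID : coefA (m'+1) 1 (k'+1) h = coefA m' 2 k' h + coefA m' 1 (k'+1) h := by
      simp only [coefA, ifc_succ]
      rw [show 1 + (k' + 1) + h - 2 = k' + h from by omega,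
          show 1 + (k' + 1) + h - 1 = k' + h + 1 from by omega,
          show 2 + k' + h - 2 = k' + h from by omega,
          show 2 + k' + h - 1 = k' + h + 1 from by omega,
          pascalQ (m' + 1) k', choose_pred m' k']
      ring
    rw [ID]
    simp only [Nat.succ_ne_zero, if_false, Nat.add_sub_cancel]
    by_cases hcase : h + 1 ≤ m' + 1 - (k' + 1)
    · rw [if_pos hcase]
    · rw [if_neg hcase]
      have : h = m' + 1 - (k' + 1) := by omega
      rw [coef_one_vanish m' (k'+1) h (by omega) (by omega) (by omega)]


open Finset

/-- generic double sum over a square range -/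
def SS (M : ℕ) (c : ℕ → ℕ → ℚ) (x y : ℚ) : ℚ :=
  ∑ j ∈ range (M+1), ∑ i ∈ range (M+1), c j i * x^j * y^i

def cfun (m t : ℕ) : ℕ → ℕ → ℚ :=
  fun j i => if i ≤ j ∧ j ≤ m then coefA m t (m-j) (j-i) else 0

/-- the `H`-triangle double sum -/
def Rp (m t : ℕ) (x y : ℚ) : ℚ :=
  ∑ k ∈ range (m+1), ∑ h ∈ range (m-k+1), coefA m t k h * x^(m-k) * y^(m-k-h)

lemma Rp_zero (t : ℕ) (x y : ℚ) : Rp 0 t x y = 1 := by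
  simp [Rp, coefA, ifc]

lemma Rp_eq_SS (m t : ℕ) (x y : ℚ) : Rp m t x y = SS m (cfun m t) x y := by
  rw [Rp, SS, ← Finset.sum_range_reflect]
  refine Finset.sum_congr rfl fun j hj => ?_
  rw [Finset.mem_range] at hj
  rw [show m + 1 - 1 - j = m - j from by omega,
      show m - (m - j) = j from by omega]
  rw [← Finset.sum_range_reflect]
  have hsub : range (j+1) ⊆ range (m+1) := by
    apply Finset.range_subset_range.2; omega
  rw [← Finset.sum_subset hsub (fun i hi hni => ?_)]
  · refine Finset.sum_congr rfl fun i hi => ?_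
    rw [Finset.mem_range] at hi
    rw [show j + 1 - 1 - i = j - i from by omega,
        show j - (j - i) = i from by omega, cfun,
        if_pos ⟨by omega, by omega⟩]
  · rw [Finset.mem_range] at hi hni
    rw [cfun, if_neg (by omega)]
    ring

lemma SS_congr {M : ℕ} {c1 c2 : ℕ → ℕ → ℚ} (x y : ℚ)
    (h : ∀ j ≤ M, ∀ i ≤ M, c1 j i = c2 j i) : SS M c1 x y = SS M c2 x y := by
  refine Finset.sum_congr rfl fun j hj => Finset.sum_congr rfl fun i hi => ?_
  rw [Finset.mem_range] at hj hi
  rw [h j (by omega) i (by omega)]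

lemma SS_mono {M M' : ℕ} (c : ℕ → ℕ → ℚ) (x y : ℚ) (hM : M' ≤ M)
    (hz : ∀ j i, (M' < j ∨ M' < i) → c j i = 0) : SS M c x y = SS M' c x y := by
  have hsub : range (M'+1) ⊆ range (M+1) := Finset.range_subset_range.2 (by omega)
  rw [SS, SS, ← Finset.sum_subset hsub (fun j hj hnj => ?_)]
  · refine Finset.sum_congr rfl fun j hj => ?_
    rw [← Finset.sum_subset hsub (fun i hi hni => ?_)]
    rw [Finset.mem_range] at hi hni
    rw [hz j i (Or.inr (by omega))]; ring
  · rw [Finset.mem_range] at hj hnj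
    apply Finset.sum_eq_zero
    intro i _
    rw [hz j i (Or.inl (by omega))]; ring

lemma SS_add (M : ℕ) (c1 c2 : ℕ → ℕ → ℚ) (x y : ℚ) :
    SS M c1 x y + SS M c2 x y = SS M (fun j i => c1 j i + c2 j i) x y := by
  rw [SS, SS, SS, ← Finset.sum_add_distrib]
  refine Finset.sum_congr rfl fun j _ => ?_
  rw [← Finset.sum_add_distrib]
  refine Finset.sum_congr rfl fun i _ => ?_
  ring

lemma SS_sub (M : ℕ) (c1 c2 : ℕ → ℕ → ℚ) (x y : ℚ) :
    SS M c1 x y - SS M c2 x y = SS M (fun j i => c1 j i - c2 j i) x y := by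
  rw [SS, SS, SS, ← Finset.sum_sub_distrib]
  refine Finset.sum_congr rfl fun j _ => ?_
  rw [← Finset.sum_sub_distrib]
  refine Finset.sum_congr rfl fun i _ => ?_
  ring

lemma SS_shiftx (M : ℕ) (c : ℕ → ℕ → ℚ) (x y : ℚ) (hz : ∀ j i, M < i → c j i = 0) :
    x * SS M c x y = SS (M+1) (fun j i => if j = 0 then 0 else c (j-1) i) x y := by
  rw [SS, SS, Finset.sum_range_succ' (n := M+1)]
  have h0 : (∑ i ∈ range (M+1+1), (if (0:ℕ) = 0 then (0:ℚ) else c (0-1) i) * x^0 * y^i) = 0 := by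
    apply Finset.sum_eq_zero; intro i _; rw [if_pos rfl]; ring
  rw [h0, add_zero, Finset.mul_sum]
  refine Finset.sum_congr rfl fun j _ => ?_
  have hne : ¬(j + 1 = 0) := by omega
  have hsub : range (M+1) ⊆ range (M+1+1) := Finset.range_subset_range.2 (by omega)
  rw [← Finset.sum_subset hsub (fun i hi hni => ?_), Finset.mul_sum]
  · refine Finset.sum_congr rfl fun i _ => ?_
    rw [if_neg hne]
    simp only [Nat.add_sub_cancel]
    ring
  · rw [Finset.mem_range] at hi hni
    rw [if_neg hne]
    simp only [Nat.add_sub_cancel]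
    rw [hz j i (by omega)]; ring

lemma SS_shiftxy (M : ℕ) (c : ℕ → ℕ → ℚ) (x y : ℚ) :
    x * (y * SS M c x y) = SS (M+1) (fun j i => if j = 0 ∨ i = 0 then 0 else c (j-1) (i-1)) x y := by
  rw [SS, SS, Finset.sum_range_succ' (n := M+1)]
  have h0 : (∑ i ∈ range (M+1+1),
      (if (0:ℕ) = 0 ∨ i = 0 then (0:ℚ) else c (0-1) (i-1)) * x^0 * y^i) = 0 := by
    apply Finset.sum_eq_zero; intro i _
    rw [if_pos (Or.inl rfl)]; ring
  rw [h0, add_zero, Finset.mul_sum, Finset.mul_sum]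
  refine Finset.sum_congr rfl fun j _ => ?_
  rw [Finset.sum_range_succ' (n := M+1)]
  have h1 : (if j + 1 = 0 ∨ (0:ℕ) = 0 then (0:ℚ) else c (j+1-1) (0-1)) * x^(j+1) * y^0 = 0 := by
    rw [if_pos (Or.inr rfl)]; ring
  rw [h1, add_zero, Finset.mul_sum, Finset.mul_sum]
  refine Finset.sum_congr rfl fun i _ => ?_
  have : ¬(j + 1 = 0 ∨ i + 1 = 0) := by omega
  rw [if_neg this]
  simp only [Nat.add_sub_cancel]
  ring


lemma cfun_out {m t : ℕ} (j i : ℕ) (h : m < j ∨ m < i) : cfun m t j i = 0 := by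
  rcases h with h | h
  · rw [cfun, if_neg (by omega)]
  · rw [cfun]
    by_cases hij : i ≤ j ∧ j ≤ m
    · omega
    · rw [if_neg hij]

lemma Rp_rec2 (m t : ℕ) (ht : 2 ≤ t) (hm : 1 ≤ m) (x y : ℚ) :
    Rp m t x y = Rp (m-1) (t+1) x y + Rp m (t-1) x y + (x - 1) * Rp (m-1) t x y := by
  obtain ⟨m', rfl⟩ : ∃ m', m = m' + 1 := ⟨m - 1, by omega⟩
  simp only [Nat.add_sub_cancel]
  rw [sub_mul, one_mul]
  rw [Rp_eq_SS, Rp_eq_SS, Rp_eq_SS, Rp_eq_SS]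
  rw [SS_mono (M := m'+1) (cfun m' (t+1)) x y (by omega) (fun j i h => cfun_out j i h) |>.symm]
  rw [SS_shiftx m' (cfun m' t) x y (fun j i h => cfun_out j i (Or.inr h))]
  rw [SS_mono (M := m'+1) (cfun m' t) x y (by omega) (fun j i h => cfun_out j i h) |>.symm]
  rw [SS_mono (M := m'+1) (fun j i => if j = 0 then 0 else cfun m' t (j-1) i) x y (by omega)
    (fun j i h => by
      show (if j = 0 then (0:ℚ) else cfun m' t (j-1) i) = 0
      rcases Nat.eq_zero_or_pos j with hj | hj
      · rw [hj]; simp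
      · rw [if_neg (by omega)]
        apply cfun_out
        omega) |>.symm]
  rw [SS_add, SS_sub, SS_add]
  apply SS_congr
  intro j hj i hi
  by_cases hij : i ≤ j
  · have key := coef_rec2 (m'+1) t (m'+1-j) (j-i) ht (by omega) (by omega) (by omega)
    have T0 : cfun (m'+1) t j i = coefA (m'+1) t (m'+1-j) (j-i) := by
      rw [cfun, if_pos ⟨hij, hj⟩]
    have T1 : (if m'+1-j = 0 then (0:ℚ) else coefA (m'+1-1) (t+1) (m'+1-j-1) (j-i))
        = cfun m' (t+1) j i := by
      by_cases hjm : j ≤ m'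
      · rw [if_neg (by omega), cfun, if_pos ⟨hij, hjm⟩]
        congr 1 <;> omega
      · rw [if_pos (by omega), cfun, if_neg (by omega)]
    have T2 : coefA (m'+1) (t-1) (m'+1-j) (j-i) = cfun (m'+1) (t-1) j i := by
      rw [cfun, if_pos ⟨hij, hj⟩]
    have T3 : (if j-i = 0 then (0:ℚ) else coefA (m'+1-1) t (m'+1-j) (j-i-1))
        = (if j = 0 then 0 else cfun m' t (j-1) i) := by
      by_cases hieq : j - i = 0
      · rw [if_pos hieq]
        rcases Nat.eq_zero_or_pos j with hj0 | hj0
        · rw [if_pos hj0]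
        · rw [if_neg (by omega), cfun, if_neg (by omega)]
      · rw [if_neg hieq, if_neg (by omega), cfun, if_pos ⟨by omega, by omega⟩]
        congr 1 <;> omega
    have T4 : (if m'+1-j = 0 then (0:ℚ) else coefA (m'+1-1) t (m'+1-j-1) (j-i))
        = cfun m' t j i := by
      by_cases hjm : j ≤ m'
      · rw [if_neg (by omega), cfun, if_pos ⟨hij, hjm⟩]
        congr 1 <;> omega
      · rw [if_pos (by omega), cfun, if_neg (by omega)]
    rw [T0, key, T1, T2, T3, T4]
    ring
  · have e0 : ∀ M T : ℕ, cfun M T j i = 0 := fun M T => by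
      rw [cfun, if_neg (by omega)]
    have e1 : (if j = 0 then (0:ℚ) else cfun m' t (j-1) i) = 0 := by
      rcases Nat.eq_zero_or_pos j with hj0 | hj0
      · rw [if_pos hj0]
      · rw [if_neg (by omega), cfun, if_neg (by omega)]
    simp only [e0, e1]
    ring

lemma Rp_rec1 (m : ℕ) (hm : 1 ≤ m) (x y : ℚ) :
    Rp m 1 x y = Rp (m-1) 2 x y + x * (y * Rp (m-1) 1 x y) := by
  obtain ⟨m', rfl⟩ : ∃ m', m = m' + 1 := ⟨m - 1, by omega⟩
  simp only [Nat.add_sub_cancel]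
  rw [Rp_eq_SS, Rp_eq_SS, Rp_eq_SS]
  rw [SS_mono (M := m'+1) (cfun m' 2) x y (by omega) (fun j i h => cfun_out j i h) |>.symm]
  rw [SS_shiftxy m' (cfun m' 1) x y]
  rw [SS_add]
  apply SS_congr
  intro j hj i hi
  by_cases hij : i ≤ j
  · have key := coef_rec1 (m'+1) (m'+1-j) (j-i) (by omega) (by omega) (by omega)
    have T0 : cfun (m'+1) 1 j i = coefA (m'+1) 1 (m'+1-j) (j-i) := by
      rw [cfun, if_pos ⟨hij, hj⟩]
    have T1 : (if m'+1-j = 0 then (0:ℚ) else coefA (m'+1-1) 2 (m'+1-j-1) (j-i))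
        = cfun m' 2 j i := by
      by_cases hjm : j ≤ m'
      · rw [if_neg (by omega), cfun, if_pos ⟨hij, hjm⟩]
        congr 1 <;> omega
      · rw [if_pos (by omega), cfun, if_neg (by omega)]
    have T2 : (if j-i+1 ≤ m'+1-(m'+1-j) then coefA (m'+1-1) 1 (m'+1-j) (j-i) else (0:ℚ))
        = (if j = 0 ∨ i = 0 then 0 else cfun m' 1 (j-1) (i-1)) := by
      by_cases hi0 : 1 ≤ i
      · have hcond : j-i+1 ≤ m'+1-(m'+1-j) := by omega
        have hng : ¬(j = 0 ∨ i = 0) := by omega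
        rw [if_pos hcond, if_neg hng, cfun,
            if_pos (show i-1 ≤ j-1 ∧ j-1 ≤ m' from by omega)]
        congr 1 <;> omega
      · rw [if_neg (show ¬(j-i+1 ≤ m'+1-(m'+1-j)) from by omega),
            if_pos (show j = 0 ∨ i = 0 from by omega)]
    rw [T0, key, T1, T2]
  · have e0 : ∀ M T : ℕ, cfun M T j i = 0 := fun M T => by
      rw [cfun, if_neg (by omega)]
    have e1 : (if j = 0 ∨ i = 0 then (0:ℚ) else cfun m' 1 (j-1) (i-1)) = 0 := by
      by_cases hj0 : j = 0 ∨ i = 0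
      · rw [if_pos hj0]
      · rw [if_neg hj0, cfun, if_neg (by omega)]
    simp only [e0, e1]
    ring



open Finset

lemma stepAt_lt {N : ℕ} (f : Fin N → Bool) {k : ℕ} (h : k < N) : stepAt f k = f ⟨k, h⟩ :=
  dif_pos h

lemma stepAt_ge {N : ℕ} (f : Fin N → Bool) {k : ℕ} (h : N ≤ k) : stepAt f k = false :=
  dif_neg (by omega)

lemma upsBefore_zero (g : ℕ → Bool) : upsBefore g 0 = 0 := by
  simp [upsBefore]

lemma upsBefore_succ (g : ℕ → Bool) (k : ℕ) :
    upsBefore g (k+1) = upsBefore g k + (if g k then 1 else 0) := by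
  rw [upsBefore, upsBefore, Finset.range_add_one, Finset.filter_insert]
  by_cases h : g k = true
  · rw [if_pos h, Finset.card_insert_of_notMem (by simp), if_pos h]
  · rw [if_neg h, if_neg (by simpa using h), add_zero]

lemma upsBefore_prefix (g : ℕ → Bool) (t : ℕ) (hpre : ∀ i < t, g i = true) :
    ∀ k ≤ t, upsBefore g k = k := by
  intro k hk
  induction k with
  | zero => exact upsBefore_zero g
  | succ k ihk =>
    rw [upsBefore_succ, ihk (by omega), if_pos (hpre k (by omega))]

/-- the set of `t`-Dyck paths of length `2n` -/
def Dset (n t : ℕ) : Finset (Fin (2*n) → Bool) :=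
  Finset.univ.filter (fun f : Fin (2 * n) → Bool =>
    IsDyckFun f ∧ ∀ i : Fin (2 * n), (i : ℕ) < t → f i = true)

def Lp (n t : ℕ) (x y : ℚ) : ℚ := ∑ f ∈ Dset n t, x ^ valleys f * y ^ zeroValleys f

lemma mem_Dset {n t : ℕ} {f : Fin (2*n) → Bool} :
    f ∈ Dset n t ↔ IsDyckFun f ∧ ∀ i : Fin (2 * n), (i : ℕ) < t → f i = true := by
  simp [Dset]

lemma Dset_prefix {n t : ℕ} {f : Fin (2*n) → Bool} (hf : f ∈ Dset n t) :
    ∀ i < t, i < 2*n → stepAt f i = true := by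
  intro i hit hin
  rw [stepAt_lt f hin]
  exact (mem_Dset.1 hf).2 _ hit

lemma Dyck_first {n : ℕ} (hn : 1 ≤ n) {f : Fin (2*n) → Bool} (hf : IsDyckFun f) :
    stepAt f 0 = true := by
  have h1 := hf.1 1 (by omega)
  rw [upsBefore_succ, upsBefore_zero] at h1
  by_cases h : stepAt f 0 = true
  · exact h
  · rw [if_neg h] at h1; omega

lemma Dset_zero_one {n : ℕ} (hn : 1 ≤ n) : Dset n 0 = Dset n 1 := by
  ext f
  rw [mem_Dset, mem_Dset]
  constructor
  · rintro ⟨hd, -⟩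
    refine ⟨hd, fun i hi => ?_⟩
    have h0 : (i : ℕ) = 0 := by omega
    have := Dyck_first hn hd
    rw [stepAt_lt f (by omega : (0:ℕ) < 2*n)] at this
    convert this using 2
    exact Fin.ext h0
  · rintro ⟨hd, -⟩
    exact ⟨hd, fun i hi => by omega⟩

lemma Dset_succ_filter {n t : ℕ} (h : t < 2*n) :
    (Dset n t).filter (fun f => stepAt f t = true) = Dset n (t+1) := by
  ext f
  rw [Finset.mem_filter, mem_Dset, mem_Dset]
  constructor
  · rintro ⟨⟨hd, hpre⟩, hstep⟩
    refine ⟨hd, fun i hi => ?_⟩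
    rcases Nat.lt_or_ge (i : ℕ) t with h' | h'
    · exact hpre i h'
    · have : (i : ℕ) = t := by omega
      rw [stepAt_lt f h] at hstep
      convert hstep using 2
      exact Fin.ext this
  · rintro ⟨hd, hpre⟩
    refine ⟨⟨hd, fun i hi => hpre i (by omega)⟩, ?_⟩
    rw [stepAt_lt f h]
    exact hpre ⟨t, h⟩ (by simp)


/-- insert `UD` at position `t-1`..`t` -/
def insF (n t : ℕ) (g : Fin (2*n) → Bool) : Fin (2*(n+1)) → Bool :=
  fun i => if (i : ℕ) < t then true else if (i : ℕ) = t then false else stepAt g ((i : ℕ) - 2)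

def delF (n t : ℕ) (f : Fin (2*(n+1)) → Bool) : Fin (2*n) → Bool :=
  fun i => if (i : ℕ) + 1 < t then true else stepAt f ((i : ℕ) + 2)

section InsDel

variable {n t : ℕ}

lemma stepAt_insF_lt (htn : t ≤ n) (g : Fin (2*n) → Bool) {k : ℕ} (hk : k < t) :
    stepAt (insF n t g) k = true := by
  rw [stepAt_lt _ (by omega : k < 2*(n+1))]
  simp only [insF]
  rw [if_pos hk]

lemma stepAt_insF_eq (htn : t ≤ n) (g : Fin (2*n) → Bool) : stepAt (insF n t g) t = false := by
  rw [stepAt_lt _ (by omega : t < 2*(n+1))]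
  simp only [insF]
  rw [if_neg (by omega)]
  simp

lemma stepAt_insF_ge (htn : t ≤ n) (g : Fin (2*n) → Bool) {k : ℕ} (hk : t + 1 ≤ k) :
    stepAt (insF n t g) k = stepAt g (k - 2) := by
  rcases Nat.lt_or_ge k (2*(n+1)) with h | h
  · rw [stepAt_lt _ h]
    simp only [insF]
    rw [if_neg (by omega), if_neg (by omega)]
  · rw [stepAt_ge _ h, stepAt_ge _ (by omega)]

lemma ups_insF_le (htn : t ≤ n) (g : Fin (2*n) → Bool) {k : ℕ} (hk : k ≤ t) :
    upsBefore (stepAt (insF n t g)) k = k :=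
  upsBefore_prefix _ t (fun i hi => stepAt_insF_lt htn g hi) k hk

lemma ups_insF_ge (ht1 : 1 ≤ t) (htn : t ≤ n) (g : Fin (2*n) → Bool)
    (hg : ∀ i, i + 1 < t → stepAt g i = true) (d : ℕ) :
    upsBefore (stepAt (insF n t g)) (t+1+d) = upsBefore (stepAt g) (t-1+d) + 1 := by
  induction d with
  | zero =>
    rw [show t + 1 + 0 = t + 1 from rfl, upsBefore_succ, ups_insF_le htn g (le_refl t),
        if_neg (by simp [stepAt_insF_eq htn g]), add_zero,
        upsBefore_prefix (stepAt g) (t-1) (fun i hi => hg i (by omega)) (t-1+0) (by omega)]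
    omega
  | succ d ihd =>
    rw [show t + 1 + (d + 1) = (t+1+d) + 1 from by omega, upsBefore_succ, ihd,
        show t - 1 + (d + 1) = (t-1+d) + 1 from by omega, upsBefore_succ,
        stepAt_insF_ge htn g (by omega : t + 1 ≤ t+1+d),
        show t + 1 + d - 2 = t - 1 + d from by omega]
    ring

lemma isDyck_insF (ht1 : 1 ≤ t) (htn : t ≤ n) (g : Fin (2*n) → Bool)
    (hg : ∀ i, i + 1 < t → stepAt g i = true)
    (hd : IsDyckFun g) : IsDyckFun (insF n t g) := by
  constructor
  · intro k hk
    rcases le_or_gt k t with h | h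
    · rw [ups_insF_le htn g h]; omega
    · obtain ⟨d, rfl⟩ : ∃ d, k = t + 1 + d := ⟨k - t - 1, by omega⟩
      rw [ups_insF_ge ht1 htn g hg d]
      have := hd.1 (t - 1 + d) (by omega)
      omega
  · have h1 := ups_insF_ge ht1 htn g hg (2*n + 1 - t)
    rw [show t + 1 + (2*n + 1 - t) = 2*(n+1) from by omega,
        show t - 1 + (2*n + 1 - t) = 2*n from by omega] at h1
    have := hd.2
    omega

lemma insF_mem (ht1 : 1 ≤ t) (htn : t ≤ n) (g : Fin (2*n) → Bool) (hg : g ∈ Dset n (t-1)) :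
    insF n t g ∈ (Dset (n+1) t).filter (fun f => ¬ (stepAt f t = true)) := by
  have hpre : ∀ i, i + 1 < t → stepAt g i = true :=
    fun i hi => Dset_prefix hg i (by omega) (by omega)
  rw [Finset.mem_filter, mem_Dset]
  refine ⟨⟨isDyck_insF ht1 htn g hpre (mem_Dset.1 hg).1, fun i hi => ?_⟩, ?_⟩
  · simp only [insF]
    rw [if_pos hi]
  · rw [stepAt_insF_eq htn g]; simp

lemma insF_delF (ht1 : 1 ≤ t) (htn : t ≤ n) (f : Fin (2*(n+1)) → Bool)
    (hf : f ∈ (Dset (n+1) t).filter (fun f => ¬ (stepAt f t = true))) :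
    insF n t (delF n t f) = f := by
  obtain ⟨hmem, hstep⟩ := Finset.mem_filter.1 hf
  funext i
  rcases Nat.lt_or_ge (i : ℕ) t with h | h
  · simp only [insF]
    rw [if_pos h]
    exact ((mem_Dset.1 hmem).2 i h).symm
  · rcases Nat.eq_or_lt_of_le h with h' | h'
    · simp only [insF]
      rw [if_neg (by omega), if_pos h'.symm]
      have hq : stepAt f t = false := by
        revert hstep; cases hq : stepAt f t <;> simp
      rw [stepAt_lt f (by omega : t < 2*(n+1))] at hq
      rw [← hq]
      congr 1
      exact Fin.ext (by simp; omega)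
    · simp only [insF]
      rw [if_neg (by omega), if_neg (by omega)]
      have hlt : (i : ℕ) - 2 < 2*n := by omega
      rw [stepAt_lt _ hlt]
      simp only [delF]
      rw [if_neg (by omega), show (i:ℕ) - 2 + 2 = (i:ℕ) from by omega, stepAt_lt f i.2]

lemma delF_insF (ht1 : 1 ≤ t) (htn : t ≤ n) (g : Fin (2*n) → Bool) (hg : g ∈ Dset n (t-1)) :
    delF n t (insF n t g) = g := by
  funext i
  rcases Nat.lt_or_ge ((i : ℕ) + 1) t with h | h
  · simp only [delF]
    rw [if_pos h]
    exact ((mem_Dset.1 hg).2 i (by omega)).symm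
  · simp only [delF]
    rw [if_neg (by omega), stepAt_insF_ge htn g (by omega),
        show (i:ℕ) + 2 - 2 = (i:ℕ) from by omega, stepAt_lt g i.2]

lemma delF_mem (ht1 : 1 ≤ t) (htn : t ≤ n) (f : Fin (2*(n+1)) → Bool)
    (hf : f ∈ (Dset (n+1) t).filter (fun f => ¬ (stepAt f t = true))) :
    delF n t f ∈ Dset n (t-1) := by
  obtain ⟨hmem, -⟩ := Finset.mem_filter.1 hf
  have hpre : ∀ i, i + 1 < t → stepAt (delF n t f) i = true := by
    intro i hi
    rcases Nat.lt_or_ge i (2*n) with h | h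
    · rw [stepAt_lt _ h]
      simp only [delF]
      rw [if_pos hi]
    · omega
  have hins : insF n t (delF n t f) = f := insF_delF ht1 htn f hf
  have hups : ∀ d, upsBefore (stepAt f) (t+1+d) = upsBefore (stepAt (delF n t f)) (t-1+d) + 1 := by
    intro d
    conv_lhs => rw [← hins]
    exact ups_insF_ge ht1 htn _ hpre d
  rw [mem_Dset]
  refine ⟨⟨?_, ?_⟩, fun i hi => ?_⟩
  · intro k hk
    rcases le_or_gt k (t-1) with h | h
    · rw [upsBefore_prefix _ (t-1) (fun i hi => hpre i (by omega)) k h]; omega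
    · obtain ⟨d, rfl⟩ : ∃ d, k = t - 1 + d := ⟨k - (t-1), by omega⟩
      have h1 := hups d
      have h2 := (mem_Dset.1 hmem).1.1 (t+1+d) (by omega)
      omega
  · have h1 := hups (2*n + 1 - t)
    have h2 := (mem_Dset.1 hmem).1.2
    rw [show t + 1 + (2*n + 1 - t) = 2*(n+1) from by omega,
        show t - 1 + (2*n + 1 - t) = 2*n from by omega] at h1
    omega
  · simp only [delF]
    rw [if_pos (by omega)]

end InsDel


section Valleys

variable {n t : ℕ}

lemma Ioo_zero_eq_Ico (N : ℕ) : Finset.Ioo 0 N = Finset.Ico 1 N := by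
  ext a
  simp only [Finset.mem_Ioo, Finset.mem_Ico]
  omega

lemma valleys_eq_sum {N : ℕ} (f : Fin N → Bool) :
    valleys f = ∑ k ∈ Finset.Ico 1 N,
      (if stepAt f (k - 1) = false ∧ stepAt f k = true then 1 else 0) := by
  rw [valleys, Ioo_zero_eq_Ico, Finset.card_filter]

lemma zeroValleys_eq_sum {N : ℕ} (f : Fin N → Bool) :
    zeroValleys f = ∑ k ∈ Finset.Ico 1 N,
      (if stepAt f (k - 1) = false ∧ stepAt f k = true ∧
          2 * upsBefore (stepAt f) k = k then 1 else 0) := by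
  rw [zeroValleys, Ioo_zero_eq_Ico, Finset.card_filter]

lemma Ico_singl (a : ℕ) : Finset.Ico a (a+1) = {a} := by
  ext b
  simp only [Finset.mem_Ico, Finset.mem_singleton]
  omega

lemma valleys_insF (ht1 : 1 ≤ t) (htn : t ≤ n) (g : Fin (2*n) → Bool)
    (hg : ∀ i, i + 1 < t → stepAt g i = true) :
    valleys (insF n t g) = valleys g + (if stepAt g (t-1) = true then 1 else 0) := by
  rw [valleys_eq_sum, valleys_eq_sum]
  rw [← Finset.sum_Ico_consecutive _ (by omega : 1 ≤ t+1) (by omega : t+1 ≤ 2*(n+1))]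
  rw [← Finset.sum_Ico_consecutive _ (by omega : t+1 ≤ t+2) (by omega : t+2 ≤ 2*(n+1))]
  rw [← Finset.sum_Ico_consecutive _ (by omega : 1 ≤ t) (by omega : t ≤ 2*n)]
  have low_ins : ∑ k ∈ Finset.Ico 1 (t+1),
      (if stepAt (insF n t g) (k - 1) = false ∧ stepAt (insF n t g) k = true then 1 else 0) = 0 := by
    apply Finset.sum_eq_zero
    intro k hk
    rw [Finset.mem_Ico] at hk
    rw [if_neg]
    rw [stepAt_insF_lt htn g (by omega : k - 1 < t)]
    simp
  have low_g : ∑ k ∈ Finset.Ico 1 t,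
      (if stepAt g (k - 1) = false ∧ stepAt g k = true then 1 else 0) = 0 := by
    apply Finset.sum_eq_zero
    intro k hk
    rw [Finset.mem_Ico] at hk
    rw [if_neg]
    rw [hg (k-1) (by omega)]
    simp
  have mid : ∑ k ∈ Finset.Ico (t+1) (t+2),
      (if stepAt (insF n t g) (k - 1) = false ∧ stepAt (insF n t g) k = true then 1 else 0)
      = (if stepAt g (t-1) = true then 1 else 0) := by
    rw [Ico_singl, Finset.sum_singleton, show t + 1 - 1 = t from by omega,
        stepAt_insF_eq htn g, stepAt_insF_ge htn g (by omega : t + 1 ≤ t + 1),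
        show t + 1 - 2 = t - 1 from by omega]
    simp
  have high : ∑ k ∈ Finset.Ico (t+2) (2*(n+1)),
      (if stepAt (insF n t g) (k - 1) = false ∧ stepAt (insF n t g) k = true then 1 else 0)
      = ∑ k ∈ Finset.Ico t (2*n),
      (if stepAt g (k - 1) = false ∧ stepAt g k = true then 1 else 0) := by
    rw [Finset.sum_Ico_eq_sum_range, Finset.sum_Ico_eq_sum_range,
        show 2*(n+1) - (t+2) = 2*n - t from by omega]
    apply Finset.sum_congr rfl
    intro k hk
    rw [show t + 2 + k - 1 = t + 1 + k from by omega,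
        stepAt_insF_ge htn g (by omega : t + 1 ≤ t + 1 + k),
        stepAt_insF_ge htn g (by omega : t + 1 ≤ t + 2 + k),
        show t + 1 + k - 2 = t + k - 1 from by omega,
        show t + 2 + k - 2 = t + k from by omega]
  rw [low_ins, low_g, mid, high]
  ring

lemma zeroValleys_insF (ht1 : 1 ≤ t) (htn : t ≤ n) (g : Fin (2*n) → Bool)
    (hg : ∀ i, i + 1 < t → stepAt g i = true) :
    zeroValleys (insF n t g)
      = zeroValleys g + (if t = 1 ∧ stepAt g (t-1) = true then 1 else 0) := by
  rw [zeroValleys_eq_sum, zeroValleys_eq_sum]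
  rw [← Finset.sum_Ico_consecutive _ (by omega : 1 ≤ t+1) (by omega : t+1 ≤ 2*(n+1))]
  rw [← Finset.sum_Ico_consecutive _ (by omega : t+1 ≤ t+2) (by omega : t+2 ≤ 2*(n+1))]
  rw [← Finset.sum_Ico_consecutive _ (by omega : 1 ≤ t) (by omega : t ≤ 2*n)]
  have low_ins : ∑ k ∈ Finset.Ico 1 (t+1),
      (if stepAt (insF n t g) (k - 1) = false ∧ stepAt (insF n t g) k = true ∧
          2 * upsBefore (stepAt (insF n t g)) k = k then 1 else 0) = 0 := by
    apply Finset.sum_eq_zero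
    intro k hk
    rw [Finset.mem_Ico] at hk
    rw [if_neg]
    rw [stepAt_insF_lt htn g (by omega : k - 1 < t)]
    simp
  have low_g : ∑ k ∈ Finset.Ico 1 t,
      (if stepAt g (k - 1) = false ∧ stepAt g k = true ∧
          2 * upsBefore (stepAt g) k = k then 1 else 0) = 0 := by
    apply Finset.sum_eq_zero
    intro k hk
    rw [Finset.mem_Ico] at hk
    rw [if_neg]
    rw [hg (k-1) (by omega)]
    simp
  have hupsmid : upsBefore (stepAt (insF n t g)) (t+1) = t := by
    have := ups_insF_ge ht1 htn g hg 0
    rw [show t + 1 + 0 = t + 1 from rfl] at this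
    rw [this, upsBefore_prefix (stepAt g) (t-1) (fun i hi => hg i (by omega)) (t-1+0) (by omega)]
    omega
  have mid : ∑ k ∈ Finset.Ico (t+1) (t+2),
      (if stepAt (insF n t g) (k - 1) = false ∧ stepAt (insF n t g) k = true ∧
          2 * upsBefore (stepAt (insF n t g)) k = k then 1 else 0)
      = (if t = 1 ∧ stepAt g (t-1) = true then 1 else 0) := by
    rw [Ico_singl, Finset.sum_singleton, show t + 1 - 1 = t from by omega,
        stepAt_insF_eq htn g, stepAt_insF_ge htn g (by omega : t + 1 ≤ t + 1),
        show t + 1 - 2 = t - 1 from by omega, hupsmid]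
    by_cases hb : stepAt g (t-1) = true
    · by_cases h1 : t = 1
      · rw [if_pos ⟨rfl, hb, by omega⟩, if_pos ⟨h1, hb⟩]
      · rw [if_neg (by simp [hb]; omega), if_neg (by simp [h1])]
    · rw [if_neg (by simp [hb]), if_neg (by simp [hb])]
  have high : ∑ k ∈ Finset.Ico (t+2) (2*(n+1)),
      (if stepAt (insF n t g) (k - 1) = false ∧ stepAt (insF n t g) k = true ∧
          2 * upsBefore (stepAt (insF n t g)) k = k then 1 else 0)
      = ∑ k ∈ Finset.Ico t (2*n),
      (if stepAt g (k - 1) = false ∧ stepAt g k = true ∧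
          2 * upsBefore (stepAt g) k = k then 1 else 0) := by
    rw [Finset.sum_Ico_eq_sum_range, Finset.sum_Ico_eq_sum_range,
        show 2*(n+1) - (t+2) = 2*n - t from by omega]
    apply Finset.sum_congr rfl
    intro k hk
    have hups : upsBefore (stepAt (insF n t g)) (t+2+k) = upsBefore (stepAt g) (t+k) + 1 := by
      have := ups_insF_ge ht1 htn g hg (k+1)
      rw [show t + 1 + (k + 1) = t + 2 + k from by omega,
          show t - 1 + (k + 1) = t + k from by omega] at this
      exact this
    rw [show t + 2 + k - 1 = t + 1 + k from by omega,
        stepAt_insF_ge htn g (by omega : t + 1 ≤ t + 1 + k),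
        stepAt_insF_ge htn g (by omega : t + 1 ≤ t + 2 + k),
        show t + 1 + k - 2 = t + k - 1 from by omega,
        show t + 2 + k - 2 = t + k from by omega, hups]
    have : (2 * (upsBefore (stepAt g) (t+k) + 1) = t + 2 + k)
        ↔ (2 * upsBefore (stepAt g) (t+k) = t + k) := by omega
    simp only [this]
  rw [low_ins, low_g, mid, high]
  ring

end Valleys


section Recursion

variable {n t : ℕ}

lemma down_sum (ht1 : 1 ≤ t) (htn : t ≤ n) (x y : ℚ) :
    ∑ f ∈ (Dset (n+1) t).filter (fun f => ¬ (stepAt f t = true)),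
      x ^ valleys f * y ^ zeroValleys f
    = ∑ g ∈ Dset n (t-1), x ^ valleys g * y ^ zeroValleys g *
        (if stepAt g (t-1) = true then x * (if t = 1 then y else 1) else 1) := by
  refine Finset.sum_nbij' (delF n t) (insF n t)
    (fun f hf => delF_mem ht1 htn f hf) (fun g hg => insF_mem ht1 htn g hg)
    (fun f hf => insF_delF ht1 htn f hf) (fun g hg => delF_insF ht1 htn g hg)
    (fun f hf => ?_)
  have hmem := delF_mem ht1 htn f hf
  have hpre : ∀ i, i + 1 < t → stepAt (delF n t f) i = true :=
    fun i hi => Dset_prefix hmem i (by omega) (by omega)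
  have hv : valleys f = valleys (delF n t f)
      + (if stepAt (delF n t f) (t-1) = true then 1 else 0) := by
    conv_lhs => rw [← insF_delF ht1 htn f hf]
    exact valleys_insF ht1 htn _ hpre
  have hz : zeroValleys f = zeroValleys (delF n t f)
      + (if t = 1 ∧ stepAt (delF n t f) (t-1) = true then 1 else 0) := by
    conv_lhs => rw [← insF_delF ht1 htn f hf]
    exact zeroValleys_insF ht1 htn _ hpre
  rw [hv, hz, pow_add, pow_add]
  by_cases hb : stepAt (delF n t f) (t-1) = true
  · rw [if_pos hb, if_pos hb]
    by_cases h1 : t = 1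
    · rw [if_pos ⟨h1, hb⟩, if_pos h1]
      ring
    · rw [if_neg (by simp [h1]), if_neg h1]
      ring
  · rw [if_neg hb, if_neg hb, if_neg (by simp [hb])]
    ring

lemma Lp_down (ht1 : 1 ≤ t) (htn : t ≤ n) (x y : ℚ) :
    ∑ f ∈ (Dset (n+1) t).filter (fun f => ¬ (stepAt f t = true)),
      x ^ valleys f * y ^ zeroValleys f
    = (x * (if t = 1 then y else 1)) * Lp n t x y + (Lp n (t-1) x y - Lp n t x y) := by
  rw [down_sum ht1 htn x y]
  rw [← Finset.sum_filter_add_sum_filter_not (Dset n (t-1))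
      (fun g => stepAt g (t-1) = true)]
  have hfil : (Dset n (t-1)).filter (fun g => stepAt g (t-1) = true) = Dset n t := by
    rw [Dset_succ_filter (by omega : t - 1 < 2*n), show t - 1 + 1 = t from by omega]
  have e1 : ∑ g ∈ (Dset n (t-1)).filter (fun g => stepAt g (t-1) = true),
      (x ^ valleys g * y ^ zeroValleys g *
        (if stepAt g (t-1) = true then x * (if t = 1 then y else 1) else 1))
      = (x * (if t = 1 then y else 1)) * Lp n t x y := by
    calc ∑ g ∈ (Dset n (t-1)).filter (fun g => stepAt g (t-1) = true),
        (x ^ valleys g * y ^ zeroValleys g *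
          (if stepAt g (t-1) = true then x * (if t = 1 then y else 1) else 1))
        = ∑ g ∈ Dset n t, (x * (if t = 1 then y else 1)) *
            (x ^ valleys g * y ^ zeroValleys g) := by
          rw [← hfil]
          refine Finset.sum_congr rfl fun g hg => ?_
          rw [if_pos (Finset.mem_filter.1 hg).2]
          ring
      _ = (x * (if t = 1 then y else 1)) * Lp n t x y := by
          rw [Lp, ← Finset.mul_sum]
  have e2 : ∑ g ∈ (Dset n (t-1)).filter (fun g => ¬ (stepAt g (t-1) = true)),
      (x ^ valleys g * y ^ zeroValleys g *
        (if stepAt g (t-1) = true then x * (if t = 1 then y else 1) else 1))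
      = Lp n (t-1) x y - Lp n t x y := by
    have hsplit := Finset.sum_filter_add_sum_filter_not (Dset n (t-1))
      (fun g => stepAt g (t-1) = true) (fun g => x ^ valleys g * y ^ zeroValleys g)
    have hLp : ∑ g ∈ (Dset n (t-1)).filter (fun g => stepAt g (t-1) = true),
        x ^ valleys g * y ^ zeroValleys g = Lp n t x y := by
      rw [hfil, Lp]
    have : ∑ g ∈ (Dset n (t-1)).filter (fun g => ¬ (stepAt g (t-1) = true)),
        (x ^ valleys g * y ^ zeroValleys g *
          (if stepAt g (t-1) = true then x * (if t = 1 then y else 1) else 1))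
        = ∑ g ∈ (Dset n (t-1)).filter (fun g => ¬ (stepAt g (t-1) = true)),
          x ^ valleys g * y ^ zeroValleys g := by
      refine Finset.sum_congr rfl fun g hg => ?_
      rw [if_neg (Finset.mem_filter.1 hg).2]
      ring
    rw [this]
    have hLptot : Lp n (t-1) x y = ∑ g ∈ Dset n (t-1), x ^ valleys g * y ^ zeroValleys g := rfl
    rw [hLptot, ← hsplit, hLp]
    ring
  rw [e1, e2]

lemma Lp_rec (ht1 : 1 ≤ t) (htn : t ≤ n) (x y : ℚ) :
    Lp (n+1) t x y = Lp (n+1) (t+1) x y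
      + ((x * (if t = 1 then y else 1)) * Lp n t x y + (Lp n (t-1) x y - Lp n t x y)) := by
  have hsplit := Finset.sum_filter_add_sum_filter_not (Dset (n+1) t)
    (fun f => stepAt f t = true) (fun f => x ^ valleys f * y ^ zeroValleys f)
  have h1 : ∑ f ∈ (Dset (n+1) t).filter (fun f => stepAt f t = true),
      x ^ valleys f * y ^ zeroValleys f = Lp (n+1) (t+1) x y := by
    rw [Dset_succ_filter (by omega : t < 2*(n+1))]
    rfl
  calc Lp (n+1) t x y
      = ∑ f ∈ Dset (n+1) t, x ^ valleys f * y ^ zeroValleys f := rfl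
    _ = _ := by
        rw [← hsplit, h1, Lp_down ht1 htn x y]

end Recursion


section Base

/-- the unique path in `Dset n n` : `n` ups then `n` downs -/
def topPath (n : ℕ) : Fin (2*n) → Bool := fun i => decide ((i : ℕ) < n)

lemma stepAt_topPath (n k : ℕ) : stepAt (topPath n) k = decide (k < n) := by
  rcases Nat.lt_or_ge k (2*n) with h | h
  · rw [stepAt_lt _ h, topPath]
  · rw [stepAt_ge _ h]
    have : ¬ (k < n) := by omega
    simp [this]

lemma ups_topPath (n : ℕ) : ∀ k, upsBefore (stepAt (topPath n)) k = min k n := by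
  intro k
  induction k with
  | zero => rw [upsBefore_zero]; omega
  | succ k ih =>
    rw [upsBefore_succ, ih, stepAt_topPath]
    by_cases h : k < n
    · simp [h]; omega
    · simp [h]; omega

lemma topPath_mem (n : ℕ) : topPath n ∈ Dset n n := by
  rw [mem_Dset]
  refine ⟨⟨fun k hk => ?_, ?_⟩, fun i hi => by simp [topPath, hi]⟩
  · rw [ups_topPath]; omega
  · rw [ups_topPath]; omega

lemma Dset_top_eq (n : ℕ) : Dset n n = {topPath n} := by
  ext f
  rw [mem_Dset, Finset.mem_singleton]
  constructor
  · rintro ⟨⟨hd1, hd2⟩, hpre⟩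
    have hcard : ((Finset.range (2*n)).filter fun i => stepAt f i = true).card = n := by
      have := hd2
      rw [upsBefore] at this
      omega
    have hsub : Finset.range n ⊆ (Finset.range (2*n)).filter fun i => stepAt f i = true := by
      intro i hi
      rw [Finset.mem_range] at hi
      rw [Finset.mem_filter, Finset.mem_range]
      exact ⟨by omega, by rw [stepAt_lt _ (by omega : i < 2*n)]; exact hpre _ hi⟩
    have heq : (Finset.range (2*n)).filter (fun i => stepAt f i = true) = Finset.range n := by
      apply (Finset.eq_of_subset_of_card_le hsub (by rw [hcard, Finset.card_range])).symm
    funext i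
    rcases Nat.lt_or_ge (i : ℕ) n with h | h
    · rw [hpre i h, topPath]
      simp [h]
    · have : (i : ℕ) ∉ Finset.range n := by simp; omega
      rw [← heq, Finset.mem_filter] at this
      push_neg at this
      have hf : ¬ (stepAt f (i : ℕ) = true) := this (by simp [Finset.mem_range, i.2])
      rw [stepAt_lt _ i.2] at hf
      simp only [topPath]
      have h2 : ¬ ((i:ℕ) < n) := by omega
      simp only [h2, decide_eq_false_iff_not]
      revert hf
      cases f ⟨(i:ℕ), i.2⟩ <;> simp
  · rintro rfl
    exact mem_Dset.1 (topPath_mem n)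

lemma valleys_topPath (n : ℕ) : valleys (topPath n) = 0 := by
  rw [valleys, Finset.card_eq_zero, Finset.filter_eq_empty_iff]
  intro k hk
  rw [Finset.mem_Ioo] at hk
  rintro ⟨h1, h2⟩
  rw [stepAt_topPath] at h1 h2
  simp only [decide_eq_true_eq] at h2
  simp only [decide_eq_false_iff_not] at h1
  omega

lemma zeroValleys_topPath (n : ℕ) : zeroValleys (topPath n) = 0 := by
  rw [zeroValleys, Finset.card_eq_zero, Finset.filter_eq_empty_iff]
  intro k hk
  rw [Finset.mem_Ioo] at hk
  rintro ⟨h1, h2, -⟩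
  rw [stepAt_topPath] at h1 h2
  simp only [decide_eq_true_eq] at h2
  simp only [decide_eq_false_iff_not] at h1
  omega

lemma Lp_base (n : ℕ) (x y : ℚ) : Lp n n x y = 1 := by
  rw [Lp, Dset_top_eq, Finset.sum_singleton, valleys_topPath, zeroValleys_topPath]
  simp

end Base



theorem Lp_eq_Rp : ∀ n t, 1 ≤ t → t ≤ n → ∀ x y : ℚ, Lp n t x y = Rp (n-t) t x y := by
  intro n
  induction n using Nat.strong_induction_on with
  | _ n IH =>
    suffices H : ∀ d t, t + d = n → 1 ≤ t → ∀ x y : ℚ, Lp n t x y = Rp (n-t) t x y from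
      fun t ht1 htn x y => H (n-t) t (by omega) ht1 x y
    intro d
    induction d with
    | zero =>
      intro t htd ht1 x y
      obtain rfl : t = n := by omega
      rw [Nat.sub_self, Lp_base, Rp_zero]
    | succ d ih =>
      intro t htd ht1 x y
      obtain ⟨n', rfl⟩ : ∃ n', n = n' + 1 := ⟨n - 1, by omega⟩
      have htn' : t ≤ n' := by omega
      have hrec := Lp_rec ht1 htn' x y
      rcases Nat.lt_or_ge t 2 with h2 | h2
      · obtain rfl : t = 1 := by omega
        have e0 : Lp n' 0 x y = Lp n' 1 x y := by
          rw [Lp, Lp, Dset_zero_one (by omega : 1 ≤ n')]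
        have e1 : Lp (n'+1) 2 x y = Rp (n'-1) 2 x y := by
          have := ih 2 (by omega) (by omega) x y
          rwa [show n'+1-2 = n'-1 from by omega] at this
        have e3 : Lp n' 1 x y = Rp (n'-1) 1 x y := IH n' (by omega) 1 (by omega) (by omega) x y
        have e4 := Rp_rec1 (n'+1-1) (by omega) x y
        rw [show n'+1-1 = n' from by omega, show n'-1 = n'-1 from rfl] at e4
        rw [hrec, if_pos rfl]
        rw [show (1:ℕ) - 1 = 0 from rfl, e0, e1, e3,
            show n'+1-1 = n' from by omega, e4]
        ring
      · have e1 : Lp (n'+1) (t+1) x y = Rp (n'-t) (t+1) x y := by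
          have := ih (t+1) (by omega) (by omega) x y
          rwa [show n'+1-(t+1) = n'-t from by omega] at this
        have e2 : Lp n' (t-1) x y = Rp (n'-(t-1)) (t-1) x y :=
          IH n' (by omega) (t-1) (by omega) (by omega) x y
        have e3 : Lp n' t x y = Rp (n'-t) t x y := IH n' (by omega) t ht1 htn' x y
        have e4 := Rp_rec2 (n'+1-t) t h2 (by omega) x y
        rw [hrec, if_neg (by omega : ¬ t = 1), e1, e2, e3, e4]
        rw [show n'+1-t-1 = n'-t from by omega, show n'+1-t = n'-(t-1) from by omega]
        ring

end HTri

/-- The `m = 1` case of the `H`-triangle: for `t`-Dyck paths of length `2n`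
(Dyck paths starting with `t` up-steps), with `v(P)` the number of valleys and
`r(P)` the number of valleys at height `0`,
`∑_P x^{v(P)} y^{r(P)} = ∑_{k=0}^{n−t} ∑_{h=0}^{n−t−k}
  [C(n−t+1,k)·C(t+k+h−2,h) − C(n−t,k−1)·C(t+k+h−1,h)] x^{n−t−k} y^{n−t−k−h}`,
with the convention `C(a,−1) = 0`. -/
theorem h_triangle_dyck_paths (n t : ℕ) (ht : 1 ≤ t) (htn : t ≤ n) (x y : ℚ) :
    ∑ f ∈ Finset.univ.filter (fun f : Fin (2 * n) → Bool =>
        IsDyckFun f ∧ ∀ i : Fin (2 * n), (i : ℕ) < t → f i = true),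
      x ^ valleys f * y ^ zeroValleys f =
    ∑ k ∈ Finset.range (n - t + 1), ∑ h ∈ Finset.range (n - t - k + 1),
      (((n - t + 1).choose k : ℚ) * ((t + k + h - 2).choose h) -
          (if k = 0 then 0 else ((n - t).choose (k - 1) : ℚ)) *
            ((t + k + h - 1).choose h)) *
        x ^ (n - t - k) * y ^ (n - t - k - h) := by
  have key := HTri.Lp_eq_Rp n t ht htn x y
  calc ∑ f ∈ Finset.univ.filter (fun f : Fin (2 * n) → Bool =>
        IsDyckFun f ∧ ∀ i : Fin (2 * n), (i : ℕ) < t → f i = true),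
      x ^ valleys f * y ^ zeroValleys f
      = HTri.Lp n t x y := rfl
    _ = HTri.Rp (n - t) t x y := key
    _ = _ := rfl
end

section
/- Let f(z) be a formal power series with f(0)=0 and f'(0)≠0, and let F(z) be its compositional inverse. Then for all integers a and b: a·[coefficient of z^{-a} in F(z)^b] = −b·[coefficient of z^{-b} in f(z)^a], where coefficients of Laurent series are meant. -/
/-- Truncated composition `f ∘ g` of formal power series; when the constant
coefficient of `g` vanishes this is the usual composition. -/
noncomputable def psComp {K : Type*} [Field K] (f g : PowerSeries K) : PowerSeries K :=
  PowerSeries.mk fun n =>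
    ∑ k ∈ Finset.range (n + 1), PowerSeries.coeff k f * PowerSeries.coeff n (g ^ k)

namespace LagAux
open PowerSeries Finset

open PowerSeries Finset

variable {K : Type*} [Field K]

lemma coeff_psComp (P g : PowerSeries K) (n : ℕ) :
    coeff n (psComp P g) = ∑ k ∈ range (n + 1), coeff k P * coeff n (g ^ k) :=
  coeff_mk _ _

lemma coeff_pow_eq_zero {g : PowerSeries K} (hg : constantCoeff g = 0)
    {n k : ℕ} (h : n < k) : coeff n (g ^ k) = 0 := by
  have : (X : PowerSeries K) ^ k ∣ g ^ k := pow_dvd_pow_of_dvd (X_dvd_iff.2 hg) k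
  exact X_pow_dvd_iff.1 this n h

/-- partial sums of composition -/
noncomputable def S (g P : PowerSeries K) (N : ℕ) : PowerSeries K :=
  ∑ k ∈ range N, C (coeff k P) * g ^ k

lemma coeff_S (g P : PowerSeries K) (N n : ℕ) :
    coeff n (S g P N) = ∑ k ∈ range N, coeff k P * coeff n (g ^ k) := by
  simp [S, coeff_C_mul]

lemma coeff_psComp_eq_coeff_S {g : PowerSeries K} (hg : constantCoeff g = 0)
    (P : PowerSeries K) {N n : ℕ} (hn : n < N) :
    coeff n (psComp P g) = coeff n (S g P N) := by
  rw [coeff_psComp, coeff_S]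
  refine Finset.sum_subset (range_subset_range.2 hn) ?_
  intro k hk hk'
  have : n < k := by simp only [mem_range] at hk hk'; omega
  rw [coeff_pow_eq_zero hg this, mul_zero]

lemma psComp_add (P Q g : PowerSeries K) : psComp (P + Q) g = psComp P g + psComp Q g := by
  ext n
  simp [coeff_psComp, add_mul, Finset.sum_add_distrib]

lemma psComp_C (r : K) (g : PowerSeries K) : psComp (C r) g = C r := by
  ext n
  rw [coeff_psComp]
  rw [Finset.sum_eq_single 0 (fun k _ hk0 => by simp [coeff_C, hk0]) (by simp)]
  simp [coeff_C, coeff_one, mul_ite]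

lemma psComp_one (g : PowerSeries K) : psComp 1 g = 1 := by
  have := psComp_C (1 : K) g
  simpa using this

lemma psComp_X {g : PowerSeries K} (hg : constantCoeff g = 0) : psComp X g = g := by
  ext n
  match n with
  | 0 =>
    rw [coeff_psComp]
    simpa using hg.symm
  | n + 1 =>
    rw [coeff_psComp, Finset.sum_eq_single 1
      (fun k _ hk1 => by simp [coeff_X, hk1]) (fun h => by simp at h)]
    simp

lemma psComp_mul {g : PowerSeries K} (hg : constantCoeff g = 0) (P Q : PowerSeries K) :
    psComp (P * Q) g = psComp P g * psComp Q g := by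
  ext n
  have hS : ∀ R : PowerSeries K, coeff n (psComp R g) = coeff n (S g R (n+1)) :=
    fun R => coeff_psComp_eq_coeff_S hg R (Nat.lt_succ_self n)
  rw [hS, PowerSeries.coeff_mul]
  have hR : ∀ i ∈ antidiagonal n, coeff i.1 (psComp P g) * coeff i.2 (psComp Q g)
      = coeff i.1 (S g P (n+1)) * coeff i.2 (S g Q (n+1)) := by
    intro i hi
    have h1 : i.1 < n + 1 := by
      have := Finset.HasAntidiagonal.antidiagonal.fst_le hi; omega
    have h2 : i.2 < n + 1 := by
      have := Finset.HasAntidiagonal.antidiagonal.snd_le hi; omega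
    rw [coeff_psComp_eq_coeff_S hg P h1, coeff_psComp_eq_coeff_S hg Q h2]
  rw [Finset.sum_congr rfl hR, ← PowerSeries.coeff_mul]
  have hterm : ∀ x : ℕ × ℕ, coeff n (C (coeff x.1 P * coeff x.2 Q) * g ^ (x.1 + x.2))
      = coeff x.1 P * coeff x.2 Q * coeff n (g ^ (x.1 + x.2)) := fun x => coeff_C_mul _ _ _
  have rhs_eq : coeff n (S g P (n+1) * S g Q (n+1))
      = ∑ x ∈ range (n+1) ×ˢ range (n+1),
          coeff x.1 P * coeff x.2 Q * coeff n (g ^ (x.1 + x.2)) := by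
    have expand : S g P (n+1) * S g Q (n+1)
        = ∑ x ∈ range (n+1) ×ˢ range (n+1),
            C (coeff x.1 P * coeff x.2 Q) * g ^ (x.1 + x.2) := by
      rw [S, S, Finset.sum_mul_sum, ← Finset.sum_product']
      refine Finset.sum_congr rfl ?_
      intro x _
      rw [pow_add, map_mul]
      ring
    rw [expand, map_sum]
    exact Finset.sum_congr rfl (fun x _ => hterm x)
  have lhs_eq : coeff n (S g (P * Q) (n+1))
      = ∑ m ∈ range (n+1), ∑ i ∈ antidiagonal m,
          coeff i.1 P * coeff i.2 Q * coeff n (g ^ (i.1 + i.2)) := by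
    rw [coeff_S]
    refine Finset.sum_congr rfl ?_
    intro m _
    rw [PowerSeries.coeff_mul, Finset.sum_mul]
    refine Finset.sum_congr rfl ?_
    intro x hx
    rw [Finset.HasAntidiagonal.mem_antidiagonal.1 hx]
  rw [lhs_eq, rhs_eq]
  have hB : (range (n+1)).biUnion (fun m => antidiagonal m) ⊆ range (n+1) ×ˢ range (n+1) := by
    intro x hx
    simp only [Finset.mem_biUnion, mem_range, Finset.HasAntidiagonal.mem_antidiagonal] at hx
    obtain ⟨m, hm, hxm⟩ := hx
    simp only [Finset.mem_product, mem_range]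
    omega
  rw [← Finset.sum_subset hB, Finset.sum_biUnion]
  · intro s _ t _ hst
    apply Finset.disjoint_left.2
    intro x hx hx'
    exact hst (by rw [← Finset.HasAntidiagonal.mem_antidiagonal.1 hx, Finset.HasAntidiagonal.mem_antidiagonal.1 hx'])
  · intro x hx hx'
    have : n < x.1 + x.2 := by
      by_contra h
      push_neg at h
      exact hx' (Finset.mem_biUnion.2 ⟨x.1 + x.2, mem_range.2 (by omega),
        Finset.HasAntidiagonal.mem_antidiagonal.2 rfl⟩)
    rw [coeff_pow_eq_zero hg this, mul_zero]



-- generic power rule for nat powers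
lemma deriv_pow_succ {R : Type*} [CommRing R] (w : PowerSeries R) (k : ℕ) :
    derivative R (w ^ (k+1)) = (k+1) • (w ^ k * derivative R w) := by
  have := Derivation.leibniz_pow (derivative R) (a := w) (k+1)
  rw [this]
  simp [smul_eq_mul, mul_comm]

-- the universal (characteristic-free) key lemma
lemma key {K : Type*} [Field K] (h : PowerSeries K) (s : ℕ) :
    coeff (s+1) (h ^ (s+1)) = coeff s (h ^ s * derivative K h) := by
  classical
  set R₀ := MvPolynomial ℕ ℤ
  set H : PowerSeries R₀ := PowerSeries.mk (fun i => MvPolynomial.X i) with hH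
  have generic : coeff (s+1) (H ^ (s+1)) = coeff s (H ^ s * derivative R₀ H) := by
    have hcancel : ((s : R₀) + 1) ≠ 0 := by
      exact_mod_cast (Nat.cast_add_one_ne_zero (R := R₀) s)
    apply mul_left_cancel₀ hcancel
    have h1 : coeff s (derivative R₀ (H ^ (s+1)))
        = coeff (s+1) (H ^ (s+1)) * ((s:R₀)+1) := by
      rw [coeff_derivative]; try (push_cast; ring)
    have h2 : derivative R₀ (H ^ (s+1)) = (s+1) • (H ^ s * derivative R₀ H) :=
      deriv_pow_succ H s
    calc ((s:R₀)+1) * coeff (s+1) (H ^ (s+1))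
        = coeff s (derivative R₀ (H ^ (s+1))) := by rw [h1]; ring
      _ = ((s:R₀)+1) * coeff s (H ^ s * derivative R₀ H) := by
          rw [h2, map_nsmul]
          push_cast [nsmul_eq_mul]
          ring
  -- specialize
  set φ : R₀ →+* K := MvPolynomial.eval₂Hom (Int.castRingHom K) (fun i => coeff i h) with hφ
  have hmapH : PowerSeries.map φ H = h := by
    ext i
    rw [coeff_map, hH, coeff_mk, hφ]
    exact MvPolynomial.eval₂Hom_X' _ _ _
  have hmapD : PowerSeries.map φ (derivative R₀ H) = derivative K h := by
    ext i
    rw [coeff_map, coeff_derivative, coeff_derivative, map_mul, ← coeff_map, hmapH]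
    congr 1
    rw [map_add, map_one, map_natCast]
  have hmp : ∀ (g : PowerSeries _) (n : ℕ), φ (coeff n g) = coeff n (PowerSeries.map φ g) :=
    fun g n => (coeff_map φ n g).symm
  have := congrArg φ generic
  rw [hmp, hmp] at this
  rw [show PowerSeries.map φ (H ^ (s+1)) = (PowerSeries.map φ H) ^ (s+1) from
      map_pow (PowerSeries.map φ) H (s+1),
    show PowerSeries.map φ (H ^ s * derivative R₀ H)
        = (PowerSeries.map φ H) ^ s * PowerSeries.map φ (derivative R₀ H) from by
      rw [map_mul]; rw [map_pow],
    hmapH, hmapD] at this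
  exact this




lemma val_zpow_mul (uu : (PowerSeries K)ˣ) (a c : ℤ) :
    ((uu ^ a : (PowerSeries K)ˣ) : PowerSeries K) * ((uu ^ c : (PowerSeries K)ˣ) : PowerSeries K)
      = ((uu ^ (a + c) : (PowerSeries K)ˣ) : PowerSeries K) := by
  rw [← Units.val_mul, ← zpow_add]

lemma deriv_val_inv (uu : (PowerSeries K)ˣ) :
    derivative K (uu : PowerSeries K) =
      -((uu : PowerSeries K))^2 * derivative K ((uu⁻¹ : (PowerSeries K)ˣ) : PowerSeries K) := by
  have h := PowerSeries.derivative_inv (R := K) uu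
  have h2 : ((uu : PowerSeries K))^2 * (((uu⁻¹ : (PowerSeries K)ˣ) : PowerSeries K))^2 = 1 := by
    rw [← mul_pow, ← Units.val_mul, mul_inv_cancel]
    simp
  calc derivative K (uu : PowerSeries K)
      = (((uu:PowerSeries K))^2 * ((uu⁻¹:(PowerSeries K)ˣ):PowerSeries K)^2) * derivative K (uu : PowerSeries K) := by
        rw [h2, one_mul]
    _ = -((uu : PowerSeries K))^2 * (-(((uu⁻¹:(PowerSeries K)ˣ):PowerSeries K))^2 * derivative K (uu : PowerSeries K)) := by
        ring
    _ = _ := by rw [← h]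

lemma deriv_unit_zpow (uu : (PowerSeries K)ˣ) (a : ℤ) :
    derivative K ((uu ^ a : (PowerSeries K)ˣ) : PowerSeries K)
      = a • (((uu ^ (a-1) : (PowerSeries K)ˣ) : PowerSeries K) * derivative K (uu : PowerSeries K)) := by
  cases a with
  | ofNat n =>
    match n with
    | 0 => simp
    | n + 1 =>
      have h1 : ((uu ^ ((n+1 : ℕ) : ℤ) : (PowerSeries K)ˣ) : PowerSeries K)
          = ((uu : PowerSeries K)) ^ (n+1) := by
        rw [zpow_natCast, Units.val_pow_eq_pow_val]
      have h2 : ((uu ^ (((n+1 : ℕ) : ℤ) - 1) : (PowerSeries K)ˣ) : PowerSeries K)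
          = ((uu : PowerSeries K)) ^ n := by
        have : (((n+1 : ℕ) : ℤ) - 1) = (n : ℤ) := by omega
        rw [this, zpow_natCast, Units.val_pow_eq_pow_val]
      rw [Int.ofNat_eq_coe, h1, h2, deriv_pow_succ]
      rw [natCast_zsmul]
  | negSucc m =>
    have hval : ∀ k : ℕ, ((uu ^ (Int.negSucc k) : (PowerSeries K)ˣ) : PowerSeries K)
        = (((uu⁻¹ : (PowerSeries K)ˣ) : PowerSeries K)) ^ (k+1) := by
      intro k
      rw [zpow_negSucc, ← inv_pow, Units.val_pow_eq_pow_val]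
    have hm1 : Int.negSucc m - 1 = Int.negSucc (m+1) := by rw [Int.negSucc_eq, Int.negSucc_eq]; push_cast; ring
    rw [hval, hm1, hval, deriv_pow_succ]
    rw [PowerSeries.derivative_inv]
    have : Int.negSucc m • (((uu⁻¹:(PowerSeries K)ˣ):PowerSeries K) ^ (m + 1 + 1) * derivative K (uu:PowerSeries K))
        = -((m+1) • (((uu⁻¹:(PowerSeries K)ˣ):PowerSeries K) ^ (m + 2) * derivative K (uu:PowerSeries K))) := by
      rw [negSucc_zsmul]
    rw [this]
    rw [← neg_nsmul]
    congr 1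
    ring

lemma orth_top (uu : (PowerSeries K)ˣ) :
    coeff 0 (((uu ^ (-1 : ℤ) : (PowerSeries K)ˣ) : PowerSeries K)
      * ((uu : PowerSeries K) + X * derivative K (uu : PowerSeries K))) = 1 := by
  rw [zpow_neg_one]
  rw [mul_add, ← Units.val_mul, inv_mul_cancel]
  rw [map_add]
  have h0 : coeff 0 (((uu⁻¹:(PowerSeries K)ˣ):PowerSeries K) * (X * derivative K (uu:PowerSeries K))) = 0 := by
    rw [coeff_zero_eq_constantCoeff, map_mul, map_mul, constantCoeff_X]
    ring
  rw [h0]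
  simp



lemma orth_zero (uu : (PowerSeries K)ˣ) (s : ℕ) :
    coeff (s+1) (((uu ^ (-(s:ℤ)-2) : (PowerSeries K)ˣ) : PowerSeries K)
      * ((uu : PowerSeries K) + X * derivative K (uu : PowerSeries K))) = 0 := by
  set h : PowerSeries K := ((uu⁻¹ : (PowerSeries K)ˣ) : PowerSeries K) with hh
  have hpow : ∀ k : ℕ, ((uu ^ (-(k:ℤ)) : (PowerSeries K)ˣ) : PowerSeries K) = h ^ k := by
    intro k
    rw [zpow_neg, zpow_natCast, ← inv_pow, Units.val_pow_eq_pow_val]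
  have expand : ((uu ^ (-(s:ℤ)-2) : (PowerSeries K)ˣ) : PowerSeries K)
      * ((uu : PowerSeries K) + X * derivative K (uu : PowerSeries K))
      = h ^ (s+1) - X * (h ^ s * derivative K h) := by
    rw [mul_add]
    have e1 : ((uu ^ (-(s:ℤ)-2) : (PowerSeries K)ˣ) : PowerSeries K) * (uu : PowerSeries K)
        = h ^ (s+1) := by
      have : (uu : PowerSeries K) = ((uu ^ (1:ℤ) : (PowerSeries K)ˣ) : PowerSeries K) := by simp
      rw [this, val_zpow_mul]
      have : (-(s:ℤ)-2+1) = -((s+1 : ℕ) : ℤ) := by push_cast; omega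
      rw [this, hpow]
    have e2 : ((uu ^ (-(s:ℤ)-2) : (PowerSeries K)ˣ) : PowerSeries K)
          * (X * derivative K (uu : PowerSeries K))
        = -(X * (h ^ s * derivative K h)) := by
      rw [deriv_val_inv uu, ← hh]
      have : ((uu ^ (-(s:ℤ)-2) : (PowerSeries K)ˣ) : PowerSeries K) * ((uu:PowerSeries K))^2
          = h ^ s := by
        have h2 : ((uu:PowerSeries K))^2 = ((uu ^ (2:ℤ) : (PowerSeries K)ˣ) : PowerSeries K) := by
          rw [zpow_ofNat, Units.val_pow_eq_pow_val]
        rw [h2, val_zpow_mul]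
        have : (-(s:ℤ)-2+2) = -((s:ℕ) : ℤ) := by omega
        rw [this, hpow]
      calc ((uu ^ (-(s:ℤ)-2) : (PowerSeries K)ˣ) : PowerSeries K)
            * (X * (-((uu:PowerSeries K))^2 * derivative K h))
          = -(X * ((((uu ^ (-(s:ℤ)-2) : (PowerSeries K)ˣ) : PowerSeries K) * ((uu:PowerSeries K))^2)
              * derivative K h)) := by ring
        _ = -(X * (h ^ s * derivative K h)) := by rw [this]
    rw [e1, e2]
    ring
  rw [expand, map_sub, coeff_succ_X_mul, key h s, sub_self]


lemma psComp_zero (g : PowerSeries K) : psComp 0 g = 0 := by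
  ext n; simp [coeff_psComp]

/-- `psComp · g` as a ring hom, when `g` has zero constant term. -/
noncomputable def psCompHom {g : PowerSeries K} (hg : constantCoeff g = 0) :
    PowerSeries K →+* PowerSeries K where
  toFun P := psComp P g
  map_one' := psComp_one g
  map_mul' := psComp_mul hg
  map_zero' := psComp_zero g
  map_add' := fun P Q => psComp_add P Q g

lemma psComp_unit_zpow {g : PowerSeries K} (hg : constantCoeff g = 0)
    (w : (PowerSeries K)ˣ) (t : (PowerSeries K)ˣ)
    (hw : psComp (w : PowerSeries K) g = (t : PowerSeries K)) (b : ℤ) :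
    psComp ((w ^ b : (PowerSeries K)ˣ) : PowerSeries K) g
      = ((t ^ b : (PowerSeries K)ˣ) : PowerSeries K) := by
  have h1 : Units.map (psCompHom hg).toMonoidHom w = t := by
    exact Units.ext hw
  have h2 : psComp ((w ^ b : (PowerSeries K)ˣ) : PowerSeries K) g
      = ((Units.map (psCompHom hg).toMonoidHom (w ^ b) : (PowerSeries K)ˣ) : PowerSeries K) := rfl
  rw [h2, map_zpow, h1]

lemma trunc_split (w : PowerSeries K) (N : ℕ) :
    w = (∑ j ∈ range N, C (coeff j w) * X ^ j)
        + X ^ N * PowerSeries.mk (fun i => coeff (N + i) w) := by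
  ext m
  rw [map_add, map_sum]
  by_cases hm : m < N
  · have h1 : ∀ j ∈ range N, coeff m (C (coeff j w) * X ^ j)
        = if m = j then coeff j w else 0 := by
      intro j _
      rw [coeff_C_mul, coeff_X_pow]
      split_ifs with h <;> simp [h]
    rw [Finset.sum_congr rfl h1, Finset.sum_ite_eq (range N) m]
    have h2 : coeff m (X ^ N * PowerSeries.mk (fun i => coeff (N + i) w)) = 0 := by
      rw [coeff_X_pow_mul']
      simp [Nat.not_le.2 hm]
    rw [h2, if_pos (mem_range.2 hm), add_zero]
  · push_neg at hm
    have h1 : ∀ j ∈ range N, coeff m (C (coeff j w) * X ^ j) = 0 := by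
      intro j hj
      rw [coeff_C_mul, coeff_X_pow, if_neg (by simp at hj; omega), mul_zero]
    rw [Finset.sum_congr rfl h1, Finset.sum_const_zero, zero_add, coeff_X_pow_mul',
      if_pos hm]
    rw [coeff_mk]
    have hNm : N + (m - N) = m := by omega
    rw [hNm]

lemma coeff_X_mul_eq (P : PowerSeries K) (n : ℕ) :
    coeff n (X * derivative K P) = (n : K) * coeff n P := by
  match n with
  | 0 => simp
  | n + 1 =>
    rw [coeff_succ_X_mul, coeff_derivative]
    push_cast
    ring

/-- The core computation: the coefficient of the inverse-power of `v` equals a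
residue expressed through `u`. -/
lemma core (uu vv : (PowerSeries K)ˣ) (n : ℕ) (a b : ℤ) (hb : b = -a - n)
    (hv : psComp ((vv : (PowerSeries K)ˣ) : PowerSeries K) (X * (uu : PowerSeries K))
        = ((uu⁻¹ : (PowerSeries K)ˣ) : PowerSeries K)) :
    coeff n ((vv ^ b : (PowerSeries K)ˣ) : PowerSeries K)
      = coeff n (((uu ^ (a-1) : (PowerSeries K)ˣ) : PowerSeries K)
          * ((uu : PowerSeries K) + X * derivative K (uu : PowerSeries K))) := by
  classical
  set u : PowerSeries K := ((uu : (PowerSeries K)ˣ) : PowerSeries K) with hu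
  set g : PowerSeries K := X * u with hgdef
  have hg : constantCoeff g = 0 := by
    rw [hgdef, map_mul, constantCoeff_X, zero_mul]
  set W : PowerSeries K := u + X * derivative K u with hW
  set w : PowerSeries K := ((vv ^ b : (PowerSeries K)ˣ) : PowerSeries K) with hwdef
  set τ : PowerSeries K := PowerSeries.mk (fun i => coeff (n + 1 + i) w) with hτ
  -- composition of w with g gives u^(-b)
  have hcomp : psComp w g = ((uu ^ (-b) : (PowerSeries K)ˣ) : PowerSeries K) := by
    rw [hwdef, psComp_unit_zpow hg vv uu⁻¹ hv b]
    congr 1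
    rw [inv_zpow, ← zpow_neg]
  -- expansion of u^(-b) as a finite sum plus tail
  have hexp : ((uu ^ (-b) : (PowerSeries K)ˣ) : PowerSeries K)
      = (∑ j ∈ range (n+1), C (coeff j w) * g ^ j) + g ^ (n+1) * psComp τ g := by
    rw [← hcomp]
    conv_lhs => rw [trunc_split w (n+1)]
    show psCompHom hg _ = _
    rw [map_add, map_sum, map_mul, map_pow]
    congr 1
    · refine Finset.sum_congr rfl ?_
      intro j _
      show psComp _ g = _
      rw [psComp_mul hg, psComp_C]
      congr 1
      show psComp (X ^ j) g = g ^ j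
      have : psComp (X ^ j) g = (psCompHom hg) (X ^ j) := rfl
      rw [this, map_pow]
      congr 1
      exact psComp_X hg
    · show psComp X g ^ (n+1) * psComp τ g = g ^ (n+1) * psComp τ g
      rw [psComp_X hg]
  -- rewrite the target product
  have h0 : ((uu ^ (a-1) : (PowerSeries K)ˣ) : PowerSeries K) * W
      = ((∑ j ∈ range (n+1), C (coeff j w) * g ^ j) + g ^ (n+1) * psComp τ g)
          * (((uu ^ (-(n:ℤ)-1) : (PowerSeries K)ˣ) : PowerSeries K) * W) := by
    have he : (-b) + (-(n:ℤ)-1) = a - 1 := by omega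
    rw [← hexp, ← mul_assoc, val_zpow_mul, he]
  have hgj : ∀ j : ℕ, g ^ j = X ^ j * ((uu ^ (j:ℤ) : (PowerSeries K)ˣ) : PowerSeries K) := by
    intro j
    rw [hgdef, mul_pow]
    rw [hu, ← Units.val_pow_eq_pow_val, ← zpow_natCast uu j]
  have hterm : ∀ j ∈ range (n+1),
      coeff n ((C (coeff j w) * g ^ j)
        * (((uu ^ (-(n:ℤ)-1) : (PowerSeries K)ˣ) : PowerSeries K) * W))
      = if j = n then coeff n w else 0 := by
    intro j hj
    have hj' : j ≤ n := by simp only [mem_range] at hj; omega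
    have hAB : ((uu ^ (j:ℤ) : (PowerSeries K)ˣ) : PowerSeries K)
        * ((uu ^ (-(n:ℤ)-1) : (PowerSeries K)ˣ) : PowerSeries K)
        = ((uu ^ ((j:ℤ) - n - 1) : (PowerSeries K)ˣ) : PowerSeries K) := by
      rw [val_zpow_mul]
      congr 2
      ring
    have hrearr : (C (coeff j w) * g ^ j)
        * (((uu ^ (-(n:ℤ)-1) : (PowerSeries K)ˣ) : PowerSeries K) * W)
        = C (coeff j w) * (X ^ j
            * (((uu ^ ((j:ℤ) - n - 1) : (PowerSeries K)ˣ) : PowerSeries K) * W)) := by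
      rw [hgj j, ← hAB]
      ring
    rw [hrearr, coeff_C_mul, coeff_X_pow_mul', if_pos hj']
    rcases eq_or_lt_of_le hj' with heq | hlt
    · subst heq
      have hc : ((j:ℤ) - j - 1) = (-1 : ℤ) := by ring
      rw [hc, Nat.sub_self, orth_top uu, mul_one, if_pos rfl]
    · set s : ℕ := n - j - 1 with hs
      have hs1 : n - j = s + 1 := by omega
      have hs2 : ((j:ℤ) - n - 1) = -(s:ℤ) - 2 := by omega
      rw [hs1, hs2, orth_zero uu s, mul_zero, if_neg (by omega)]
  have htail : coeff n ((g ^ (n+1) * psComp τ g)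
      * (((uu ^ (-(n:ℤ)-1) : (PowerSeries K)ˣ) : PowerSeries K) * W)) = 0 := by
    have hre : (g ^ (n+1) * psComp τ g)
        * (((uu ^ (-(n:ℤ)-1) : (PowerSeries K)ˣ) : PowerSeries K) * W)
        = X ^ (n+1) * (((uu ^ ((n+1:ℕ):ℤ) : (PowerSeries K)ˣ) : PowerSeries K)
            * (psComp τ g * (((uu ^ (-(n:ℤ)-1) : (PowerSeries K)ˣ) : PowerSeries K) * W))) := by
      rw [hgj (n+1)]
      ring
    rw [hre, coeff_X_pow_mul', if_neg (by omega)]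
  calc coeff n w
      = (if (n:ℕ) ∈ range (n+1) then coeff n w else 0) := by
        rw [if_pos (mem_range.2 (Nat.lt_succ_self n))]
    _ = ∑ j ∈ range (n+1), (if j = n then coeff n w else 0) := by
        rw [Finset.sum_ite_eq' (range (n+1)) n (fun _ => coeff n w)]
    _ = ∑ j ∈ range (n+1), coeff n ((C (coeff j w) * g ^ j)
          * (((uu ^ (-(n:ℤ)-1) : (PowerSeries K)ˣ) : PowerSeries K) * W)) := by
        exact (Finset.sum_congr rfl hterm).symm
    _ = coeff n (((uu ^ (a-1) : (PowerSeries K)ˣ) : PowerSeries K) * W) := by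
        rw [h0, add_mul, Finset.sum_mul, map_add, map_sum, htail, add_zero]

section Hahn

variable {K : Type*} [Field K]

lemma single_one_pow (k : ℕ) :
    (HahnSeries.single (1:ℤ) (1:K) : LaurentSeries K) ^ k = HahnSeries.single (k:ℤ) 1 := by
  induction k with
  | zero => simp [HahnSeries.single_zero_one]
  | succ m ih =>
    have hc : ((m:ℤ) + 1) = ((m+1:ℕ):ℤ) := by push_cast; ring
    rw [pow_succ, ih, HahnSeries.single_mul_single, one_mul, hc]

lemma single_one_zpow (b : ℤ) :
    (HahnSeries.single (1:ℤ) (1:K) : LaurentSeries K) ^ b = HahnSeries.single b 1 := by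
  cases b with
  | ofNat k => rw [Int.ofNat_eq_coe, zpow_natCast, single_one_pow]
  | negSucc m =>
    rw [zpow_negSucc, single_one_pow]
    have h1 : (HahnSeries.single ((m+1:ℕ):ℤ) (1:K) : LaurentSeries K)
        * HahnSeries.single (Int.negSucc m) 1 = 1 := by
      rw [HahnSeries.single_mul_single, one_mul]
      have h2 : ((m+1:ℕ):ℤ) + Int.negSucc m = 0 := by
        rw [Int.negSucc_eq]; push_cast; ring
      rw [h2, HahnSeries.single_zero_one]
    exact inv_eq_of_mul_eq_one_right h1

lemma ofPS_unit_zpow (P : (PowerSeries K)ˣ) (b : ℤ) :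
    (HahnSeries.ofPowerSeries ℤ K (P : PowerSeries K)) ^ b
      = HahnSeries.ofPowerSeries ℤ K ((P ^ b : (PowerSeries K)ˣ) : PowerSeries K) := by
  have h1 : ∀ c : ℤ,
      ((Units.map (HahnSeries.ofPowerSeries ℤ K).toMonoidHom P ^ c : (LaurentSeries K)ˣ)
          : LaurentSeries K)
        = HahnSeries.ofPowerSeries ℤ K ((P ^ c : (PowerSeries K)ˣ) : PowerSeries K) := by
    intro c
    rw [← map_zpow]
    rfl
  calc (HahnSeries.ofPowerSeries ℤ K (P : PowerSeries K)) ^ b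
      = ((Units.map (HahnSeries.ofPowerSeries ℤ K).toMonoidHom P : (LaurentSeries K)ˣ)
          : LaurentSeries K) ^ b := rfl
    _ = ((Units.map (HahnSeries.ofPowerSeries ℤ K).toMonoidHom P ^ b : (LaurentSeries K)ˣ)
          : LaurentSeries K) := (Units.val_zpow_eq_zpow_val _ b).symm
    _ = _ := h1 b

lemma coeff_single_mul_ofPS_nat (P : PowerSeries K) (c : ℤ) (d : ℕ) :
    ((HahnSeries.single c (1:K) : LaurentSeries K)
        * HahnSeries.ofPowerSeries ℤ K P).coeff ((d:ℤ) + c)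
      = PowerSeries.coeff d P := by
  rw [HahnSeries.coeff_single_mul_add, one_mul, HahnSeries.ofPowerSeries_apply_coeff]

lemma coeff_single_mul_ofPS_neg (P : PowerSeries K) (c m : ℤ) (hm : m - c < 0) :
    ((HahnSeries.single c (1:K) : LaurentSeries K)
        * HahnSeries.ofPowerSeries ℤ K P).coeff m = 0 := by
  have h1 : m = (m - c) + c := by ring
  rw [h1, HahnSeries.coeff_single_mul_add, one_mul, HahnSeries.ofPowerSeries_apply,
    HahnSeries.embDomain_notin_range]
  rintro ⟨d, hd⟩
  have hd' : ((d:ℤ)) = m - c := hd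
  omega

end Hahn

end LagAux

open PowerSeries LagAux in
/-- Lagrange inversion: if `f` is a formal power series with `f(0) = 0` and
`f'(0) ≠ 0`, and `F` is its compositional inverse, then for all integers `a,b`,
`a·[z^{-a}] F(z)^b = −b·[z^{-b}] f(z)^a`, i.e.
`a·[z^0] z^a F(z)^b = −b·[z^0] z^b f(z)^a` as formal Laurent series. -/
theorem lagrange_inversion {K : Type*} [Field K] (f F : PowerSeries K)
    (hf0 : PowerSeries.constantCoeff f = 0)
    (hf1 : PowerSeries.coeff 1 f ≠ 0)
    (hF0 : PowerSeries.constantCoeff F = 0)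
    (hFf : psComp F f = PowerSeries.X)
    (hfF : psComp f F = PowerSeries.X) :
    ∀ a b : ℤ,
      a • ((HahnSeries.ofPowerSeries ℤ K F ^ b).coeff (-a)) =
        -(b • ((HahnSeries.ofPowerSeries ℤ K f ^ a).coeff (-b))) := by
  classical
  set u : PowerSeries K := PowerSeries.mk (fun n => coeff (n+1) f) with hudef
  set v : PowerSeries K := PowerSeries.mk (fun n => coeff (n+1) F) with hvdef
  have hfu : f = X * u := by
    ext m
    match m with
    | 0 => simp [coeff_zero_eq_constantCoeff, map_mul, hf0]
    | m+1 => rw [coeff_succ_X_mul, hudef, coeff_mk]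
  have hFv : F = X * v := by
    ext m
    match m with
    | 0 => simp [coeff_zero_eq_constantCoeff, map_mul, hF0]
    | m+1 => rw [coeff_succ_X_mul, hvdef, coeff_mk]
  have hu0 : constantCoeff u ≠ 0 := by
    have h : constantCoeff u = coeff 1 f := by
      rw [← coeff_zero_eq_constantCoeff, hudef, coeff_mk]
    rw [h]; exact hf1
  have hprod1 : coeff 1 f * coeff 1 F = 1 := by
    have h := congrArg (coeff 1) hfF
    rw [coeff_psComp, Finset.sum_range_succ, Finset.sum_range_one] at h
    have h0f : coeff 0 f = 0 := by rw [coeff_zero_eq_constantCoeff]; exact hf0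
    simpa [h0f, coeff_one_X] using h
  have hv0 : constantCoeff v ≠ 0 := by
    have h : constantCoeff v = coeff 1 F := by
      rw [← coeff_zero_eq_constantCoeff, hvdef, coeff_mk]
    rw [h]
    intro hz
    rw [hz, mul_zero] at hprod1
    exact one_ne_zero hprod1.symm
  have huu1 : u * u⁻¹ = 1 := PowerSeries.mul_inv_cancel u hu0
  have hvv1 : v * v⁻¹ = 1 := PowerSeries.mul_inv_cancel v hv0
  set uu : (PowerSeries K)ˣ := Units.mkOfMulEqOne u u⁻¹ huu1 with huudef
  set vv : (PowerSeries K)ˣ := Units.mkOfMulEqOne v v⁻¹ hvv1 with hvvdef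
  have huval : ((uu : (PowerSeries K)ˣ) : PowerSeries K) = u := rfl
  have hvval : ((vv : (PowerSeries K)ˣ) : PowerSeries K) = v := rfl
  have hXne : (X : PowerSeries K) ≠ 0 := X_ne_zero
  have h1 : (X : PowerSeries K) = f * psComp v f := by
    rw [← hFf]
    rw [hFv, psComp_mul hf0, psComp_X hf0]
  have hcv : u * psComp v f = 1 := by
    apply mul_left_cancel₀ hXne
    rw [mul_one, ← mul_assoc, ← hfu]
    exact h1.symm
  have hvinv : psComp ((vv : (PowerSeries K)ˣ) : PowerSeries K)
      (X * ((uu : (PowerSeries K)ˣ) : PowerSeries K))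
      = ((uu⁻¹ : (PowerSeries K)ˣ) : PowerSeries K) := by
    rw [huval, hvval, ← hfu]
    have hval2 : ((uu⁻¹ : (PowerSeries K)ˣ) : PowerSeries K) = u⁻¹ := rfl
    rw [hval2]
    have hune : u ≠ 0 := fun h => hu0 (by rw [h]; simp)
    exact mul_left_cancel₀ hune (by rw [hcv, huu1])
  have hofF : ∀ c : ℤ, (HahnSeries.ofPowerSeries ℤ K F) ^ c
      = HahnSeries.single c 1
          * HahnSeries.ofPowerSeries ℤ K ((vv ^ c : (PowerSeries K)ˣ) : PowerSeries K) := by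
    intro c
    rw [hFv, map_mul, HahnSeries.ofPowerSeries_X, ← hvval, mul_zpow, single_one_zpow,
      ofPS_unit_zpow]
  have hoff : ∀ c : ℤ, (HahnSeries.ofPowerSeries ℤ K f) ^ c
      = HahnSeries.single c 1
          * HahnSeries.ofPowerSeries ℤ K ((uu ^ c : (PowerSeries K)ˣ) : PowerSeries K) := by
    intro c
    rw [hfu, map_mul, HahnSeries.ofPowerSeries_X, ← huval, mul_zpow, single_one_zpow,
      ofPS_unit_zpow]
  intro a b
  rw [hofF b, hoff a]
  by_cases hcase : 0 ≤ -a - b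
  · set n : ℕ := (-a - b).toNat with hndef
    have hn : (n : ℤ) = -a - b := Int.toNat_of_nonneg hcase
    have e1 : (-a) = (n : ℤ) + b := by omega
    have e2 : (-b) = (n : ℤ) + a := by omega
    rw [e1, e2, coeff_single_mul_ofPS_nat, coeff_single_mul_ofPS_nat]
    have hb' : b = -a - (n : ℤ) := by omega
    rw [core uu vv n a b hb' hvinv]
    set c1 : K := coeff n ((uu ^ a : (PowerSeries K)ˣ) : PowerSeries K) with hc1
    set t : K := coeff n ((X : PowerSeries K)
        * (((uu ^ (a-1) : (PowerSeries K)ˣ) : PowerSeries K)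
            * derivative K ((uu : (PowerSeries K)ˣ) : PowerSeries K))) with ht
    have hsplit : coeff n (((uu ^ (a-1) : (PowerSeries K)ˣ) : PowerSeries K)
        * (((uu : (PowerSeries K)ˣ) : PowerSeries K)
            + X * derivative K ((uu : (PowerSeries K)ˣ) : PowerSeries K))) = c1 + t := by
      have hmulu : ((uu ^ (a-1) : (PowerSeries K)ˣ) : PowerSeries K)
          * ((uu : (PowerSeries K)ˣ) : PowerSeries K)
          = ((uu ^ a : (PowerSeries K)ˣ) : PowerSeries K) := by
        have h2 : ((uu : (PowerSeries K)ˣ) : PowerSeries K)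
            = ((uu ^ (1:ℤ) : (PowerSeries K)ˣ) : PowerSeries K) := by rw [zpow_one]
        rw [h2, val_zpow_mul, sub_add_cancel]
      have hprod : ((uu ^ (a-1) : (PowerSeries K)ˣ) : PowerSeries K)
          * (((uu : (PowerSeries K)ˣ) : PowerSeries K)
              + X * derivative K ((uu : (PowerSeries K)ˣ) : PowerSeries K))
          = ((uu ^ a : (PowerSeries K)ˣ) : PowerSeries K)
            + X * (((uu ^ (a-1) : (PowerSeries K)ˣ) : PowerSeries K)
                * derivative K ((uu : (PowerSeries K)ˣ) : PowerSeries K)) := by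
        rw [← hmulu]
        ring
      rw [hprod, map_add]
    have hat : (a : K) * t = (n : K) * c1 := by
      have h3 : coeff n ((X : PowerSeries K)
          * derivative K ((uu ^ a : (PowerSeries K)ˣ) : PowerSeries K)) = (n : K) * c1 :=
        coeff_X_mul_eq _ n
      rw [deriv_unit_zpow uu a, mul_smul_comm, map_zsmul, zsmul_eq_mul] at h3
      rw [← ht] at h3
      exact_mod_cast h3
    rw [hsplit, zsmul_eq_mul, zsmul_eq_mul]
    have hzero : (a : K) + (n : K) + (b : K) = 0 := by
      have hz : ((a + (n:ℤ) + b : ℤ) : K) = ((0 : ℤ) : K) := by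
        congr 1
        omega
      push_cast at hz
      exact hz
    linear_combination hat + hzero * c1
  · push_neg at hcase
    rw [coeff_single_mul_ofPS_neg _ _ _ (by omega), coeff_single_mul_ofPS_neg _ _ _ (by omega)]
    simp
end
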